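/- arXiv:1103.2717 — 8 statements merged into one kernel-verified Lean document; each statement's English description precedes it below -/
import Mathlib

section
/- Chio's determinant identity: Let R be an integral domain, let n ≥ 2, and let A = (a_{i,j}) be an n×n matrix over R. Define the Chio condensate of A with pivot a_{n,n} to be the (n−1)×(n−1) matrix C(A) whose (i,j) entry is the 2×2 determinant a_{i,j}·a_{n,n} − a_{i,n}·a_{n,j}, for 1 ≤ i,j ≤ n−1. Then det(C(A)) = a_{n,n}^{n−2} · det(A). -/
open Matrix Finset

/-- Key identity (valid over any commutative ring):
`a * det C(A) = a^(n+1) * det A` where `a` is the pivot. -/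
lemma chio_key (R : Type*) [CommRing R] (n : ℕ)
    (A : Matrix (Fin (n + 2)) (Fin (n + 2)) R) :
    A (Fin.last (n + 1)) (Fin.last (n + 1)) *
      (Matrix.of fun (i : Fin (n + 1)) (j : Fin (n + 1)) =>
        A i.castSucc j.castSucc * A (Fin.last (n + 1)) (Fin.last (n + 1)) -
          A i.castSucc (Fin.last (n + 1)) * A (Fin.last (n + 1)) j.castSucc).det =
      A (Fin.last (n + 1)) (Fin.last (n + 1)) ^ (n + 1) * A.det := by
  set a := A (Fin.last (n + 1)) (Fin.last (n + 1)) with ha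
  set L : Matrix (Fin (n + 2)) (Fin (n + 2)) R := fun i j =>
    if i = Fin.last (n + 1) then (if j = i then 1 else 0)
    else ((if j = i then a else 0) +
      (if j = Fin.last (n + 1) then -(A i (Fin.last (n + 1))) else 0)) with hL
  have hLdet : L.det = a ^ (n + 1) := by
    rw [Matrix.det_of_upperTriangular]
    · have hdiag : ∀ i : Fin (n + 2), L i i = if i = Fin.last (n + 1) then 1 else a := by
        intro i
        by_cases hi : i = Fin.last (n + 1) <;> simp [hL, hi]
      simp only [hdiag]
      rw [Fin.prod_univ_castSucc]
      have : ∀ x : Fin (n + 1),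
          (if (x.castSucc : Fin (n + 2)) = Fin.last (n + 1) then (1 : R) else a) = a := by
        intro x; rw [if_neg (Fin.castSucc_lt_last x).ne]
      simp [this]
    · intro i j hij
      simp only [hL]
      rcases eq_or_ne i (Fin.last (n + 1)) with hi | hi
      · have hj : j ≠ Fin.last (n + 1) := hi ▸ hij.ne
        simp [hi, hj]
      · have hj1 : j ≠ i := hij.ne
        have hj2 : j ≠ Fin.last (n + 1) := (hij.trans_le (Fin.le_last i)).ne
        simp [hi, hj1, hj2]
  set M := L * A with hM
  have hMlast : ∀ j, M (Fin.last (n + 1)) j = A (Fin.last (n + 1)) j := by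
    intro j
    rw [hM, Matrix.mul_apply]
    simp [hL]
  have hMrow : ∀ (i : Fin (n + 1)) (j : Fin (n + 2)),
      M i.castSucc j = a * A i.castSucc j -
        A i.castSucc (Fin.last (n + 1)) * A (Fin.last (n + 1)) j := by
    intro i j
    have hi : (i.castSucc : Fin (n + 2)) ≠ Fin.last (n + 1) := (Fin.castSucc_lt_last i).ne
    rw [hM, Matrix.mul_apply]
    simp only [hL, hi, if_false, add_mul, ite_mul, zero_mul, neg_mul]
    rw [Finset.sum_add_distrib, Finset.sum_ite_eq' Finset.univ, Finset.sum_ite_eq' Finset.univ]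
    simp [sub_eq_add_neg]
  have hMdet : M.det = a ^ (n + 1) * A.det := by
    rw [hM, Matrix.det_mul, hLdet]
  have hexp : M.det = a *
      (Matrix.of fun (i : Fin (n + 1)) (j : Fin (n + 1)) =>
        A i.castSucc j.castSucc * a -
          A i.castSucc (Fin.last (n + 1)) * A (Fin.last (n + 1)) j.castSucc).det := by
    rw [Matrix.det_succ_column M (Fin.last (n + 1))]
    rw [Finset.sum_eq_single (Fin.last (n + 1))]
    · rw [hMlast, ← ha]
      have hsub : (M.submatrix (Fin.last (n + 1)).succAbove (Fin.last (n + 1)).succAbove) =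
          Matrix.of fun (i : Fin (n + 1)) (j : Fin (n + 1)) =>
            A i.castSucc j.castSucc * a -
              A i.castSucc (Fin.last (n + 1)) * A (Fin.last (n + 1)) j.castSucc := by
        ext i j
        simp [Fin.succAbove_last, hMrow, mul_comm]
      rw [hsub]
      have hsign : (-1 : R) ^
          (((Fin.last (n + 1) : Fin (n + 2)) : ℕ) + ((Fin.last (n + 1) : Fin (n + 2)) : ℕ))
          = 1 := by
        rw [← two_mul, pow_mul]
        simp
      rw [hsign, one_mul]
    · intro i _ hi
      obtain ⟨i', rfl⟩ := Fin.exists_castSucc_eq.2 hi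
      rw [hMrow, ← ha, mul_comm a (A i'.castSucc (Fin.last (n + 1))), sub_self, mul_zero, zero_mul]
    · simp
  rw [← hMdet, hexp]

/-- **Chio's determinant identity.** For an integral domain `R`, `n ≥ 2` (encoded as `n + 2`),
and an `(n+2) × (n+2)` matrix `A` over `R`, the determinant of the Chio condensate of `A`
with pivot `A (last) (last)` equals `A (last) (last) ^ n * det A`
(the exponent `n` is `(n+2) - 2`). -/
theorem chio_determinant_identity (R : Type*) [CommRing R] [IsDomain R] (n : ℕ)
    (A : Matrix (Fin (n + 2)) (Fin (n + 2)) R) :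
    (Matrix.of fun (i : Fin (n + 1)) (j : Fin (n + 1)) =>
        A i.castSucc j.castSucc * A (Fin.last (n + 1)) (Fin.last (n + 1)) -
          A i.castSucc (Fin.last (n + 1)) * A (Fin.last (n + 1)) j.castSucc).det =
      A (Fin.last (n + 1)) (Fin.last (n + 1)) ^ n * A.det := by
  by_cases h : A (Fin.last (n + 1)) (Fin.last (n + 1)) = 0
  · rcases n with _ | m
    · -- 1×1 condensate
      have hl : (Fin.last 1 : Fin 2) = 1 := rfl
      simp only [pow_zero, one_mul]
      rw [Matrix.det_fin_one, Matrix.det_fin_two]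
      simp only [Matrix.of_apply]
      rw [hl] at h
      have h0 : ((0 : Fin 1).castSucc : Fin 2) = 0 := rfl
      rw [hl, h0, h]
    · -- size ≥ 2: condensate is rank one, determinant zero
      have h' : A (Fin.last (m + 2)) (Fin.last (m + 2)) = 0 := h
      have hC : (Matrix.of fun (i : Fin (m + 2)) (j : Fin (m + 2)) =>
          A i.castSucc j.castSucc * A (Fin.last (m + 2)) (Fin.last (m + 2)) -
            A i.castSucc (Fin.last (m + 2)) * A (Fin.last (m + 2)) j.castSucc) =
          (Matrix.of fun (i j : Fin (m + 2)) =>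
              if j = 0 then -(A i.castSucc (Fin.last (m + 2))) else 0) *
          (Matrix.of fun (i j : Fin (m + 2)) =>
              if i = 0 then A (Fin.last (m + 2)) j.castSucc else 0) := by
        ext i j
        simp only [Matrix.mul_apply, Matrix.of_apply, h', mul_zero, zero_sub]
        rw [Finset.sum_eq_single (0 : Fin (m + 2))]
        · simp [neg_mul]
        · intro b _ hb; simp [hb]
        · simp
      rw [hC, Matrix.det_mul]
      have hz : (Matrix.of fun (i j : Fin (m + 2)) =>
          if i = 0 then A (Fin.last (m + 2)) j.castSucc else 0).det = 0 := by
        apply Matrix.det_eq_zero_of_row_eq_zero 1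
        intro j
        simp
      rw [hz, mul_zero, h']
      simp
  · have key := chio_key R n A
    have hpow : A (Fin.last (n + 1)) (Fin.last (n + 1)) ^ (n + 1) =
        A (Fin.last (n + 1)) (Fin.last (n + 1)) *
          A (Fin.last (n + 1)) (Fin.last (n + 1)) ^ n := by ring
    rw [hpow, mul_assoc] at key
    exact mul_left_cancel₀ h key
end

section
/- The parametrized covering lemma: Let s,t ≥ 2, let ∅ ⊆ I ⊆ J ⊆ {1,…,s−1}×{1,…,t−1}, let B : I → {−1,0,+1}, and set h(I,J) := |J̆| − |I| − |p1(I)| − |p2(I)|, where J̆ is the Chio extension of J. Then h(I,J) ≥ 1, and there exists a map Φ from the set {A : J̆ → {−1,+1} : A condenses to B} onto Col(X_B, σ_B) all of whose fibres have cardinality exactly 2^{h(I,J)}; in particular |{A : J̆ → {−1,+1} : A condenses to B}| = 2^{h(I,J)} · |Col(X_B, σ_B)|. -/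
/-- The grid of index positions `{1,…,s-1} × {1,…,t-1}`. -/
def mgrid (s t : ℕ) : Finset (ℕ × ℕ) := Finset.Icc 1 (s - 1) ×ˢ Finset.Icc 1 (t - 1)

/-- The Chio extension `J̆` of a set `J` of positions:
`J̆ = {(s,t)} ∪ {(i,t) : i ∈ p1(J)} ∪ {(s,j) : j ∈ p2(J)} ∪ J`. -/
def chioExt (s t : ℕ) (J : Finset (ℕ × ℕ)) : Finset (ℕ × ℕ) :=
  insert (s, t) (((J.image Prod.fst).image fun i => (i, t)) ∪
    ((J.image Prod.snd).image fun j => (s, j)) ∪ J)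

/-- `A` condenses to `B` on `I`:
`A(i,j)·A(s,t) − A(i,t)·A(s,j) = 2·B(i,j)` for every `(i,j) ∈ I`. -/
def CondensesTo (s t : ℕ) (I : Finset (ℕ × ℕ)) (A B : ℕ × ℕ → ℤ) : Prop :=
  ∀ p ∈ I, A p * A (s, t) - A (p.1, t) * A (s, p.2) = 2 * B p

/-- `A` encodes a function `E → {−1,+1}`: it takes values `±1` on `E` and is
normalized to `1` off `E`. -/
def IsSignOn (E : Finset (ℕ × ℕ)) (A : ℕ × ℕ → ℤ) : Prop :=
  (∀ p ∈ E, A p = 1 ∨ A p = -1) ∧ ∀ p ∉ E, A p = 1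

/-- First projection `p1(I)` of a set of positions. -/
def proj1 (I : Finset (ℕ × ℕ)) : Finset ℕ := I.image Prod.fst

/-- Second projection `p2(I)` of a set of positions. -/
def proj2 (I : Finset (ℕ × ℕ)) : Finset ℕ := I.image Prod.snd

/-- The vertex set of the bipartite graph `X_B`: a copy `Sum.inl i` of each row index
`i ∈ p1(I)` and a copy `Sum.inr j` of each column index `j ∈ p2(I)`. -/
def vertSet (I : Finset (ℕ × ℕ)) : Finset (ℕ ⊕ ℕ) :=
  (proj1 I).image Sum.inl ∪ (proj2 I).image Sum.inr

/-- `f0(X_B) = |p1(I)| + |p2(I)|`, the number of vertices of `X_B`. -/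
def fZero (I : Finset (ℕ × ℕ)) : ℕ := (proj1 I).card + (proj2 I).card

/-- `c` is a `(σ_B,−)`-constant, `(σ_B,+)`-proper vertex `2`-colouring of `X_B`, encoded as a
`±1`-valued function on the vertex set (normalized to `1` off the vertex set): endpoints of
`(−)`-edges get equal colours, endpoints of `(+)`-edges get different colours. -/
def IsGoodCol (I : Finset (ℕ × ℕ)) (B : ℕ × ℕ → ℤ) (c : ℕ ⊕ ℕ → ℤ) : Prop :=
  (∀ v ∈ vertSet I, c v = 1 ∨ c v = -1) ∧ (∀ v ∉ vertSet I, c v = 1) ∧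
    ∀ p ∈ I, (B p = -1 → c (Sum.inl p.1) = c (Sum.inr p.2)) ∧
      (B p = 1 → c (Sum.inl p.1) ≠ c (Sum.inr p.2))

-- auxiliary

lemma mem_proj1 {I : Finset (ℕ × ℕ)} {i : ℕ} : i ∈ proj1 I ↔ ∃ p ∈ I, p.1 = i := by
  simp [proj1]

lemma mem_proj2 {I : Finset (ℕ × ℕ)} {j : ℕ} : j ∈ proj2 I ↔ ∃ p ∈ I, p.2 = j := by
  simp [proj2]

lemma grid_bounds {s t : ℕ} {J : Finset (ℕ × ℕ)} (hJ : J ⊆ mgrid s t) {p : ℕ × ℕ}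
    (hp : p ∈ J) : 1 ≤ p.1 ∧ p.1 + 1 ≤ s ∧ 1 ≤ p.2 ∧ p.2 + 1 ≤ t := by
  have := hJ hp
  simp only [mgrid, Finset.mem_product, Finset.mem_Icc] at this
  omega

lemma proj1_bounds {s t : ℕ} {J : Finset (ℕ × ℕ)} (hJ : J ⊆ mgrid s t) {i : ℕ}
    (hi : i ∈ proj1 J) : 1 ≤ i ∧ i + 1 ≤ s := by
  obtain ⟨p, hp, rfl⟩ := mem_proj1.mp hi
  exact ⟨(grid_bounds hJ hp).1, (grid_bounds hJ hp).2.1⟩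

lemma proj2_bounds {s t : ℕ} {J : Finset (ℕ × ℕ)} (hJ : J ⊆ mgrid s t) {j : ℕ}
    (hj : j ∈ proj2 J) : 1 ≤ j ∧ j + 1 ≤ t := by
  obtain ⟨p, hp, rfl⟩ := mem_proj2.mp hj
  exact ⟨(grid_bounds hJ hp).2.2.1, (grid_bounds hJ hp).2.2.2⟩

lemma mem_chioExt {s t : ℕ} {J : Finset (ℕ × ℕ)} {p : ℕ × ℕ} :
    p ∈ chioExt s t J ↔
      p = (s, t) ∨ (p.2 = t ∧ p.1 ∈ proj1 J) ∨ (p.1 = s ∧ p.2 ∈ proj2 J) ∨ p ∈ J := by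
  simp only [chioExt, Finset.mem_insert, Finset.mem_union, Finset.mem_image, proj1, proj2]
  constructor
  · rintro (h | ((⟨i, hi, rfl⟩ | ⟨j, hj, rfl⟩) | h))
    · exact Or.inl h
    · exact Or.inr (Or.inl ⟨rfl, hi⟩)
    · exact Or.inr (Or.inr (Or.inl ⟨rfl, hj⟩))
    · exact Or.inr (Or.inr (Or.inr h))
  · rintro (h | ⟨h2, h1⟩ | ⟨h1, h2⟩ | h)
    · exact Or.inl h
    · exact Or.inr (Or.inl (Or.inl ⟨p.1, h1, by simp [Prod.ext_iff, h2.symm]⟩))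
    · exact Or.inr (Or.inl (Or.inr ⟨p.2, h2, by simp [Prod.ext_iff, h1.symm]⟩))
    · exact Or.inr (Or.inr h)

def freeSet (s t : ℕ) (I J : Finset (ℕ × ℕ)) : Finset (ℕ × ℕ) :=
  insert (s, t) ((((proj1 J) \ (proj1 I)).image (fun i => (i, t))) ∪
    (((proj2 J) \ (proj2 I)).image (fun j => (s, j))) ∪ (J \ I))

lemma card_chioExt {s t : ℕ} {J : Finset (ℕ × ℕ)} (hJ : J ⊆ mgrid s t) :
    (chioExt s t J).card = 1 + (proj1 J).card + (proj2 J).card + J.card := by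
  have hinj1 : Function.Injective (fun i : ℕ => (i, t)) := fun a b h => by
    simpa [Prod.ext_iff] using h
  have hinj2 : Function.Injective (fun j : ℕ => (s, j)) := fun a b h => by
    simpa [Prod.ext_iff] using h
  have hd1 : Disjoint ((proj1 J).image (fun i => (i, t))) ((proj2 J).image (fun j => (s, j))) := by
    rw [Finset.disjoint_left]
    rintro p hp hq
    simp only [Finset.mem_image] at hp hq
    obtain ⟨i, hi, rfl⟩ := hp
    obtain ⟨j, hj, h⟩ := hq
    have := (proj1_bounds hJ hi).2
    simp [Prod.ext_iff] at h
    omega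
  have hd2 : Disjoint (((proj1 J).image (fun i => (i, t))) ∪ ((proj2 J).image (fun j => (s, j)))) J := by
    rw [Finset.disjoint_left]
    rintro p hp hq
    have hb := grid_bounds hJ hq
    simp only [Finset.mem_union, Finset.mem_image] at hp
    rcases hp with ⟨i, hi, h⟩ | ⟨j, hj, h⟩ <;> simp [Prod.ext_iff] at h <;> omega
  have hst : (s, t) ∉ (((J.image Prod.fst).image fun i => (i, t)) ∪
      ((J.image Prod.snd).image fun j => (s, j)) ∪ J) := by
    intro h
    simp only [Finset.mem_union, Finset.mem_image] at h
    rcases h with (⟨i, ⟨q, hq, rfl⟩, h⟩ | ⟨j, ⟨q, hq, rfl⟩, h⟩) | h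
    · have := grid_bounds hJ hq; simp [Prod.ext_iff] at h; omega
    · have := grid_bounds hJ hq; simp [Prod.ext_iff] at h; omega
    · have := grid_bounds hJ h; omega
  rw [chioExt, Finset.card_insert_of_notMem hst,
    show J.image Prod.fst = proj1 J from rfl, show J.image Prod.snd = proj2 J from rfl,
    Finset.card_union_of_disjoint hd2,
    Finset.card_union_of_disjoint hd1, Finset.card_image_of_injective _ hinj1,
    Finset.card_image_of_injective _ hinj2]
  ring

lemma card_freeSet {s t : ℕ} {I J : Finset (ℕ × ℕ)} (hIJ : I ⊆ J) (hJ : J ⊆ mgrid s t) :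
    (freeSet s t I J).card =
      1 + ((proj1 J).card - (proj1 I).card) + ((proj2 J).card - (proj2 I).card)
        + (J.card - I.card) := by
  have hinj1 : Function.Injective (fun i : ℕ => (i, t)) := fun a b h => by
    simpa [Prod.ext_iff] using h
  have hinj2 : Function.Injective (fun j : ℕ => (s, j)) := fun a b h => by
    simpa [Prod.ext_iff] using h
  have hd1 : Disjoint (((proj1 J) \ (proj1 I)).image (fun i => (i, t)))
      (((proj2 J) \ (proj2 I)).image (fun j => (s, j))) := by
    rw [Finset.disjoint_left]
    rintro p hp hq
    simp only [Finset.mem_image, Finset.mem_sdiff] at hp hq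
    obtain ⟨i, ⟨hi, _⟩, rfl⟩ := hp
    obtain ⟨j, ⟨hj, _⟩, h⟩ := hq
    have := (proj1_bounds hJ hi).2
    simp [Prod.ext_iff] at h
    omega
  have hd2 : Disjoint ((((proj1 J) \ (proj1 I)).image (fun i => (i, t))) ∪
      (((proj2 J) \ (proj2 I)).image (fun j => (s, j)))) (J \ I) := by
    rw [Finset.disjoint_left]
    rintro p hp hq
    rw [Finset.mem_sdiff] at hq
    have hb := grid_bounds hJ hq.1
    simp only [Finset.mem_union, Finset.mem_image, Finset.mem_sdiff] at hp
    rcases hp with ⟨i, hi, h⟩ | ⟨j, hj, h⟩ <;> simp [Prod.ext_iff] at h <;> omega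
  have hst : (s, t) ∉ ((((proj1 J) \ (proj1 I)).image (fun i => (i, t))) ∪
      (((proj2 J) \ (proj2 I)).image (fun j => (s, j))) ∪ (J \ I)) := by
    intro h
    simp only [Finset.mem_union, Finset.mem_image, Finset.mem_sdiff] at h
    rcases h with (⟨i, ⟨hi, _⟩, h⟩ | ⟨j, ⟨hj, _⟩, h⟩) | ⟨h, _⟩
    · have := (proj1_bounds hJ hi).2; simp [Prod.ext_iff] at h; omega
    · have := (proj2_bounds hJ hj).2; simp [Prod.ext_iff] at h; omega
    · have := grid_bounds hJ h; omega
  have hp1 : proj1 I ⊆ proj1 J := Finset.image_subset_image hIJ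
  have hp2 : proj2 I ⊆ proj2 J := Finset.image_subset_image hIJ
  rw [freeSet, Finset.card_insert_of_notMem hst, Finset.card_union_of_disjoint hd2,
    Finset.card_union_of_disjoint hd1, Finset.card_image_of_injective _ hinj1,
    Finset.card_image_of_injective _ hinj2, Finset.card_sdiff_of_subset hp1, Finset.card_sdiff_of_subset hp2,
    Finset.card_sdiff_of_subset hIJ]
  ring

lemma mem_freeSet {s t : ℕ} {I J : Finset (ℕ × ℕ)} {p : ℕ × ℕ} :
    p ∈ freeSet s t I J ↔ p = (s, t) ∨ (p.2 = t ∧ p.1 ∈ proj1 J ∧ p.1 ∉ proj1 I) ∨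
      (p.1 = s ∧ p.2 ∈ proj2 J ∧ p.2 ∉ proj2 I) ∨ (p ∈ J ∧ p ∉ I) := by
  simp only [freeSet, Finset.mem_insert, Finset.mem_union, Finset.mem_image, Finset.mem_sdiff]
  constructor
  · rintro (h | ((⟨i, hi, rfl⟩ | ⟨j, hj, rfl⟩) | h))
    · exact Or.inl h
    · exact Or.inr (Or.inl ⟨rfl, hi.1, hi.2⟩)
    · exact Or.inr (Or.inr (Or.inl ⟨rfl, hj.1, hj.2⟩))
    · exact Or.inr (Or.inr (Or.inr h))
  · rintro (h | ⟨h2, h1⟩ | ⟨h1, h2⟩ | h)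
    · exact Or.inl h
    · exact Or.inr (Or.inl (Or.inl ⟨p.1, ⟨h1.1, h1.2⟩, by simp [Prod.ext_iff, h2.symm]⟩))
    · exact Or.inr (Or.inl (Or.inr ⟨p.2, ⟨h2.1, h2.2⟩, by simp [Prod.ext_iff, h1.symm]⟩))
    · exact Or.inr (Or.inr h)

lemma freeSet_subset_chioExt {s t : ℕ} {I J : Finset (ℕ × ℕ)} :
    freeSet s t I J ⊆ chioExt s t J := by
  intro p hp
  rw [mem_freeSet] at hp
  rw [mem_chioExt]
  rcases hp with h | ⟨h1, h2, _⟩ | ⟨h1, h2, _⟩ | ⟨h, _⟩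
  · exact Or.inl h
  · exact Or.inr (Or.inl ⟨h1, h2⟩)
  · exact Or.inr (Or.inr (Or.inl ⟨h1, h2⟩))
  · exact Or.inr (Or.inr (Or.inr h))

lemma mem_vertSet_inl {I : Finset (ℕ × ℕ)} {i : ℕ} :
    Sum.inl i ∈ vertSet I ↔ i ∈ proj1 I := by simp [vertSet]

lemma mem_vertSet_inr {I : Finset (ℕ × ℕ)} {j : ℕ} :
    Sum.inr j ∈ vertSet I ↔ j ∈ proj2 I := by simp [vertSet]

lemma key1 {a x y z b : ℤ} (ha : a = 1 ∨ a = -1) (hx : x = 1 ∨ x = -1)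
    (hy : y = 1 ∨ y = -1) (hz : z = 1 ∨ z = -1) (h : a * x - y * z = 2 * b) :
    (b = -1 → y = z) ∧ (b = 1 → y ≠ z) := by
  rcases ha with rfl | rfl <;> rcases hx with rfl | rfl <;> rcases hy with rfl | rfl <;>
    rcases hz with rfl | rfl <;> norm_num at h ⊢ <;> omega

lemma key2 {e u v b : ℤ} (he : e = 1 ∨ e = -1) (hu : u = 1 ∨ u = -1) (hv : v = 1 ∨ v = -1)
    (hb : b = -1 ∨ b = 0 ∨ b = 1) (hminus : b = -1 → u = v) (hplus : b = 1 → u ≠ v) :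
    (e * (2 * b + u * v) = 1 ∨ e * (2 * b + u * v) = -1) ∧
      e * (2 * b + u * v) * e - u * v = 2 * b := by
  rcases he with rfl | rfl <;> rcases hu with rfl | rfl <;> rcases hv with rfl | rfl <;>
    rcases hb with rfl | rfl | rfl <;> (try norm_num at hminus) <;> (try norm_num at hplus) <;> norm_num

def buildC (s t : ℕ) (I : Finset (ℕ × ℕ)) (A : ℕ × ℕ → ℤ) : ℕ ⊕ ℕ → ℤ
  | Sum.inl i => if i ∈ proj1 I then A (i, t) else 1
  | Sum.inr j => if j ∈ proj2 I then A (s, j) else 1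

def buildE (F : Finset (ℕ × ℕ)) (A : ℕ × ℕ → ℤ) : ℕ × ℕ → ℤ :=
  fun p => if p ∈ F then A p else 1

def buildA (s t : ℕ) (I J : Finset (ℕ × ℕ)) (B : ℕ × ℕ → ℤ) (c : ℕ ⊕ ℕ → ℤ)
    (ε : ℕ × ℕ → ℤ) : ℕ × ℕ → ℤ := fun p =>
  if p = (s, t) then ε (s, t)
  else if p.2 = t ∧ p.1 ∈ proj1 J then
    (if p.1 ∈ proj1 I then c (Sum.inl p.1) else ε p)
  else if p.1 = s ∧ p.2 ∈ proj2 J then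
    (if p.2 ∈ proj2 I then c (Sum.inr p.2) else ε p)
  else if p ∈ I then ε (s, t) * (2 * B p + c (Sum.inl p.1) * c (Sum.inr p.2))
  else if p ∈ J then ε p
  else 1

section
variable {s t : ℕ} {I J : Finset (ℕ × ℕ)} {B : ℕ × ℕ → ℤ} {c : ℕ ⊕ ℕ → ℤ} {ε : ℕ × ℕ → ℤ}

lemma buildA_st : buildA s t I J B c ε (s, t) = ε (s, t) := by simp [buildA]

lemma buildA_row {i : ℕ} (hi : i ∈ proj1 J) (hne : i ≠ s) :
    buildA s t I J B c ε (i, t) = if i ∈ proj1 I then c (Sum.inl i) else ε (i, t) := by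
  simp [buildA, Prod.ext_iff, hne, hi]

lemma buildA_col {j : ℕ} (hj : j ∈ proj2 J) (hne : j ≠ t) :
    buildA s t I J B c ε (s, j) = if j ∈ proj2 I then c (Sum.inr j) else ε (s, j) := by
  simp [buildA, Prod.ext_iff, hne, hj]

lemma buildA_inner {p : ℕ × ℕ} (hp : p ∈ I) (h1 : p.1 ≠ s) (h2 : p.2 ≠ t) :
    buildA s t I J B c ε p = ε (s, t) * (2 * B p + c (Sum.inl p.1) * c (Sum.inr p.2)) := by
  simp [buildA, Prod.ext_iff, h1, h2, hp]

lemma buildA_outer {p : ℕ × ℕ} (hp : p ∈ J) (hpI : p ∉ I) (h1 : p.1 ≠ s) (h2 : p.2 ≠ t) :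
    buildA s t I J B c ε p = ε p := by
  simp [buildA, Prod.ext_iff, h1, h2, hp, hpI]

lemma buildA_off {p : ℕ × ℕ} (h0 : p ≠ (s, t)) (h1 : ¬(p.2 = t ∧ p.1 ∈ proj1 J))
    (h2 : ¬(p.1 = s ∧ p.2 ∈ proj2 J)) (h3 : p ∉ I) (h4 : p ∉ J) :
    buildA s t I J B c ε p = 1 := by
  simp [buildA, h0, h1, h2, h3, h4]

lemma mem_facts (hIJ : I ⊆ J) (hJ : J ⊆ mgrid s t) {p : ℕ × ℕ} (hp : p ∈ I) :
    p.1 ∈ proj1 I ∧ p.2 ∈ proj2 I ∧ p.1 ∈ proj1 J ∧ p.2 ∈ proj2 J ∧ p.1 ≠ s ∧ p.2 ≠ t := by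
  have hb := grid_bounds hJ (hIJ hp)
  exact ⟨mem_proj1.mpr ⟨p, hp, rfl⟩, mem_proj2.mpr ⟨p, hp, rfl⟩,
    mem_proj1.mpr ⟨p, hIJ hp, rfl⟩, mem_proj2.mpr ⟨p, hIJ hp, rfl⟩,
    by omega, by omega⟩

lemma row_mem_chio {i : ℕ} (hi : i ∈ proj1 J) : (i, t) ∈ chioExt s t J :=
  mem_chioExt.mpr (Or.inr (Or.inl ⟨rfl, hi⟩))

lemma col_mem_chio {j : ℕ} (hj : j ∈ proj2 J) : (s, j) ∈ chioExt s t J :=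
  mem_chioExt.mpr (Or.inr (Or.inr (Or.inl ⟨rfl, hj⟩)))

lemma st_mem_chio : (s, t) ∈ chioExt s t J := mem_chioExt.mpr (Or.inl rfl)

lemma st_mem_free : (s, t) ∈ freeSet s t I J := mem_freeSet.mpr (Or.inl rfl)

lemma self_mem_chio {p : ℕ × ℕ} (hp : p ∈ J) : p ∈ chioExt s t J :=
  mem_chioExt.mpr (Or.inr (Or.inr (Or.inr hp)))

end

section
variable {s t : ℕ} {I J : Finset (ℕ × ℕ)} {B : ℕ × ℕ → ℤ} {c : ℕ ⊕ ℕ → ℤ} {ε : ℕ × ℕ → ℤ}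
  {A : ℕ × ℕ → ℤ}

lemma fwd_good (hIJ : I ⊆ J) (hJ : J ⊆ mgrid s t)
    (hA : IsSignOn (chioExt s t J) A) (hcond : CondensesTo s t I A B) :
    IsGoodCol I B (buildC s t I A) := by
  refine ⟨?_, ?_, ?_⟩
  · rintro (i | j) hv
    · rw [mem_vertSet_inl] at hv
      simpa [buildC, hv] using hA.1 _ (row_mem_chio (Finset.image_subset_image hIJ hv))
    · rw [mem_vertSet_inr] at hv
      simpa [buildC, hv] using hA.1 _ (col_mem_chio (Finset.image_subset_image hIJ hv))
  · rintro (i | j) hv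
    · rw [mem_vertSet_inl] at hv
      simp [buildC, hv]
    · rw [mem_vertSet_inr] at hv
      simp [buildC, hv]
  · intro p hp
    obtain ⟨h1I, h2I, h1J, h2J, h1s, h2t⟩ := mem_facts hIJ hJ hp
    have e1 : buildC s t I A (Sum.inl p.1) = A (p.1, t) := by simp [buildC, h1I]
    have e2 : buildC s t I A (Sum.inr p.2) = A (s, p.2) := by simp [buildC, h2I]
    rw [e1, e2]
    exact key1 (hA.1 _ (self_mem_chio (hIJ hp))) (hA.1 _ st_mem_chio)
      (hA.1 _ (row_mem_chio h1J)) (hA.1 _ (col_mem_chio h2J)) (hcond p hp)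

lemma fwd_sign (hA : IsSignOn (chioExt s t J) A) :
    IsSignOn (freeSet s t I J) (buildE (freeSet s t I J) A) := by
  constructor
  · intro p hp
    simpa [buildE, hp] using hA.1 p (freeSet_subset_chioExt hp)
  · intro p hp
    simp [buildE, hp]

lemma fwd_back (hIJ : I ⊆ J) (hJ : J ⊆ mgrid s t)
    (hA : IsSignOn (chioExt s t J) A) (hcond : CondensesTo s t I A B) :
    buildA s t I J B (buildC s t I A) (buildE (freeSet s t I J) A) = A := by
  funext p
  by_cases h0 : p = (s, t)
  · subst h0
    simp [buildA_st, buildE, st_mem_free]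
  by_cases h1 : p.2 = t ∧ p.1 ∈ proj1 J
  · obtain ⟨h1t, h1J⟩ := h1
    have hne : p.1 ≠ s := by
      intro h; exact h0 (Prod.ext h h1t)
    have hpe : p = (p.1, t) := Prod.ext rfl h1t
    rw [hpe, buildA_row h1J hne]
    by_cases hI : p.1 ∈ proj1 I
    · simp [buildC, hI]
    · have : (p.1, t) ∈ freeSet s t I J :=
        mem_freeSet.mpr (Or.inr (Or.inl ⟨rfl, h1J, hI⟩))
      simp [buildE, this, hI]
  by_cases h2 : p.1 = s ∧ p.2 ∈ proj2 J
  · obtain ⟨h1s, h2J⟩ := h2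
    have hne : p.2 ≠ t := by
      intro h; exact h0 (Prod.ext h1s h)
    have hpe : p = (s, p.2) := Prod.ext h1s rfl
    rw [hpe, buildA_col h2J hne]
    by_cases hI : p.2 ∈ proj2 I
    · simp [buildC, hI]
    · have : (s, p.2) ∈ freeSet s t I J :=
        mem_freeSet.mpr (Or.inr (Or.inr (Or.inl ⟨rfl, h2J, hI⟩)))
      simp [buildE, this, hI]
  by_cases h3 : p ∈ I
  · obtain ⟨h1I, h2I, h1J, h2J, h1s, h2t⟩ := mem_facts hIJ hJ h3
    rw [buildA_inner h3 h1s h2t]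
    have e0 : buildE (freeSet s t I J) A (s, t) = A (s, t) := by
      simp [buildE, st_mem_free]
    have e1 : buildC s t I A (Sum.inl p.1) = A (p.1, t) := by simp [buildC, h1I]
    have e2 : buildC s t I A (Sum.inr p.2) = A (s, p.2) := by simp [buildC, h2I]
    rw [e0, e1, e2]
    have hc := hcond p h3
    have h2B : 2 * B p + A (p.1, t) * A (s, p.2) = A p * A (s, t) := by linarith
    rw [h2B]
    rcases hA.1 _ (st_mem_chio (J := J)) with h | h <;> rw [h] <;> ring
  by_cases h4 : p ∈ J
  · have hb := grid_bounds hJ h4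
    have h1s : p.1 ≠ s := by omega
    have h2t : p.2 ≠ t := by omega
    rw [buildA_outer h4 h3 h1s h2t]
    have : p ∈ freeSet s t I J := mem_freeSet.mpr (Or.inr (Or.inr (Or.inr ⟨h4, h3⟩)))
    simp [buildE, this]
  · rw [buildA_off h0 h1 h2 h3 h4]
    refine (hA.2 p ?_).symm
    rw [mem_chioExt]
    push_neg
    exact ⟨h0, fun h hj => h1 ⟨h, hj⟩, fun h hj => h2 ⟨h, hj⟩, h4⟩

lemma back_sign (hIJ : I ⊆ J) (hJ : J ⊆ mgrid s t)
    (hB : ∀ p ∈ I, B p = -1 ∨ B p = 0 ∨ B p = 1)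
    (hc : IsGoodCol I B c) (hε : IsSignOn (freeSet s t I J) ε) :
    IsSignOn (chioExt s t J) (buildA s t I J B c ε) := by
  constructor
  · intro p hp
    rcases mem_chioExt.mp hp with h0 | ⟨h2t, h1J⟩ | ⟨h1s, h2J⟩ | h4
    · subst h0
      rw [buildA_st]
      exact hε.1 _ st_mem_free
    · have hne : p.1 ≠ s := by have := proj1_bounds hJ h1J; omega
      have hpe : p = (p.1, t) := Prod.ext rfl h2t
      rw [hpe, buildA_row h1J hne]
      by_cases hI : p.1 ∈ proj1 I
      · rw [if_pos hI]
        exact hc.1 _ (mem_vertSet_inl.mpr hI)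
      · rw [if_neg hI]
        exact hε.1 _ (mem_freeSet.mpr (Or.inr (Or.inl ⟨rfl, h1J, hI⟩)))
    · have hne : p.2 ≠ t := by have := proj2_bounds hJ h2J; omega
      have hpe : p = (s, p.2) := Prod.ext h1s rfl
      rw [hpe, buildA_col h2J hne]
      by_cases hI : p.2 ∈ proj2 I
      · rw [if_pos hI]
        exact hc.1 _ (mem_vertSet_inr.mpr hI)
      · rw [if_neg hI]
        exact hε.1 _ (mem_freeSet.mpr (Or.inr (Or.inr (Or.inl ⟨rfl, h2J, hI⟩))))
    · by_cases hI : p ∈ I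
      · obtain ⟨h1I, h2I, h1J, h2J, h1s, h2t⟩ := mem_facts hIJ hJ hI
        rw [buildA_inner hI h1s h2t]
        exact (key2 (hε.1 _ st_mem_free) (hc.1 _ (mem_vertSet_inl.mpr h1I))
          (hc.1 _ (mem_vertSet_inr.mpr h2I)) (hB p hI) (hc.2.2 p hI).1 (hc.2.2 p hI).2).1
      · have hb := grid_bounds hJ h4
        have h1s : p.1 ≠ s := by omega
        have h2t : p.2 ≠ t := by omega
        rw [buildA_outer h4 hI h1s h2t]
        exact hε.1 _ (mem_freeSet.mpr (Or.inr (Or.inr (Or.inr ⟨h4, hI⟩))))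
  · intro p hp
    rw [mem_chioExt] at hp
    push_neg at hp
    obtain ⟨h0, h1, h2, h4⟩ := hp
    exact buildA_off h0 (fun ⟨a, b⟩ => h1 a b) (fun ⟨a, b⟩ => h2 a b)
      (fun h => h4 (hIJ h)) h4

lemma back_cond (hIJ : I ⊆ J) (hJ : J ⊆ mgrid s t)
    (hB : ∀ p ∈ I, B p = -1 ∨ B p = 0 ∨ B p = 1)
    (hc : IsGoodCol I B c) (hε : IsSignOn (freeSet s t I J) ε) :
    CondensesTo s t I (buildA s t I J B c ε) B := by
  intro p hp
  obtain ⟨h1I, h2I, h1J, h2J, h1s, h2t⟩ := mem_facts hIJ hJ hp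
  have e0 : buildA s t I J B c ε (s, t) = ε (s, t) := buildA_st
  have e1 : buildA s t I J B c ε (p.1, t) = c (Sum.inl p.1) := by
    rw [buildA_row h1J h1s, if_pos h1I]
  have e2 : buildA s t I J B c ε (s, p.2) = c (Sum.inr p.2) := by
    rw [buildA_col h2J h2t, if_pos h2I]
  rw [buildA_inner hp h1s h2t, e0, e1, e2]
  exact (key2 (hε.1 _ st_mem_free) (hc.1 _ (mem_vertSet_inl.mpr h1I))
    (hc.1 _ (mem_vertSet_inr.mpr h2I)) (hB p hp) (hc.2.2 p hp).1 (hc.2.2 p hp).2).2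

lemma back_c (hIJ : I ⊆ J) (hJ : J ⊆ mgrid s t) (hc : IsGoodCol I B c) :
    buildC s t I (buildA s t I J B c ε) = c := by
  funext v
  cases v with
  | inl i =>
    by_cases hI : i ∈ proj1 I
    · have hiJ : i ∈ proj1 J := Finset.image_subset_image hIJ hI
      have hne : i ≠ s := by have := proj1_bounds hJ hiJ; omega
      simp [buildC, hI, buildA_row hiJ hne]
    · have : c (Sum.inl i) = 1 := hc.2.1 _ (by rw [mem_vertSet_inl]; exact hI)
      simp [buildC, hI, this]
  | inr j =>
    by_cases hI : j ∈ proj2 I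
    · have hjJ : j ∈ proj2 J := Finset.image_subset_image hIJ hI
      have hne : j ≠ t := by have := proj2_bounds hJ hjJ; omega
      simp [buildC, hI, buildA_col hjJ hne]
    · have : c (Sum.inr j) = 1 := hc.2.1 _ (by rw [mem_vertSet_inr]; exact hI)
      simp [buildC, hI, this]

lemma back_e (hIJ : I ⊆ J) (hJ : J ⊆ mgrid s t) (hε : IsSignOn (freeSet s t I J) ε) :
    buildE (freeSet s t I J) (buildA s t I J B c ε) = ε := by
  funext p
  by_cases hF : p ∈ freeSet s t I J
  · rw [buildE, if_pos hF]
    rcases mem_freeSet.mp hF with h0 | ⟨h2t, h1J, h1I⟩ | ⟨h1s, h2J, h2I⟩ | ⟨h4, h3⟩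
    · subst h0; exact buildA_st
    · have hne : p.1 ≠ s := by have := proj1_bounds hJ h1J; omega
      have hpe : p = (p.1, t) := Prod.ext rfl h2t
      rw [hpe] at *
      rw [buildA_row h1J hne, if_neg h1I]
    · have hne : p.2 ≠ t := by have := proj2_bounds hJ h2J; omega
      have hpe : p = (s, p.2) := Prod.ext h1s rfl
      rw [hpe] at *
      rw [buildA_col h2J hne, if_neg h2I]
    · have hb := grid_bounds hJ h4
      exact buildA_outer h4 h3 (by omega) (by omega)
  · rw [buildE, if_neg hF, (hε.2 p hF).symm]

end

lemma card_signOn (F : Finset (ℕ × ℕ)) :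
    Nat.card {ε : ℕ × ℕ → ℤ // IsSignOn F ε} = 2 ^ F.card := by
  have e : {ε : ℕ × ℕ → ℤ // IsSignOn F ε} ≃ (↥F → Bool) :=
    { toFun := fun ε p => decide (ε.1 ↑p = 1)
      invFun := fun g =>
        ⟨fun p => if h : p ∈ F then (if g ⟨p, h⟩ then 1 else -1) else 1, by
          constructor
          · intro p hp
            by_cases hg : g ⟨p, hp⟩ <;> simp [hp, hg]
          · intro p hp
            simp [hp]⟩
      left_inv := fun ε => Subtype.ext (funext fun p => by
        by_cases h : p ∈ F
        · rcases ε.2.1 p h with h1 | h1 <;> simp [h, h1]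
        · simp [h, ε.2.2 p h])
      right_inv := fun g => funext fun p => by
        by_cases hg : g p <;> simp [hg] }
  rw [Nat.card_congr e, Nat.card_eq_fintype_card, Fintype.card_fun, Fintype.card_coe,
    Fintype.card_bool]


/-- **The parametrized covering lemma.** For `s,t ≥ 2`, `I ⊆ J ⊆ {1,…,s-1}×{1,…,t-1}` and
`B : I → {−1,0,+1}`, with `h(I,J) := |J̆| − |I| − |p1(I)| − |p2(I)|`: one has `h(I,J) ≥ 1`,
and there is a map `Φ` from `{A : J̆ → {±1} : A condenses to B}` onto `Col(X_B, σ_B)` all of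
whose fibres have cardinality exactly `2^{h(I,J)}`; in particular the number of such `A`
equals `2^{h(I,J)} · |Col(X_B, σ_B)|`. -/
theorem parametrized_cover (s t : ℕ) (hs : 2 ≤ s) (ht : 2 ≤ t)
    (I J : Finset (ℕ × ℕ)) (hIJ : I ⊆ J) (hJ : J ⊆ mgrid s t)
    (B : ℕ × ℕ → ℤ) (hB : ∀ p ∈ I, B p = -1 ∨ B p = 0 ∨ B p = 1) :
    ∃ h : ℕ, 1 ≤ h ∧
      (chioExt s t J).card = I.card + (proj1 I).card + (proj2 I).card + h ∧
      (∃ Φ : {A : ℕ × ℕ → ℤ // IsSignOn (chioExt s t J) A ∧ CondensesTo s t I A B} →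
          {c : ℕ ⊕ ℕ → ℤ // IsGoodCol I B c},
        Function.Surjective Φ ∧ ∀ c, (Φ ⁻¹' {c}).ncard = 2 ^ h) ∧
      Set.ncard {A : ℕ × ℕ → ℤ | IsSignOn (chioExt s t J) A ∧ CondensesTo s t I A B} =
        2 ^ h * Set.ncard {c : ℕ ⊕ ℕ → ℤ | IsGoodCol I B c} := by
  set F := freeSet s t I J with hF
  refine ⟨F.card, ?_, ?_, ?_⟩
  · exact Finset.card_pos.mpr ⟨(s, t), st_mem_free⟩
  · have h1 : (proj1 I).card ≤ (proj1 J).card :=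
      Finset.card_le_card (Finset.image_subset_image hIJ)
    have h2 : (proj2 I).card ≤ (proj2 J).card :=
      Finset.card_le_card (Finset.image_subset_image hIJ)
    have h3 : I.card ≤ J.card := Finset.card_le_card hIJ
    rw [card_chioExt hJ, card_freeSet hIJ hJ]
    omega
  -- the main equivalence
  have E : {A : ℕ × ℕ → ℤ // IsSignOn (chioExt s t J) A ∧ CondensesTo s t I A B} ≃
      {c : ℕ ⊕ ℕ → ℤ // IsGoodCol I B c} × {ε : ℕ × ℕ → ℤ // IsSignOn F ε} :=
    { toFun := fun A => (⟨buildC s t I A.1, fwd_good hIJ hJ A.2.1 A.2.2⟩,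
        ⟨buildE F A.1, fwd_sign A.2.1⟩)
      invFun := fun x => ⟨buildA s t I J B x.1.1 x.2.1,
        back_sign hIJ hJ hB x.1.2 x.2.2, back_cond hIJ hJ hB x.1.2 x.2.2⟩
      left_inv := fun A => Subtype.ext (fwd_back hIJ hJ A.2.1 A.2.2)
      right_inv := fun x => Prod.ext (Subtype.ext (back_c hIJ hJ x.1.2))
        (Subtype.ext (back_e hIJ hJ x.2.2)) }
  set Φ : {A : ℕ × ℕ → ℤ // IsSignOn (chioExt s t J) A ∧ CondensesTo s t I A B} →
      {c : ℕ ⊕ ℕ → ℤ // IsGoodCol I B c} := fun A => (E A).1 with hΦ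
  have ε₀ : {ε : ℕ × ℕ → ℤ // IsSignOn F ε} :=
    ⟨fun _ => 1, fun p _ => Or.inl rfl, fun p _ => rfl⟩
  constructor
  · refine ⟨Φ, ?_, ?_⟩
    · intro c
      exact ⟨E.symm (c, ε₀), by simp [hΦ]⟩
    · intro c₀
      have efib : ↥(Φ ⁻¹' {c₀}) ≃ {ε : ℕ × ℕ → ℤ // IsSignOn F ε} :=
        { toFun := fun x => (E x.1).2
          invFun := fun ε => ⟨E.symm (c₀, ε), by simp [hΦ]⟩
          left_inv := fun x => Subtype.ext (by
            have hx : (E x.1).1 = c₀ := x.2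
            have : (c₀, (E x.1).2) = E x.1 := Prod.ext hx.symm rfl
            simp only [this, Equiv.symm_apply_apply])
          right_inv := fun ε => by simp }
      rw [← Nat.card_coe_set_eq, Nat.card_congr efib, card_signOn]
  · have h1 : Set.ncard {A : ℕ × ℕ → ℤ | IsSignOn (chioExt s t J) A ∧ CondensesTo s t I A B}
        = Nat.card {A : ℕ × ℕ → ℤ // IsSignOn (chioExt s t J) A ∧ CondensesTo s t I A B} := by
      rw [← Nat.card_coe_set_eq]
      rfl
    have h2 : Set.ncard {c : ℕ ⊕ ℕ → ℤ | IsGoodCol I B c}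
        = Nat.card {c : ℕ ⊕ ℕ → ℤ // IsGoodCol I B c} := by
      rw [← Nat.card_coe_set_eq]
      rfl
    rw [h1, h2, Nat.card_congr E, Nat.card_prod, card_signOn, mul_comm]
end

section
/- Graph-theoretical characterization of Chio realizability: Let s,t ≥ 2, let ∅ ⊆ I ⊆ J ⊆ {1,…,s−1}×{1,…,t−1}, and let B : I → {−1,0,+1}. The following four statements are equivalent: (1) the signed graph (X_B, σ_B) is balanced; (2) Col(X_B, σ_B) ≠ ∅; (3) there exists A : J̆ → {−1,+1} that condenses to B; (4) |{A : J̆ → {−1,+1} : A condenses to B}| = 2^{|J̆| − |I| − f0(X_B) + β0(X_B)}. -/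
/-- The underlying graph `X_B` of the signed bipartite graph associated with `B : I → {−1,0,+1}`:
`Sum.inl i` is adjacent to `Sum.inr j` iff `(i,j) ∈ I` and `B (i,j) ≠ 0`. -/
def sGraph (I : Finset (ℕ × ℕ)) (B : ℕ × ℕ → ℤ) : SimpleGraph (ℕ ⊕ ℕ) where
  Adj u v := (∃ p ∈ I, B p ≠ 0 ∧ u = Sum.inl p.1 ∧ v = Sum.inr p.2) ∨
             (∃ p ∈ I, B p ≠ 0 ∧ v = Sum.inl p.1 ∧ u = Sum.inr p.2)
  symm := ⟨fun u v h => Or.symm h⟩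
  loopless := by
    constructor
    rintro u (⟨p, -, -, h1, h2⟩ | ⟨p, -, -, h1, h2⟩) <;> subst h1 <;> simp at h2

/-- `β0(X_B)`: the number of connected components of `X_B`, i.e. the number of connected
components of the ambient graph meeting the vertex set of `X_B`. -/
noncomputable def betaZero (I : Finset (ℕ × ℕ)) (B : ℕ × ℕ → ℤ) : ℕ :=
  Set.ncard ((sGraph I B).connectedComponentMk '' (vertSet I : Set (ℕ ⊕ ℕ)))

/-- The sign `σ_B` of an edge of `X_B`, read off from `B`. -/
def eSign (B : ℕ × ℕ → ℤ) : ℕ ⊕ ℕ → ℕ ⊕ ℕ → ℤ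
  | Sum.inl i, Sum.inr j => B (i, j)
  | Sum.inr j, Sum.inl i => B (i, j)
  | Sum.inl _, Sum.inl _ => 0
  | Sum.inr _, Sum.inr _ => 0

/-- The signed graph `(X_B, σ_B)` is balanced: every cycle contains an even number
of edges of sign `−1`. -/
def IsBalancedSG (I : Finset (ℕ × ℕ)) (B : ℕ × ℕ → ℤ) : Prop :=
  ∀ (v : ℕ ⊕ ℕ) (w : (sGraph I B).Walk v v), w.IsCycle →
    Even ((w.darts.filter fun d => decide (eSign B d.toProd.1 d.toProd.2 = -1)).length)

namespace ChioAux
open SimpleGraph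

variable {I : Finset (ℕ × ℕ)} {B : ℕ × ℕ → ℤ}

lemma adj_iff {i j : ℕ} : (sGraph I B).Adj (Sum.inl i) (Sum.inr j) ↔ ((i,j) ∈ I ∧ B (i,j) ≠ 0) := by
  constructor
  · rintro (⟨p, hp, hb, h1, h2⟩ | ⟨p, hp, hb, h1, h2⟩)
    · cases h1; cases h2
      exact ⟨hp, hb⟩
    · simp at h1
  · rintro ⟨hp, hb⟩
    exact Or.inl ⟨(i,j), hp, hb, rfl, rfl⟩

lemma adj_cases {u v} (h : (sGraph I B).Adj u v) :
    ∃ i j, (i,j) ∈ I ∧ B (i,j) ≠ 0 ∧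
      ((u = Sum.inl i ∧ v = Sum.inr j) ∨ (u = Sum.inr j ∧ v = Sum.inl i)) := by
  rcases h with (⟨p, hp, hb, h1, h2⟩ | ⟨p, hp, hb, h1, h2⟩)
  · exact ⟨p.1, p.2, by simpa using hp, hb, Or.inl ⟨h1, h2⟩⟩
  · exact ⟨p.1, p.2, by simpa using hp, hb, Or.inr ⟨h2, h1⟩⟩

lemma eSign_symm (B : ℕ × ℕ → ℤ) (u v : ℕ ⊕ ℕ) : eSign B u v = eSign B v u := by
  cases u <;> cases v <;> rfl

lemma mem_vertSet_inl {i j : ℕ} (h : (i,j) ∈ I) : Sum.inl i ∈ vertSet I := by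
  simp only [vertSet, Finset.mem_union, Finset.mem_image]
  exact Or.inl ⟨i, by simp [proj1, Finset.mem_image]; exact ⟨j, h⟩, rfl⟩

lemma mem_vertSet_inr {i j : ℕ} (h : (i,j) ∈ I) : Sum.inr j ∈ vertSet I := by
  simp only [vertSet, Finset.mem_union, Finset.mem_image]
  exact Or.inr ⟨j, by simp [proj2, Finset.mem_image]; exact ⟨i, h⟩, rfl⟩

lemma adj_mem_vertSet {u v} (h : (sGraph I B).Adj u v) : u ∈ vertSet I := by
  obtain ⟨i, j, hij, -, (⟨h1, -⟩ | ⟨h1, -⟩)⟩ := adj_cases h <;> subst h1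
  · exact mem_vertSet_inl hij
  · exact mem_vertSet_inr hij

variable (hB : ∀ p ∈ I, B p = -1 ∨ B p = 0 ∨ B p = 1)

include hB in
lemma eSign_adj {u v} (h : (sGraph I B).Adj u v) :
    eSign B u v = 1 ∨ eSign B u v = -1 := by
  obtain ⟨i, j, hij, hb, (⟨h1, h2⟩ | ⟨h1, h2⟩)⟩ := adj_cases h <;> subst h1 <;> subst h2 <;>
    · have := hB _ hij
      simp only [eSign]
      tauto

def wprod {u v : ℕ ⊕ ℕ} (B : ℕ × ℕ → ℤ) (w : (sGraph I B).Walk u v) : ℤ :=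
  (w.darts.map fun d => eSign B d.toProd.1 d.toProd.2).prod

@[simp] lemma wprod_nil {u : ℕ ⊕ ℕ} : wprod B (Walk.nil : (sGraph I B).Walk u u) = 1 := rfl

@[simp] lemma wprod_cons {u v x : ℕ ⊕ ℕ} (h : (sGraph I B).Adj u v) (w : (sGraph I B).Walk v x) :
    wprod B (Walk.cons h w) = eSign B u v * wprod B w := by
  simp [wprod, Walk.darts_cons]

@[simp] lemma wprod_append {u v x : ℕ ⊕ ℕ} (w1 : (sGraph I B).Walk u v)
    (w2 : (sGraph I B).Walk v x) :
    wprod B (w1.append w2) = wprod B w1 * wprod B w2 := by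
  simp [wprod, Walk.darts_append]

include hB in
lemma wprod_pm {u v : ℕ ⊕ ℕ} (w : (sGraph I B).Walk u v) :
    wprod B w = 1 ∨ wprod B w = -1 := by
  induction w with
  | nil => simp
  | cons h w ih =>
    rw [wprod_cons]
    rcases eSign_adj hB h with h1 | h1 <;> rcases ih with h2 | h2 <;> rw [h1, h2] <;> norm_num

include hB in
lemma wprod_sq {u v : ℕ ⊕ ℕ} (w : (sGraph I B).Walk u v) :
    wprod B w * wprod B w = 1 := by
  rcases wprod_pm hB w with h | h <;> rw [h] <;> norm_num

include hB in
lemma wprod_eq_pow {u v : ℕ ⊕ ℕ} (w : (sGraph I B).Walk u v) :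
    wprod B w =
      (-1) ^ ((w.darts.filter fun d => decide (eSign B d.toProd.1 d.toProd.2 = -1)).length) := by
  induction w with
  | nil => simp
  | cons h w ih =>
    rw [wprod_cons, ih]
    rcases eSign_adj hB h with h1 | h1 <;>
      simp [Walk.darts_cons, List.filter_cons, h1, pow_succ] <;> ring

lemma wprod_reverse {u v : ℕ ⊕ ℕ} (w : (sGraph I B).Walk u v) :
    wprod B w.reverse = wprod B w := by
  simp only [wprod, Walk.darts_reverse, List.map_reverse, List.prod_reverse, List.map_map]
  congr 1
  ext d
  simp [Function.comp, Dart.symm, eSign_symm]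


lemma exists_split_of_duplicate {V : Type*} [DecidableEq V] {G : SimpleGraph V} {u v x : V}
    (q : G.Walk u v) (hdup : List.Duplicate x q.support) :
    ∃ (t1 : G.Walk u x) (d1 : G.Walk x v), q = t1.append d1 ∧ x ∈ d1.support.tail := by
  have hx : x ∈ q.support := hdup.mem
  refine ⟨q.takeUntil x hx, q.dropUntil x hx, (q.take_spec hx).symm, ?_⟩
  have hcount : 2 ≤ q.support.count x := List.duplicate_iff_two_le_count.mp hdup
  have hcount1 : (q.takeUntil x hx).support.count x = 1 :=
    q.count_support_takeUntil_eq_one hx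
  have hsupp : q.support = (q.takeUntil x hx).support ++ (q.dropUntil x hx).support.tail := by
    conv_lhs => rw [← q.take_spec hx]
    rw [SimpleGraph.Walk.support_append]
  rw [hsupp, List.count_append, hcount1] at hcount
  have : 0 < (q.dropUntil x hx).support.tail.count x := by omega
  exact List.count_pos_iff.mp this

include hB in
lemma wprod_cycle (hbal : IsBalancedSG I B) {v : ℕ ⊕ ℕ} (w : (sGraph I B).Walk v v)
    (hc : w.IsCycle) : wprod B w = 1 := by
  rw [wprod_eq_pow hB w]
  exact (hbal v w hc).neg_one_pow

include hB in
lemma wprod_closed (hbal : IsBalancedSG I B) :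
    ∀ (n : ℕ) (v : ℕ ⊕ ℕ) (w : (sGraph I B).Walk v v), w.length ≤ n → wprod B w = 1 := by
  intro n
  induction n using Nat.strong_induction_on with
  | _ n IH =>
    intro v w hlen
    cases w with
    | nil => simp
    | cons h q =>
      rename_i u
      by_cases hnd : q.support.Nodup
      · have hq : q.IsPath := (Walk.isPath_def q).mpr hnd
        by_cases he : s(v, u) ∈ q.edges
        · cases q with
          | nil => simp at he
          | cons h' q' =>
            rename_i u'
            rw [Walk.edges_cons, List.mem_cons] at he
            rcases he with heq | he'
            · have hvu' : v = u' := by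
                have hne : v ≠ u := (sGraph I B).ne_of_adj h
                rcases Sym2.eq_iff.mp heq with ⟨h1, h2⟩ | ⟨h1, h2⟩
                · exact absurd h1 hne
                · exact h1
              subst hvu'
              have hq'nil : q' = Walk.nil := by
                cases q' with
                | nil => rfl
                | cons h'' q'' =>
                  exfalso
                  have hpath : (Walk.cons h'' q'').IsPath := hq.of_cons
                  have := ((Walk.cons_isPath_iff h'' q'').mp hpath).2
                  exact this (Walk.end_mem_support q'')
              subst hq'nil
              rw [wprod_cons, wprod_cons, wprod_nil, mul_one, eSign_symm]
              rcases eSign_adj hB h' with h1 | h1 <;> rw [h1] <;> norm_num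
            · exfalso
              have : u ∈ q'.support := Walk.snd_mem_support_of_mem_edges q' he'
              exact ((Walk.cons_isPath_iff h' q').mp hq).2 this
        · have hc : (Walk.cons h q).IsCycle := (Walk.cons_isCycle_iff q h).mpr ⟨hq, he⟩
          exact wprod_cycle hB hbal _ hc
      · obtain ⟨x, hdup⟩ := List.exists_duplicate_iff_not_nodup.mpr hnd
        obtain ⟨t1, d1, rfl, hxd⟩ := exists_split_of_duplicate q hdup
        cases d1 with
        | nil => simp at hxd
        | cons h2 r =>
          rename_i y
          have hxr : x ∈ r.support := by simpa using hxd
          obtain ⟨r1, r2, hr⟩ : ∃ (r1 : (sGraph I B).Walk y x) (r2 : (sGraph I B).Walk x _),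
              r = r1.append r2 := ⟨_, _, (r.take_spec hxr).symm⟩
          subst hr
          simp only [Walk.length_cons, Walk.length_append] at hlen
          have hp1 : wprod B (Walk.cons h2 r1) = 1 := by
            apply IH (Walk.cons h2 r1).length _ x _ le_rfl
            simp only [Walk.length_cons]
            omega
          have hp2 : wprod B (r2.append (Walk.cons h t1)) = 1 := by
            apply IH (r2.append (Walk.cons h t1)).length _ x _ le_rfl
            simp only [Walk.length_append, Walk.length_cons]
            omega
          have hw : wprod B (Walk.cons h (t1.append (Walk.cons h2 (r1.append r2)))) =
              wprod B (Walk.cons h2 r1) * wprod B (r2.append (Walk.cons h t1)) := by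
            simp only [wprod_cons, wprod_append]
            ring
          rw [hw, hp1, hp2, mul_one]

include hB in
lemma wprod_walks_eq (hbal : IsBalancedSG I B) {u v : ℕ ⊕ ℕ}
    (w1 w2 : (sGraph I B).Walk u v) : wprod B w1 = wprod B w2 := by
  have h1 : wprod B (w1.append w2.reverse) = 1 :=
    wprod_closed hB hbal _ u _ le_rfl
  rw [wprod_append, wprod_reverse] at h1
  rcases wprod_pm hB w1 with h3 | h3 <;> rcases wprod_pm hB w2 with h4 | h4 <;>
    rw [h3, h4] <;> rw [h3, h4] at h1 <;> revert h1 <;> norm_num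


@[simp] lemma wprod_copy {u v u' v' : ℕ ⊕ ℕ} (w : (sGraph I B).Walk u v)
    (hu : u = u') (hv : v = v') : wprod B (w.copy hu hv) = wprod B w := by
  subst hu; subst hv; rfl

noncomputable def repv (I : Finset (ℕ × ℕ)) (B : ℕ × ℕ → ℤ) (u : ℕ ⊕ ℕ) : ℕ ⊕ ℕ :=
  ((sGraph I B).connectedComponentMk u).out

lemma reach (u : ℕ ⊕ ℕ) : (sGraph I B).Reachable (repv I B u) u :=
  SimpleGraph.ConnectedComponent.exact (((sGraph I B).connectedComponentMk u).out_eq)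

noncomputable def hfun (I : Finset (ℕ × ℕ)) (B : ℕ × ℕ → ℤ) (u : ℕ ⊕ ℕ) : ℤ :=
  wprod B (reach (I := I) (B := B) u).some

include hB in
lemma hfun_pm (u : ℕ ⊕ ℕ) : hfun I B u = 1 ∨ hfun I B u = -1 := wprod_pm hB _

include hB in
lemma hfun_adj (hbal : IsBalancedSG I B) {u v : ℕ ⊕ ℕ} (h : (sGraph I B).Adj u v) :
    eSign B u v = hfun I B u * hfun I B v := by
  have hmk : (sGraph I B).connectedComponentMk u = (sGraph I B).connectedComponentMk v :=
    SimpleGraph.ConnectedComponent.sound h.reachable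
  have e : repv I B u = repv I B v := by rw [repv, repv, hmk]
  set wu := (reach (I := I) (B := B) u).some with hwu
  set wv := (reach (I := I) (B := B) v).some with hwv
  have hW : wprod B wu =
      wprod B (((wv.copy e.symm rfl).append (Walk.cons h.symm Walk.nil))) :=
    wprod_walks_eq hB hbal _ _
  rw [wprod_append, wprod_copy, wprod_cons, wprod_nil, mul_one, eSign_symm B v u] at hW
  have hsq := wprod_sq hB wv
  rw [hfun, hfun, ← hwu, ← hwv, hW]
  ring_nf
  rcases wprod_pm hB wv with h1 | h1 <;> rw [h1] <;> ring

def sgnSum : ℕ ⊕ ℕ → ℤ := Sum.elim (fun _ => (1:ℤ)) (fun _ => (-1:ℤ))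

include hB in
lemma balanced_to_col (hbal : IsBalancedSG I B) : ∃ c, IsGoodCol I B c := by
  refine ⟨fun v => if v ∈ vertSet I then sgnSum v * hfun I B v else 1, ?_, ?_, ?_⟩
  · intro v hv
    simp only [hv, if_true]
    rcases hfun_pm hB v with h1 | h1 <;> cases v <;> simp [sgnSum, h1]
  · intro v hv
    simp [hv]
  · intro p hp
    have hp' : (p.1, p.2) ∈ I := by simpa using hp
    have h1 : Sum.inl p.1 ∈ vertSet I := mem_vertSet_inl hp'
    have h2 : Sum.inr p.2 ∈ vertSet I := mem_vertSet_inr hp'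
    simp only [h1, h2, if_true]
    constructor
    · intro hbp
      have hadj : (sGraph I B).Adj (Sum.inl p.1) (Sum.inr p.2) :=
        adj_iff.mpr ⟨hp', by simp [hbp]⟩
      have := hfun_adj hB hbal hadj
      rw [show eSign B (Sum.inl p.1) (Sum.inr p.2) = B p by simp [eSign]] at this
      rcases hfun_pm hB (Sum.inl p.1) with ha | ha <;>
        rcases hfun_pm hB (Sum.inr p.2) with hb | hb <;>
        rw [ha, hb] at this ⊢ <;> simp [sgnSum] <;> omega
    · intro hbp
      have hadj : (sGraph I B).Adj (Sum.inl p.1) (Sum.inr p.2) :=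
        adj_iff.mpr ⟨hp', by simp [hbp]⟩
      have := hfun_adj hB hbal hadj
      rw [show eSign B (Sum.inl p.1) (Sum.inr p.2) = B p by simp [eSign]] at this
      rcases hfun_pm hB (Sum.inl p.1) with ha | ha <;>
        rcases hfun_pm hB (Sum.inr p.2) with hb | hb <;>
        rw [ha, hb] at this ⊢ <;> simp [sgnSum] <;> omega

-- (2) → (1)
include hB in
lemma col_edge {c : ℕ ⊕ ℕ → ℤ} (hc : IsGoodCol I B c) {u v : ℕ ⊕ ℕ}
    (h : (sGraph I B).Adj u v) :
    eSign B u v = (sgnSum u * c u) * (sgnSum v * c v) := by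
  obtain ⟨i, j, hij, hb, hcase⟩ := adj_cases h
  have hvl : Sum.inl i ∈ vertSet I := mem_vertSet_inl hij
  have hvr : Sum.inr j ∈ vertSet I := mem_vertSet_inr hij
  have hcl := hc.1 _ hvl
  have hcr := hc.1 _ hvr
  have hBij := hB _ hij
  have hedge := hc.2.2 (i, j) hij
  rcases hcase with ⟨h1, h2⟩ | ⟨h1, h2⟩ <;> subst h1 <;> subst h2 <;>
  · simp only [eSign, sgnSum, Sum.elim_inl, Sum.elim_inr]
    rcases hBij with hb0 | hb0 | hb0
    · have heq := hedge.1 hb0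
      rw [hb0, heq]
      rcases hcr with h' | h' <;> rw [h'] <;> ring
    · exact absurd hb0 hb
    · have hne := hedge.2 hb0
      rw [hb0]
      rcases hcl with h' | h' <;> rcases hcr with h'' | h'' <;>
        rw [h', h''] at hne ⊢ <;> first | (exact absurd rfl hne) | ring

lemma col_pm {c : ℕ ⊕ ℕ → ℤ} (hc : IsGoodCol I B c) (v : ℕ ⊕ ℕ) :
    sgnSum v * c v = 1 ∨ sgnSum v * c v = -1 := by
  have hcv : c v = 1 ∨ c v = -1 := by
    by_cases hv : v ∈ vertSet I
    · exact hc.1 v hv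
    · exact Or.inl (hc.2.1 v hv)
  cases v <;> rcases hcv with h | h <;> simp [sgnSum, h]

include hB in
lemma wprod_ends {c : ℕ ⊕ ℕ → ℤ} (hc : IsGoodCol I B c) {u v : ℕ ⊕ ℕ}
    (w : (sGraph I B).Walk u v) :
    wprod B w = (sgnSum u * c u) * (sgnSum v * c v) := by
  induction w with
  | nil =>
    rcases col_pm hc _ with h | h <;> rw [wprod_nil, h] <;> norm_num
  | cons h q ih =>
    rename_i a b x
    rw [wprod_cons, ih, col_edge hB hc h]
    rcases col_pm hc b with h1 | h1 <;> rw [h1] <;> ring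

include hB in
lemma col_to_balanced (c : ℕ ⊕ ℕ → ℤ) (hc : IsGoodCol I B c) : IsBalancedSG I B := by
  intro v w hcyc
  have h1 : wprod B w = 1 := by
    rw [wprod_ends hB hc w]
    rcases col_pm hc v with h | h <;> rw [h] <;> norm_num
  rw [wprod_eq_pow hB w] at h1
  rcases Nat.even_or_odd
      ((w.darts.filter fun d => decide (eSign B d.toProd.1 d.toProd.2 = -1)).length) with
    he | ho
  · exact he
  · rw [ho.neg_one_pow] at h1
    norm_num at h1


variable {s t : ℕ} {J : Finset (ℕ × ℕ)}

lemma mem_chioExt {p : ℕ × ℕ} :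
    p ∈ chioExt s t J ↔
      p = (s, t) ∨ (p.2 = t ∧ p.1 ∈ proj1 J) ∨ (p.1 = s ∧ p.2 ∈ proj2 J) ∨ p ∈ J := by
  simp only [chioExt, Finset.mem_insert, Finset.mem_union, Finset.mem_image, proj1, proj2]
  constructor
  · rintro (h | ((⟨i, hi, rfl⟩ | ⟨j, hj, rfl⟩) | h))
    · exact Or.inl h
    · exact Or.inr (Or.inl ⟨rfl, hi⟩)
    · exact Or.inr (Or.inr (Or.inl ⟨rfl, hj⟩))
    · exact Or.inr (Or.inr (Or.inr h))
  · rintro (h | (⟨h1, h2⟩ | (⟨h1, h2⟩ | h)))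
    · exact Or.inl h
    · refine Or.inr (Or.inl (Or.inl ⟨p.1, h2, ?_⟩))
      rw [← h1]
    · refine Or.inr (Or.inl (Or.inr ⟨p.2, h2, ?_⟩))
      rw [← h1]
    · exact Or.inr (Or.inr h)

section
variable (hs : 2 ≤ s) (ht : 2 ≤ t) (hJ : J ⊆ mgrid s t)

include hs ht hJ in
lemma grid_bounds {p : ℕ × ℕ} (hp : p ∈ J) :
    1 ≤ p.1 ∧ p.1 < s ∧ 1 ≤ p.2 ∧ p.2 < t := by
  have := hJ hp
  simp only [mgrid, Finset.mem_product, Finset.mem_Icc] at this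
  omega

include hs ht hJ in
lemma mem_proj1_lt {i : ℕ} (hi : i ∈ proj1 J) : i < s := by
  simp only [proj1, Finset.mem_image] at hi
  obtain ⟨q, hq, rfl⟩ := hi
  exact (grid_bounds hs ht hJ hq).2.1

include hs ht hJ in
lemma mem_proj2_lt {j : ℕ} (hj : j ∈ proj2 J) : j < t := by
  simp only [proj2, Finset.mem_image] at hj
  obtain ⟨q, hq, rfl⟩ := hj
  exact (grid_bounds hs ht hJ hq).2.2.2

end

lemma mem_vertSet_inl_iff {i : ℕ} : Sum.inl i ∈ vertSet I ↔ i ∈ proj1 I := by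
  simp [vertSet]

lemma mem_vertSet_inr_iff {j : ℕ} : Sum.inr j ∈ vertSet I ↔ j ∈ proj2 I := by
  simp [vertSet]

lemma mem_proj1_of_mem {p : ℕ × ℕ} (hp : p ∈ I) : p.1 ∈ proj1 I :=
  Finset.mem_image_of_mem _ hp

lemma mem_proj2_of_mem {p : ℕ × ℕ} (hp : p ∈ I) : p.2 ∈ proj2 I :=
  Finset.mem_image_of_mem _ hp

lemma proj1_mono {I J : Finset (ℕ × ℕ)} (h : I ⊆ J) : proj1 I ⊆ proj1 J :=
  Finset.image_subset_image h

lemma proj2_mono {I J : Finset (ℕ × ℕ)} (h : I ⊆ J) : proj2 I ⊆ proj2 J :=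
  Finset.image_subset_image h

/-- the A built from a good colouring -/
def buildA (s t : ℕ) (I J : Finset (ℕ × ℕ)) (B : ℕ × ℕ → ℤ) (c : ℕ ⊕ ℕ → ℤ) :
    ℕ × ℕ → ℤ := fun p =>
  if p = (s, t) then 1
  else if p ∈ J then (if p ∈ I then 2 * B p + c (Sum.inl p.1) * c (Sum.inr p.2) else 1)
  else if p.2 = t ∧ p.1 ∈ proj1 J then c (Sum.inl p.1)
  else if p.1 = s ∧ p.2 ∈ proj2 J then c (Sum.inr p.2)
  else 1

section
variable {c : ℕ ⊕ ℕ → ℤ}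
variable (hs : 2 ≤ s) (ht : 2 ≤ t) (hIJ : I ⊆ J) (hJ : J ⊆ mgrid s t)

include hs in
lemma st_not_mem_J (hJ : J ⊆ mgrid s t) (ht : 2 ≤ t) : (s, t) ∉ J := by
  intro h
  exact absurd (grid_bounds hs ht hJ h).2.1 (by simp)

include hs ht hJ in
lemma buildA_row {i : ℕ} (hi : i ∈ proj1 J) :
    buildA s t I J B c (i, t) = c (Sum.inl i) := by
  have h1 : (i, t) ≠ (s, t) := by
    have := mem_proj1_lt hs ht hJ hi
    simp only [ne_eq, Prod.mk.injEq]
    omega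
  have h2 : (i, t) ∉ J := fun h => by have := (grid_bounds hs ht hJ h).2.2.2; omega
  rw [buildA, if_neg h1, if_neg h2, if_pos ⟨rfl, hi⟩]

include hs ht hJ in
lemma buildA_col {j : ℕ} (hj : j ∈ proj2 J) :
    buildA s t I J B c (s, j) = c (Sum.inr j) := by
  have hjt : j < t := mem_proj2_lt hs ht hJ hj
  have h1 : (s, j) ≠ (s, t) := by
    simp only [ne_eq, Prod.mk.injEq]
    omega
  have h2 : (s, j) ∉ J := fun h => by have := (grid_bounds hs ht hJ h).2.1; omega
  have h3 : ¬((s, j).2 = t ∧ (s, j).1 ∈ proj1 J) := by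
    simp only [not_and]
    intro h
    omega
  rw [buildA, if_neg h1, if_neg h2, if_neg h3, if_pos ⟨rfl, hj⟩]

include hs ht hJ in
lemma buildA_st' : buildA s t I J B c (s, t) = 1 := by
  rw [buildA, if_pos rfl]

include hs ht hJ in
lemma buildA_memJ {p : ℕ × ℕ} (hp : p ∈ J) :
    buildA s t I J B c p =
      (if p ∈ I then 2 * B p + c (Sum.inl p.1) * c (Sum.inr p.2) else 1) := by
  have h1 : p ≠ (s, t) := by
    intro h
    exact st_not_mem_J hs hJ ht (h ▸ hp)
  rw [buildA, if_neg h1, if_pos hp]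

include hs ht hIJ hJ in
lemma col_to_cond (hB : ∀ p ∈ I, B p = -1 ∨ B p = 0 ∨ B p = 1) (hc : IsGoodCol I B c) :
    IsSignOn (chioExt s t J) (buildA s t I J B c) ∧
      CondensesTo s t I (buildA s t I J B c) B := by
  have c_any : ∀ v, c v = 1 ∨ c v = -1 := fun v => by
    by_cases hv : v ∈ vertSet I
    · exact hc.1 v hv
    · exact Or.inl (hc.2.1 v hv)
  have hI_val : ∀ p ∈ I, 2 * B p + c (Sum.inl p.1) * c (Sum.inr p.2) = 1 ∨
      2 * B p + c (Sum.inl p.1) * c (Sum.inr p.2) = -1 := by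
    intro p hp
    have hp' : (p.1, p.2) ∈ I := by simpa using hp
    have hedge := hc.2.2 p hp
    rcases hB p hp with hb | hb | hb
    · have heq := hedge.1 hb
      rw [hb, heq]
      rcases c_any (Sum.inr p.2) with h | h <;> rw [h] <;> norm_num
    · rw [hb]
      rcases c_any (Sum.inl p.1) with h | h <;> rcases c_any (Sum.inr p.2) with h' | h' <;>
        rw [h, h'] <;> norm_num
    · have hne := hedge.2 hb
      rw [hb]
      rcases c_any (Sum.inl p.1) with h | h <;> rcases c_any (Sum.inr p.2) with h' | h' <;>
        rw [h, h'] at hne ⊢ <;> first | (exact absurd rfl hne) | norm_num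
  refine ⟨⟨?_, ?_⟩, ?_⟩
  · intro p hp
    rcases mem_chioExt.mp hp with h | ⟨h1, h2⟩ | ⟨h1, h2⟩ | h
    · rw [h, buildA_st' hs ht hJ]; exact Or.inl rfl
    · have : p = (p.1, t) := by rw [← h1]
      rw [this, buildA_row hs ht hJ h2]
      exact c_any _
    · have : p = (s, p.2) := by rw [← h1]
      rw [this, buildA_col hs ht hJ h2]
      exact c_any _
    · rw [buildA_memJ hs ht hJ h]
      by_cases hpI : p ∈ I
      · rw [if_pos hpI]; exact hI_val p hpI
      · rw [if_neg hpI]; exact Or.inl rfl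
  · intro p hp
    have h1 : p ≠ (s, t) := fun h => hp (h ▸ (Finset.mem_insert_self _ _))
    have h2 : p ∉ J := fun h => hp (mem_chioExt.mpr (Or.inr (Or.inr (Or.inr h))))
    have h3 : ¬(p.2 = t ∧ p.1 ∈ proj1 J) := fun h =>
      hp (mem_chioExt.mpr (Or.inr (Or.inl h)))
    have h4 : ¬(p.1 = s ∧ p.2 ∈ proj2 J) := fun h =>
      hp (mem_chioExt.mpr (Or.inr (Or.inr (Or.inl h))))
    rw [buildA, if_neg h1, if_neg h2, if_neg h3, if_neg h4]
  · intro p hp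
    have hpJ : p ∈ J := hIJ hp
    have hA1 : buildA s t I J B c p = 2 * B p + c (Sum.inl p.1) * c (Sum.inr p.2) := by
      rw [buildA_memJ hs ht hJ hpJ, if_pos hp]
    have hA2 : buildA s t I J B c (p.1, t) = c (Sum.inl p.1) :=
      buildA_row hs ht hJ (mem_proj1_of_mem hpJ)
    have hA3 : buildA s t I J B c (s, p.2) = c (Sum.inr p.2) :=
      buildA_col hs ht hJ (mem_proj2_of_mem hpJ)
    rw [hA1, hA2, hA3, buildA_st' hs ht hJ]
    ring

/-- the colouring extracted from a condensing A -/
def colOfA (s t : ℕ) (I : Finset (ℕ × ℕ)) (A : ℕ × ℕ → ℤ) : ℕ ⊕ ℕ → ℤ := fun v =>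
  match v with
  | Sum.inl i => if i ∈ proj1 I then A (i, t) else 1
  | Sum.inr j => if j ∈ proj2 I then A (s, j) else 1

include hIJ in
lemma cond_vals (hA : IsSignOn (chioExt s t J) A) (hcond : CondensesTo s t I A B)
    {p : ℕ × ℕ} (hp : p ∈ I) :
    (A p = 1 ∨ A p = -1) ∧ (A (s, t) = 1 ∨ A (s, t) = -1) ∧
      (A (p.1, t) = 1 ∨ A (p.1, t) = -1) ∧ (A (s, p.2) = 1 ∨ A (s, p.2) = -1) := by
  have h1 : p ∈ chioExt s t J := mem_chioExt.mpr (Or.inr (Or.inr (Or.inr (hIJ hp))))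
  have h2 : (s, t) ∈ chioExt s t J := Finset.mem_insert_self _ _
  have h3 : (p.1, t) ∈ chioExt s t J :=
    mem_chioExt.mpr (Or.inr (Or.inl ⟨rfl, proj1_mono hIJ (mem_proj1_of_mem (p := p) hp)⟩))
  have h4 : (s, p.2) ∈ chioExt s t J :=
    mem_chioExt.mpr (Or.inr (Or.inr (Or.inl ⟨rfl, proj2_mono hIJ (mem_proj2_of_mem (p := p) hp)⟩)))
  exact ⟨hA.1 _ h1, hA.1 _ h2, hA.1 _ h3, hA.1 _ h4⟩

include hIJ in
lemma cond_to_col {A : ℕ × ℕ → ℤ} (hA : IsSignOn (chioExt s t J) A)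
    (hcond : CondensesTo s t I A B) : IsGoodCol I B (colOfA s t I A) := by
  refine ⟨?_, ?_, ?_⟩
  · intro v hv
    cases v with
    | inl i =>
      have hi : i ∈ proj1 I := mem_vertSet_inl_iff.mp hv
      simp only [colOfA, if_pos hi]
      exact hA.1 _ (mem_chioExt.mpr (Or.inr (Or.inl ⟨rfl, proj1_mono hIJ hi⟩)))
    | inr j =>
      have hj : j ∈ proj2 I := mem_vertSet_inr_iff.mp hv
      simp only [colOfA, if_pos hj]
      exact hA.1 _ (mem_chioExt.mpr (Or.inr (Or.inr (Or.inl ⟨rfl, proj2_mono hIJ hj⟩))))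
  · intro v hv
    cases v with
    | inl i =>
      have hi : i ∉ proj1 I := fun h => hv (mem_vertSet_inl_iff.mpr h)
      simp only [colOfA, if_neg hi]
    | inr j =>
      have hj : j ∉ proj2 I := fun h => hv (mem_vertSet_inr_iff.mpr h)
      simp only [colOfA, if_neg hj]
  · intro p hp
    have hkey := hcond p hp
    obtain ⟨hv1, hv2, hv3, hv4⟩ := cond_vals hIJ hA hcond hp
    have hc1 : colOfA s t I A (Sum.inl p.1) = A (p.1, t) := by
      simp only [colOfA, if_pos (mem_proj1_of_mem hp)]
    have hc2 : colOfA s t I A (Sum.inr p.2) = A (s, p.2) := by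
      simp only [colOfA, if_pos (mem_proj2_of_mem hp)]
    rw [hc1, hc2]
    constructor
    · intro hb
      rw [hb] at hkey
      rcases hv1 with h1 | h1 <;> rcases hv2 with h2 | h2 <;> rcases hv3 with h3 | h3 <;>
        rcases hv4 with h4 | h4 <;> rw [h3, h4] at hkey ⊢ <;> rw [h1, h2] at hkey <;>
        revert hkey <;> norm_num
    · intro hb
      rw [hb] at hkey
      rcases hv1 with h1 | h1 <;> rcases hv2 with h2 | h2 <;> rcases hv3 with h3 | h3 <;>
        rcases hv4 with h4 | h4 <;> rw [h3, h4] at hkey ⊢ <;> rw [h1, h2] at hkey <;>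
        revert hkey <;> norm_num


/-! ### Counting -/

def bsgn (b : Bool) : ℤ := if b then 1 else -1

lemma bsgn_pm (b : Bool) : bsgn b = 1 ∨ bsgn b = -1 := by cases b <;> simp [bsgn]

lemma bsgn_ne_zero (b : Bool) : bsgn b ≠ 0 := by cases b <;> simp [bsgn]

lemma bsgn_inj {b b' : Bool} (h : bsgn b = bsgn b') : b = b' := by
  cases b <;> cases b' <;> simp [bsgn] at h ⊢

lemma bsgn_decide {a : ℤ} (ha : a = 1 ∨ a = -1) : bsgn (decide (a = 1)) = a := by
  rcases ha with h | h <;> subst h <;> simp [bsgn]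

lemma pm_mul_pm {a b : ℤ} (ha : a = 1 ∨ a = -1) (hb : b = 1 ∨ b = -1) :
    a * b = 1 ∨ a * b = -1 := by
  rcases ha with h | h <;> rcases hb with h' | h' <;> rw [h, h'] <;> norm_num

def compSet (I : Finset (ℕ × ℕ)) (B : ℕ × ℕ → ℤ) : Set ((sGraph I B).ConnectedComponent) :=
  (sGraph I B).connectedComponentMk '' (vertSet I : Set (ℕ ⊕ ℕ))

def ffree (s t : ℕ) (I J : Finset (ℕ × ℕ)) : Finset (ℕ × ℕ) :=
  chioExt s t J \ ((I ∪ (proj1 I).image (fun i => (i, t))) ∪ (proj2 I).image (fun j => (s, j)))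

/-- the colouring determined by a base colouring `c0` and a choice of sign per component -/
noncomputable def colOfG (I : Finset (ℕ × ℕ)) (B : ℕ × ℕ → ℤ) (c0 : ℕ ⊕ ℕ → ℤ)
    (g : {K // K ∈ compSet I B} → Bool) : ℕ ⊕ ℕ → ℤ := fun v =>
  if hv : v ∈ vertSet I then
    c0 v * bsgn (g ⟨(sGraph I B).connectedComponentMk v, ⟨v, Finset.mem_coe.mpr hv, rfl⟩⟩)
  else 1

noncomputable def bigA (s t : ℕ) (I J : Finset (ℕ × ℕ)) (B : ℕ × ℕ → ℤ)
    (hst : (s, t) ∈ ffree s t I J) (c0 : ℕ ⊕ ℕ → ℤ)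
    (fg : ({p // p ∈ ffree s t I J} → Bool) × ({K // K ∈ compSet I B} → Bool)) :
    ℕ × ℕ → ℤ := fun p =>
  if p ∈ I then
    bsgn (fg.1 ⟨(s, t), hst⟩) *
      (2 * B p + colOfG I B c0 fg.2 (Sum.inl p.1) * colOfG I B c0 fg.2 (Sum.inr p.2))
  else if p.2 = t ∧ p.1 ∈ proj1 I then colOfG I B c0 fg.2 (Sum.inl p.1)
  else if p.1 = s ∧ p.2 ∈ proj2 I then colOfG I B c0 fg.2 (Sum.inr p.2)
  else if hp : p ∈ ffree s t I J then bsgn (fg.1 ⟨p, hp⟩)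
  else 1

section counting
variable {c0 : ℕ ⊕ ℕ → ℤ} {A : ℕ × ℕ → ℤ}
variable (hs : 2 ≤ s) (ht : 2 ≤ t) (hIJ : I ⊆ J) (hJ : J ⊆ mgrid s t)
  (hB : ∀ p ∈ I, B p = -1 ∨ B p = 0 ∨ B p = 1)

include hs ht hIJ hJ in
lemma st_mem_ffree : (s, t) ∈ ffree s t I J := by
  rw [ffree, Finset.mem_sdiff]
  refine ⟨Finset.mem_insert_self _ _, ?_⟩
  simp only [Finset.mem_union, Finset.mem_image, not_or]
  refine ⟨⟨fun h => st_not_mem_J hs hJ ht (hIJ h), ?_⟩, ?_⟩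
  · rintro ⟨i, hi, hkl⟩
    have := mem_proj1_lt hs ht hJ (proj1_mono hIJ hi)
    rw [Prod.mk.injEq] at hkl
    omega
  · rintro ⟨j, hj, hkl⟩
    have := mem_proj2_lt hs ht hJ (proj2_mono hIJ hj)
    rw [Prod.mk.injEq] at hkl
    omega

include hs ht hIJ hJ in
lemma not_mem_I_t {i : ℕ} : (i, t) ∉ I := fun h => by
  have := (grid_bounds hs ht (hIJ.trans hJ) h).2.2.2
  omega

include hs ht hIJ hJ in
lemma not_mem_I_s {j : ℕ} : (s, j) ∉ I := fun h => by
  have := (grid_bounds hs ht (hIJ.trans hJ) h).2.1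
  omega

include hs ht hIJ hJ in
lemma row_mem_ffree {i : ℕ} (hi : i ∈ proj1 J) (hni : i ∉ proj1 I) :
    (i, t) ∈ ffree s t I J := by
  rw [ffree, Finset.mem_sdiff]
  refine ⟨mem_chioExt.mpr (Or.inr (Or.inl ⟨rfl, hi⟩)), ?_⟩
  simp only [Finset.mem_union, Finset.mem_image, not_or]
  refine ⟨⟨not_mem_I_t hs ht hIJ hJ, ?_⟩, ?_⟩
  · rintro ⟨i', hi', hkl⟩
    rw [Prod.mk.injEq] at hkl
    exact hni (hkl.1 ▸ hi')
  · rintro ⟨j, hj, hkl⟩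
    have := mem_proj1_lt hs ht hJ hi
    rw [Prod.mk.injEq] at hkl
    omega

include hs ht hIJ hJ in
lemma colm_mem_ffree {j : ℕ} (hj : j ∈ proj2 J) (hnj : j ∉ proj2 I) :
    (s, j) ∈ ffree s t I J := by
  rw [ffree, Finset.mem_sdiff]
  refine ⟨mem_chioExt.mpr (Or.inr (Or.inr (Or.inl ⟨rfl, hj⟩))), ?_⟩
  simp only [Finset.mem_union, Finset.mem_image, not_or]
  refine ⟨⟨not_mem_I_s hs ht hIJ hJ, ?_⟩, ?_⟩
  · rintro ⟨i', hi', hkl⟩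
    have := mem_proj1_lt hs ht hJ (proj1_mono hIJ hi')
    rw [Prod.mk.injEq] at hkl
    omega
  · rintro ⟨j', hj', hkl⟩
    rw [Prod.mk.injEq] at hkl
    exact hnj (hkl.2 ▸ hj')

include hs ht hIJ hJ in
lemma memJ_not_I_mem_ffree {p : ℕ × ℕ} (hp : p ∈ J) (hnp : p ∉ I) :
    p ∈ ffree s t I J := by
  rw [ffree, Finset.mem_sdiff]
  refine ⟨mem_chioExt.mpr (Or.inr (Or.inr (Or.inr hp))), ?_⟩
  simp only [Finset.mem_union, Finset.mem_image, not_or]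
  have hb := grid_bounds hs ht hJ hp
  refine ⟨⟨hnp, ?_⟩, ?_⟩
  · rintro ⟨i', hi', hkl⟩
    rw [Prod.mk.injEq] at hkl
    omega
  · rintro ⟨j', hj', hkl⟩
    rw [Prod.mk.injEq] at hkl
    omega

lemma ffree_subset : ffree s t I J ⊆ chioExt s t J := Finset.sdiff_subset

lemma ffree_not_row {p : ℕ × ℕ} (hp : p ∈ ffree s t I J) :
    ¬(p.2 = t ∧ p.1 ∈ proj1 I) := by
  rintro ⟨h1, h2⟩
  rw [ffree, Finset.mem_sdiff] at hp
  refine hp.2 ?_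
  simp only [Finset.mem_union, Finset.mem_image]
  exact Or.inl (Or.inr ⟨p.1, h2, by rw [← h1]⟩)

lemma ffree_not_col {p : ℕ × ℕ} (hp : p ∈ ffree s t I J) :
    ¬(p.1 = s ∧ p.2 ∈ proj2 I) := by
  rintro ⟨h1, h2⟩
  rw [ffree, Finset.mem_sdiff] at hp
  refine hp.2 ?_
  simp only [Finset.mem_union, Finset.mem_image]
  exact Or.inr ⟨p.2, h2, by rw [← h1]⟩

lemma ffree_not_I {p : ℕ × ℕ} (hp : p ∈ ffree s t I J) : p ∉ I := by
  intro h
  rw [ffree, Finset.mem_sdiff] at hp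
  exact hp.2 (by simp only [Finset.mem_union]; exact Or.inl (Or.inl h))

section evalA
variable (hst : (s, t) ∈ ffree s t I J) {f : {p // p ∈ ffree s t I J} → Bool}
  {g : {K // K ∈ compSet I B} → Bool}

lemma bigA_I {p : ℕ × ℕ} (hp : p ∈ I) :
    bigA s t I J B hst c0 (f, g) p =
      bsgn (f ⟨(s, t), hst⟩) *
        (2 * B p + colOfG I B c0 g (Sum.inl p.1) * colOfG I B c0 g (Sum.inr p.2)) := by
  rw [bigA, if_pos hp]

include hs ht hIJ hJ in
lemma bigA_row {i : ℕ} (hi : i ∈ proj1 I) :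
    bigA s t I J B hst c0 (f, g) (i, t) = colOfG I B c0 g (Sum.inl i) := by
  rw [bigA, if_neg (not_mem_I_t hs ht hIJ hJ), if_pos ⟨rfl, hi⟩]

include hs ht hIJ hJ in
lemma bigA_col {j : ℕ} (hj : j ∈ proj2 I) :
    bigA s t I J B hst c0 (f, g) (s, j) = colOfG I B c0 g (Sum.inr j) := by
  have hjt : j < t := mem_proj2_lt hs ht hJ (proj2_mono hIJ hj)
  have : ¬((s, j).2 = t ∧ (s, j).1 ∈ proj1 I) := by
    simp only [not_and]
    intro h
    omega
  rw [bigA, if_neg (not_mem_I_s hs ht hIJ hJ), if_neg this, if_pos ⟨rfl, hj⟩]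

include hs ht hIJ hJ in
lemma bigA_st :
    bigA s t I J B hst c0 (f, g) (s, t) = bsgn (f ⟨(s, t), hst⟩) := by
  have h1 : ¬((s, t).2 = t ∧ (s, t).1 ∈ proj1 I) := by
    rintro ⟨-, h⟩
    have := mem_proj1_lt hs ht hJ (proj1_mono hIJ h)
    omega
  have h2 : ¬((s, t).1 = s ∧ (s, t).2 ∈ proj2 I) := by
    rintro ⟨-, h⟩
    have := mem_proj2_lt hs ht hJ (proj2_mono hIJ h)
    omega
  rw [bigA, if_neg (not_mem_I_s hs ht hIJ hJ), if_neg h1, if_neg h2, dif_pos hst]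

lemma bigA_free {p : ℕ × ℕ} (hp : p ∈ ffree s t I J) :
    bigA s t I J B hst c0 (f, g) p = bsgn (f ⟨p, hp⟩) := by
  rw [bigA, if_neg (ffree_not_I hp), if_neg (ffree_not_row hp), if_neg (ffree_not_col hp),
    dif_pos hp]

include hIJ in
lemma bigA_else {p : ℕ × ℕ} (hp : p ∉ chioExt s t J) :
    bigA s t I J B hst c0 (f, g) p = 1 := by
  have h1 : p ∉ I := fun h => hp (mem_chioExt.mpr (Or.inr (Or.inr (Or.inr (hIJ h)))))
  have h2 : ¬(p.2 = t ∧ p.1 ∈ proj1 I) := fun h =>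
    hp (mem_chioExt.mpr (Or.inr (Or.inl ⟨h.1, proj1_mono hIJ h.2⟩)))
  have h3 : ¬(p.1 = s ∧ p.2 ∈ proj2 I) := fun h =>
    hp (mem_chioExt.mpr (Or.inr (Or.inr (Or.inl ⟨h.1, proj2_mono hIJ h.2⟩))))
  have h4 : p ∉ ffree s t I J := fun h => hp (ffree_subset h)
  rw [bigA, if_neg h1, if_neg h2, if_neg h3, dif_neg h4]

end evalA

include hB in
lemma goodcol_val {c : ℕ ⊕ ℕ → ℤ} (hc : IsGoodCol I B c) {p : ℕ × ℕ} (hp : p ∈ I) :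
    2 * B p + c (Sum.inl p.1) * c (Sum.inr p.2) = 1 ∨
      2 * B p + c (Sum.inl p.1) * c (Sum.inr p.2) = -1 := by
  have c_any : ∀ v, c v = 1 ∨ c v = -1 := fun v => by
    by_cases hv : v ∈ vertSet I
    · exact hc.1 v hv
    · exact Or.inl (hc.2.1 v hv)
  have hedge := hc.2.2 p hp
  rcases hB p hp with hb | hb | hb
  · have heq := hedge.1 hb
    rw [hb, heq]
    rcases c_any (Sum.inr p.2) with h | h <;> rw [h] <;> norm_num
  · rw [hb]
    rcases c_any (Sum.inl p.1) with h | h <;> rcases c_any (Sum.inr p.2) with h' | h' <;>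
      rw [h, h'] <;> norm_num
  · have hne := hedge.2 hb
    rw [hb]
    rcases c_any (Sum.inl p.1) with h | h <;> rcases c_any (Sum.inr p.2) with h' | h' <;>
      rw [h, h'] at hne ⊢ <;> first | (exact absurd rfl hne) | norm_num

lemma colOfG_good (hc0 : IsGoodCol I B c0) (g : {K // K ∈ compSet I B} → Bool) :
    IsGoodCol I B (colOfG I B c0 g) := by
  refine ⟨?_, ?_, ?_⟩
  · intro v hv
    rw [colOfG, dif_pos hv]
    exact pm_mul_pm (hc0.1 v hv) (bsgn_pm _)
  · intro v hv
    rw [colOfG, dif_neg hv]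
  · intro p hp
    have hvl : Sum.inl p.1 ∈ vertSet I := mem_vertSet_inl (by simpa using hp)
    have hvr : Sum.inr p.2 ∈ vertSet I := mem_vertSet_inr (by simpa using hp)
    have hedge := hc0.2.2 p hp
    constructor
    · intro hb
      have hadj : (sGraph I B).Adj (Sum.inl p.1) (Sum.inr p.2) :=
        adj_iff.mpr ⟨by simpa using hp, by simp [hb]⟩
      have hmk : (sGraph I B).connectedComponentMk (Sum.inl p.1) =
          (sGraph I B).connectedComponentMk (Sum.inr p.2) :=
        SimpleGraph.ConnectedComponent.sound hadj.reachable
      rw [colOfG, dif_pos hvl, colOfG, dif_pos hvr, hedge.1 hb]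
      congr 2
      exact congrArg g (Subtype.ext hmk)
    · intro hb
      have hadj : (sGraph I B).Adj (Sum.inl p.1) (Sum.inr p.2) :=
        adj_iff.mpr ⟨by simpa using hp, by simp [hb]⟩
      have hmk : (sGraph I B).connectedComponentMk (Sum.inl p.1) =
          (sGraph I B).connectedComponentMk (Sum.inr p.2) :=
        SimpleGraph.ConnectedComponent.sound hadj.reachable
      have hne := hedge.2 hb
      rw [colOfG, dif_pos hvl, colOfG, dif_pos hvr]
      rw [show (⟨(sGraph I B).connectedComponentMk (Sum.inl p.1),
            ⟨Sum.inl p.1, Finset.mem_coe.mpr hvl, rfl⟩⟩ :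
          {K // K ∈ compSet I B}) = ⟨(sGraph I B).connectedComponentMk (Sum.inr p.2),
            ⟨Sum.inr p.2, Finset.mem_coe.mpr hvr, rfl⟩⟩ from Subtype.ext hmk]
      intro hcontra
      exact hne (mul_right_cancel₀ (bsgn_ne_zero _) hcontra)

include hs ht hIJ hJ hB in
lemma bigA_mem (hc0 : IsGoodCol I B c0) (hst : (s, t) ∈ ffree s t I J)
    (f : {p // p ∈ ffree s t I J} → Bool) (g : {K // K ∈ compSet I B} → Bool) :
    IsSignOn (chioExt s t J) (bigA s t I J B hst c0 (f, g)) ∧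
      CondensesTo s t I (bigA s t I J B hst c0 (f, g)) B := by
  have hcol := colOfG_good hc0 g
  have col_any : ∀ v, colOfG I B c0 g v = 1 ∨ colOfG I B c0 g v = -1 := fun v => by
    by_cases hv : v ∈ vertSet I
    · exact hcol.1 v hv
    · exact Or.inl (hcol.2.1 v hv)
  refine ⟨⟨?_, ?_⟩, ?_⟩
  · intro p hp
    by_cases hpI : p ∈ I
    · rw [bigA_I hst hpI]
      exact pm_mul_pm (bsgn_pm _) (goodcol_val hB hcol hpI)
    · rcases mem_chioExt.mp hp with h | ⟨h1, h2⟩ | ⟨h1, h2⟩ | h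
      · rw [h, bigA_free hst (st_mem_ffree hs ht hIJ hJ)]
        exact bsgn_pm _
      · by_cases hi : p.1 ∈ proj1 I
        · have hpe : p = (p.1, t) := by rw [← h1]
          rw [hpe, bigA_row hs ht hIJ hJ hst hi]
          exact col_any _
        · have hpe : p = (p.1, t) := by rw [← h1]
          rw [hpe, bigA_free hst (row_mem_ffree hs ht hIJ hJ h2 hi)]
          exact bsgn_pm _
      · by_cases hj : p.2 ∈ proj2 I
        · have hpe : p = (s, p.2) := by rw [← h1]
          rw [hpe, bigA_col hs ht hIJ hJ hst hj]
          exact col_any _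
        · have hpe : p = (s, p.2) := by rw [← h1]
          rw [hpe, bigA_free hst (colm_mem_ffree hs ht hIJ hJ h2 hj)]
          exact bsgn_pm _
      · rw [bigA_free hst (memJ_not_I_mem_ffree hs ht hIJ hJ h hpI)]
        exact bsgn_pm _
  · intro p hp
    exact bigA_else hIJ hst hp
  · intro p hp
    have h1 := bigA_I (B := B) (c0 := c0) (f := f) (g := g) hst hp
    have h2 := bigA_st hs ht hIJ hJ (B := B) (c0 := c0) (f := f) (g := g) hst
    have h3 := bigA_row hs ht hIJ hJ (B := B) (c0 := c0) (f := f) (g := g) hst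
      (mem_proj1_of_mem hp)
    have h4 := bigA_col hs ht hIJ hJ (B := B) (c0 := c0) (f := f) (g := g) hst
      (mem_proj2_of_mem hp)
    rw [h1, h2, h3, h4]
    rcases bsgn_pm (f ⟨(s, t), hst⟩) with h | h <;> rw [h] <;> ring

end counting

section counting2
variable {c0 cA : ℕ ⊕ ℕ → ℤ} {A : ℕ × ℕ → ℤ}
variable (hs : 2 ≤ s) (ht : 2 ≤ t) (hIJ : I ⊆ J) (hJ : J ⊆ mgrid s t)
  (hB : ∀ p ∈ I, B p = -1 ∨ B p = 0 ∨ B p = 1)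

lemma pm_ne {a b : ℤ} (ha : a = 1 ∨ a = -1) (hb : b = 1 ∨ b = -1) (h : a ≠ b) : a = -b := by
  rcases ha with h1 | h1 <;> rcases hb with h2 | h2 <;> rw [h1, h2] at h ⊢ <;>
    first | (exact absurd rfl h) | rfl | norm_num

lemma bsgn_of_pm {a b : ℤ} (ha : a = 1 ∨ a = -1) (hb : b = 1 ∨ b = -1) :
    bsgn (decide (a = b)) = a * b := by
  rcases ha with h1 | h1 <;> rcases hb with h2 | h2 <;> rw [h1, h2] <;> simp [bsgn]

include hB in
lemma delta_adj (hcA : IsGoodCol I B cA) (hc0 : IsGoodCol I B c0) {u v : ℕ ⊕ ℕ}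
    (h : (sGraph I B).Adj u v) : cA u * c0 u = cA v * c0 v := by
  obtain ⟨i, j, hij, hb, hcase⟩ := adj_cases h
  have key : cA (Sum.inl i) * c0 (Sum.inl i) = cA (Sum.inr j) * c0 (Sum.inr j) := by
    have hvl := mem_vertSet_inl (I := I) hij
    have hvr := mem_vertSet_inr (I := I) hij
    have heA := hcA.2.2 (i, j) hij
    have he0 := hc0.2.2 (i, j) hij
    rcases hB (i, j) hij with hb0 | hb0 | hb0
    · rw [heA.1 hb0, he0.1 hb0]
    · exact absurd hb0 hb
    · have h1 := pm_ne (hcA.1 _ hvl) (hcA.1 _ hvr) (heA.2 hb0)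
      have h2 := pm_ne (hc0.1 _ hvl) (hc0.1 _ hvr) (he0.2 hb0)
      rw [h1, h2]
      ring
  rcases hcase with ⟨rfl, rfl⟩ | ⟨rfl, rfl⟩
  · exact key
  · exact key.symm

include hB in
lemma delta_reach (hcA : IsGoodCol I B cA) (hc0 : IsGoodCol I B c0) {u v : ℕ ⊕ ℕ}
    (h : (sGraph I B).Reachable u v) : cA u * c0 u = cA v * c0 v := by
  obtain ⟨w⟩ := h
  induction w with
  | nil => rfl
  | cons hadj q ih => exact (delta_adj hB hcA hc0 hadj).trans ih

noncomputable def crep {K : (sGraph I B).ConnectedComponent} (hK : K ∈ compSet I B) :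
    ℕ ⊕ ℕ := ((Set.mem_image _ _ _).mp hK).choose

lemma crep_spec {K : (sGraph I B).ConnectedComponent} (hK : K ∈ compSet I B) :
    crep hK ∈ vertSet I ∧ (sGraph I B).connectedComponentMk (crep hK) = K := by
  have h := ((Set.mem_image _ _ _).mp hK).choose_spec
  exact ⟨Finset.mem_coe.mp h.1, h.2⟩

include hB in
lemma bsgn_g_eq (hcA : IsGoodCol I B cA) (hc0 : IsGoodCol I B c0) {v : ℕ ⊕ ℕ}
    (hv : v ∈ vertSet I)
    (pf : (sGraph I B).connectedComponentMk v ∈ compSet I B) :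
    bsgn (decide (cA (crep pf) = c0 (crep pf))) = cA v * c0 v := by
  obtain ⟨hw, hmk⟩ := crep_spec pf
  have hreach : (sGraph I B).Reachable (crep pf) v :=
    SimpleGraph.ConnectedComponent.exact hmk
  rw [bsgn_of_pm (hcA.1 _ hw) (hc0.1 _ hw)]
  exact delta_reach hB hcA hc0 hreach

include hs ht hIJ hJ hB in
lemma bigA_surj (hc0 : IsGoodCol I B c0) (hst : (s, t) ∈ ffree s t I J)
    (hA1 : IsSignOn (chioExt s t J) A) (hA2 : CondensesTo s t I A B) :
    ∃ f g, bigA s t I J B hst c0 (f, g) = A := by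
  set cA := colOfA s t I A with hcAdef
  have hcA : IsGoodCol I B cA := cond_to_col hIJ hA1 hA2
  refine ⟨fun x => decide (A x.1 = 1),
    fun K => decide (cA (crep K.2) = c0 (crep K.2)), ?_⟩
  have hcoleq : colOfG I B c0 (fun K => decide (cA (crep K.2) = c0 (crep K.2))) = cA := by
    funext v
    by_cases hv : v ∈ vertSet I
    · rw [colOfG, dif_pos hv]
      have := bsgn_g_eq hB hcA hc0 hv ⟨v, Finset.mem_coe.mpr hv, rfl⟩
      rw [this]
      have h0 := hc0.1 v hv
      rcases h0 with h | h <;> rw [h] <;> ring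
    · rw [colOfG, dif_neg hv, (hcA.2.1 v hv).symm]
  funext p
  obtain ⟨p1, p2⟩ := p
  by_cases hpI : (p1, p2) ∈ I
  · rw [bigA_I hst hpI, hcoleq]
    have hst' : A (s, t) = 1 ∨ A (s, t) = -1 := hA1.1 _ (Finset.mem_insert_self _ _)
    have hb1 : bsgn (decide (A (s, t) = 1)) = A (s, t) := bsgn_decide hst'
    have hc1 : cA (Sum.inl p1) = A (p1, t) := by
      rw [hcAdef]
      simp only [colOfA, if_pos (mem_proj1_of_mem (p := (p1, p2)) hpI)]
    have hc2 : cA (Sum.inr p2) = A (s, p2) := by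
      rw [hcAdef]
      simp only [colOfA, if_pos (mem_proj2_of_mem (p := (p1, p2)) hpI)]
    rw [hb1]
    dsimp only
    rw [hc1, hc2]
    have hkey := hA2 (p1, p2) hpI
    rcases hst' with h | h <;> rw [h] at hkey ⊢ <;> linarith
  · by_cases hpc : (p1, p2) ∈ chioExt s t J
    · rcases mem_chioExt.mp hpc with h | ⟨h1, h2⟩ | ⟨h1, h2⟩ | h
      · rw [Prod.mk.injEq] at h
        obtain ⟨rfl, rfl⟩ := h
        rw [bigA_free hst (st_mem_ffree hs ht hIJ hJ)]
        exact bsgn_decide (hA1.1 _ (Finset.mem_insert_self _ _))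
      · have h1' : p2 = t := h1
        subst h1'
        by_cases hi : p1 ∈ proj1 I
        · rw [bigA_row hs ht hIJ hJ hst hi, hcoleq, hcAdef]
          simp only [colOfA, if_pos hi]
        · rw [bigA_free hst (row_mem_ffree hs ht hIJ hJ h2 hi)]
          exact bsgn_decide (hA1.1 _ hpc)
      · have h1' : p1 = s := h1
        subst h1'
        by_cases hj : p2 ∈ proj2 I
        · rw [bigA_col hs ht hIJ hJ hst hj, hcoleq, hcAdef]
          simp only [colOfA, if_pos hj]
        · rw [bigA_free hst (colm_mem_ffree hs ht hIJ hJ h2 hj)]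
          exact bsgn_decide (hA1.1 _ hpc)
      · rw [bigA_free hst (memJ_not_I_mem_ffree hs ht hIJ hJ h hpI)]
        exact bsgn_decide (hA1.1 _ hpc)
    · rw [bigA_else hIJ hst hpc]
      exact (hA1.2 (p1, p2) hpc).symm

include hs ht hIJ hJ in
lemma bigA_injective (hc0 : IsGoodCol I B c0) (hst : (s, t) ∈ ffree s t I J)
    {f f' : {p // p ∈ ffree s t I J} → Bool} {g g' : {K // K ∈ compSet I B} → Bool}
    (h : bigA s t I J B hst c0 (f, g) = bigA s t I J B hst c0 (f', g')) :
    f = f' ∧ g = g' := by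
  constructor
  · funext x
    apply bsgn_inj
    have h1 := bigA_free (B := B) (c0 := c0) (f := f) (g := g) hst x.2
    have h2 := bigA_free (B := B) (c0 := c0) (f := f') (g := g') hst x.2
    rw [← Subtype.eta x x.2] at h1 h2 ⊢
    rw [← h1, ← h2, h]
  · funext K
    obtain ⟨v, hv, hmkv⟩ := K.2
    have hv' : v ∈ vertSet I := Finset.mem_coe.mp hv
    have hC0 : c0 v ≠ 0 := by
      rcases hc0.1 v hv' with h' | h' <;> rw [h'] <;> norm_num
    have key : colOfG I B c0 g v = colOfG I B c0 g' v := by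
      cases v with
      | inl i =>
        have hi : i ∈ proj1 I := mem_vertSet_inl_iff.mp hv'
        have e1 := bigA_row hs ht hIJ hJ (B := B) (c0 := c0) (f := f) (g := g) hst hi
        have e2 := bigA_row hs ht hIJ hJ (B := B) (c0 := c0) (f := f') (g := g') hst hi
        rw [← e1, ← e2, h]
      | inr j =>
        have hj : j ∈ proj2 I := mem_vertSet_inr_iff.mp hv'
        have e1 := bigA_col hs ht hIJ hJ (B := B) (c0 := c0) (f := f) (g := g) hst hj
        have e2 := bigA_col hs ht hIJ hJ (B := B) (c0 := c0) (f := f') (g := g') hst hj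
        rw [← e1, ← e2, h]
    rw [colOfG, dif_pos hv', colOfG, dif_pos hv'] at key
    have hbs := mul_left_cancel₀ hC0 key
    have := bsgn_inj hbs
    have hKeq : (⟨(sGraph I B).connectedComponentMk v,
        ⟨v, Finset.mem_coe.mpr hv', rfl⟩⟩ : {K // K ∈ compSet I B}) = K :=
      Subtype.ext hmkv
    rw [← hKeq]
    exact this

end counting2

section counting3
variable {c0 : ℕ ⊕ ℕ → ℤ}
variable (hs : 2 ≤ s) (ht : 2 ≤ t) (hIJ : I ⊆ J) (hJ : J ⊆ mgrid s t)
  (hB : ∀ p ∈ I, B p = -1 ∨ B p = 0 ∨ B p = 1)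

include hs ht hIJ hJ in
lemma ffree_card :
    (ffree s t I J).card + (I.card + fZero I) = (chioExt s t J).card := by
  set R := (proj1 I).image (fun i => (i, t)) with hR
  set C := (proj2 I).image (fun j => (s, j)) with hC
  have hIb : ∀ p ∈ I, 1 ≤ p.1 ∧ p.1 < s ∧ 1 ≤ p.2 ∧ p.2 < t := fun p hp =>
    grid_bounds hs ht (hIJ.trans hJ) hp
  have hsub : (I ∪ R) ∪ C ⊆ chioExt s t J := by
    intro p hp
    rcases Finset.mem_union.mp hp with hp' | hp'
    · rcases Finset.mem_union.mp hp' with hp'' | hp''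
      · exact mem_chioExt.mpr (Or.inr (Or.inr (Or.inr (hIJ hp''))))
      · obtain ⟨i, hi, rfl⟩ := Finset.mem_image.mp hp''
        exact mem_chioExt.mpr (Or.inr (Or.inl ⟨rfl, proj1_mono hIJ hi⟩))
    · obtain ⟨j, hj, rfl⟩ := Finset.mem_image.mp hp'
      exact mem_chioExt.mpr (Or.inr (Or.inr (Or.inl ⟨rfl, proj2_mono hIJ hj⟩)))
  have hdisj1 : Disjoint I R := by
    rw [Finset.disjoint_left]
    intro p hpI hpR
    obtain ⟨i, hi, hkl⟩ := Finset.mem_image.mp hpR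
    have := hIb p hpI
    rw [Prod.mk.injEq] at hkl
    omega
  have hdisj2 : Disjoint (I ∪ R) C := by
    rw [Finset.disjoint_left]
    intro p hpIR hpC
    obtain ⟨j, hj, hkl⟩ := Finset.mem_image.mp hpC
    rcases Finset.mem_union.mp hpIR with hp' | hp'
    · have := hIb p hp'
      rw [Prod.mk.injEq] at hkl
      omega
    · obtain ⟨i, hi, hkl'⟩ := Finset.mem_image.mp hp'
      have his : i < s := mem_proj1_lt hs ht hJ (proj1_mono hIJ hi)
      have hjt : j < t := mem_proj2_lt hs ht hJ (proj2_mono hIJ hj)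
      rw [Prod.mk.injEq] at hkl hkl'
      omega
  have hcR : R.card = (proj1 I).card := by
    apply Finset.card_image_of_injective
    intro a b hab
    rw [Prod.mk.injEq] at hab
    exact hab.1
  have hcC : C.card = (proj2 I).card := by
    apply Finset.card_image_of_injective
    intro a b hab
    rw [Prod.mk.injEq] at hab
    exact hab.2
  have hcU : ((I ∪ R) ∪ C).card = I.card + fZero I := by
    rw [Finset.card_union_of_disjoint hdisj2, Finset.card_union_of_disjoint hdisj1,
      hcR, hcC, fZero]
    ring
  have hle := Finset.card_le_card hsub
  have hsd : (ffree s t I J).card = (chioExt s t J).card - ((I ∪ R) ∪ C).card := by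
    rw [ffree, Finset.union_assoc, ← Finset.union_assoc]
    exact Finset.card_sdiff_of_subset hsub
  omega

include hs ht hIJ hJ hB in
lemma count_formula (hc0 : IsGoodCol I B c0) :
    Set.ncard {A : ℕ × ℕ → ℤ | IsSignOn (chioExt s t J) A ∧ CondensesTo s t I A B} *
        2 ^ (I.card + fZero I) = 2 ^ ((chioExt s t J).card + betaZero I B) := by
  have hst := st_mem_ffree hs ht hIJ hJ
  have hfin : (compSet I B).Finite := ((vertSet I).finite_toSet.image _)
  haveI := hfin.to_subtype
  set S := {A : ℕ × ℕ → ℤ | IsSignOn (chioExt s t J) A ∧ CondensesTo s t I A B} with hSdef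
  let T := ({p // p ∈ ffree s t I J} → Bool) × ({K // K ∈ compSet I B} → Bool)
  let Φ : T → S := fun fg =>
    ⟨bigA s t I J B hst c0 (fg.1, fg.2),
      (bigA_mem hB hs ht hIJ hJ hc0 hst fg.1 fg.2).1,
      (bigA_mem hB hs ht hIJ hJ hc0 hst fg.1 fg.2).2⟩
  have hbij : Function.Bijective Φ := by
    constructor
    · intro a b hab
      have hval : bigA s t I J B hst c0 (a.1, a.2) = bigA s t I J B hst c0 (b.1, b.2) :=
        congrArg Subtype.val hab
      obtain ⟨hf, hg⟩ := bigA_injective hs ht hIJ hJ hc0 hst hval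
      exact Prod.ext hf hg
    · rintro ⟨A, hA⟩
      have hA' : IsSignOn (chioExt s t J) A ∧ CondensesTo s t I A B := hA
      obtain ⟨f, g, hfg⟩ := bigA_surj hB hs ht hIJ hJ hc0 hst hA'.1 hA'.2
      exact ⟨(f, g), Subtype.ext hfg⟩
  have hcard1 : Nat.card T = Nat.card S := Nat.card_eq_of_bijective Φ hbij
  have hcardT : Nat.card T = 2 ^ (ffree s t I J).card * 2 ^ betaZero I B := by
    have h1 : Nat.card {p // p ∈ ffree s t I J} = (ffree s t I J).card := by
      rw [Nat.card_eq_fintype_card, Fintype.card_coe]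
    have h2 : Nat.card {K // K ∈ compSet I B} = betaZero I B := by
      rw [Nat.card_coe_set_eq]
      rfl
    have hb : Nat.card Bool = 2 := by simp [Nat.card_eq_fintype_card]
    rw [show Nat.card T = Nat.card ({p // p ∈ ffree s t I J} → Bool) *
        Nat.card ({K // K ∈ compSet I B} → Bool) from Nat.card_prod _ _,
      Nat.card_fun, Nat.card_fun, h1, h2, hb]
  have hncard : S.ncard = 2 ^ (ffree s t I J).card * 2 ^ betaZero I B := by
    rw [← Nat.card_coe_set_eq, ← hcard1, hcardT]
  rw [hncard]
  rw [← pow_add, ← pow_add]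
  congr 1
  have := ffree_card hs ht hIJ hJ
  omega

end counting3

end

end ChioAux

/-- **Graph-theoretical characterization of Chio realizability.** For `s,t ≥ 2`,
`I ⊆ J ⊆ {1,…,s-1}×{1,…,t-1}` and `B : I → {−1,0,+1}`, the following are equivalent:
(1) `(X_B, σ_B)` is balanced; (2) `Col(X_B, σ_B) ≠ ∅`; (3) some `A : J̆ → {±1}` condenses
to `B`; (4) `|{A : J̆ → {±1} : A condenses to B}| = 2^{|J̆| − |I| − f0(X_B) + β0(X_B)}`
(stated multiplied through by `2^{|I| + f0(X_B)}` to avoid subtraction of naturals). -/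
theorem chio_realizability_characterization (s t : ℕ) (hs : 2 ≤ s) (ht : 2 ≤ t)
    (I J : Finset (ℕ × ℕ)) (hIJ : I ⊆ J) (hJ : J ⊆ mgrid s t)
    (B : ℕ × ℕ → ℤ) (hB : ∀ p ∈ I, B p = -1 ∨ B p = 0 ∨ B p = 1) :
    (IsBalancedSG I B ↔ ∃ c, IsGoodCol I B c) ∧
    ((∃ c, IsGoodCol I B c) ↔
      ∃ A, IsSignOn (chioExt s t J) A ∧ CondensesTo s t I A B) ∧
    ((∃ A, IsSignOn (chioExt s t J) A ∧ CondensesTo s t I A B) ↔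
      Set.ncard {A : ℕ × ℕ → ℤ | IsSignOn (chioExt s t J) A ∧ CondensesTo s t I A B} *
          2 ^ (I.card + fZero I) =
        2 ^ ((chioExt s t J).card + betaZero I B)) := by
  refine ⟨⟨fun hbal => ChioAux.balanced_to_col hB hbal, fun h => ?_⟩,
    ⟨fun h => ?_, fun h => ?_⟩, ⟨fun h => ?_, fun h => ?_⟩⟩
  · obtain ⟨c, hc⟩ := h
    exact ChioAux.col_to_balanced hB c hc
  · obtain ⟨c, hc⟩ := h
    obtain ⟨h1, h2⟩ := ChioAux.col_to_cond hs ht hIJ hJ hB hc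
    exact ⟨_, h1, h2⟩
  · obtain ⟨A, h1, h2⟩ := h
    exact ⟨_, ChioAux.cond_to_col hIJ h1 h2⟩
  · obtain ⟨A, h1, h2⟩ := h
    exact ChioAux.count_formula hB hs ht hIJ hJ (ChioAux.cond_to_col hIJ h1 h2)
  · by_contra hne
    have hempty : {A : ℕ × ℕ → ℤ | IsSignOn (chioExt s t J) A ∧ CondensesTo s t I A B} = ∅ :=
      Set.eq_empty_iff_forall_notMem.mpr (fun A hA => hne ⟨A, hA.1, hA.2⟩)
    rw [hempty, Set.ncard_empty, zero_mul] at h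
    exact (pow_ne_zero _ (by norm_num : (2:ℕ) ≠ 0)) h.symm
end

section
/- Characterization of the image of Chio condensation: Let s,t ≥ 2 and let B : {1,…,s−1}×{1,…,t−1} → {−1,0,+1} be a fully specified matrix. Then there exists A : {1,…,s}×{1,…,t} → {−1,+1} with A(i,j)·A(s,t) − A(i,t)·A(s,j) = 2·B(i,j) for all (i,j) if and only if |{A : {1,…,s}×{1,…,t} → {−1,+1} : A condenses to B}| = 2^{1 + β0(X_B)} (equivalently, P_chio[{B}] = 2·2^{β0(X_B)}/2^{s·t}). -/
/-- The full grid `{1,…,s} × {1,…,t}` (the domain of the uncondensed sign matrices). -/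
def fullGrid (s t : ℕ) : Finset (ℕ × ℕ) := Finset.Icc 1 s ×ˢ Finset.Icc 1 t
def bval (b : Bool) : ℤ := if b then 1 else -1

lemma bval_sign (b : Bool) : bval b = 1 ∨ bval b = -1 := by cases b <;> simp [bval]

lemma bval_inj : Function.Injective bval := by
  intro a b h; cases a <;> cases b <;> simp [bval] at h ⊢

lemma bval_decide {x : ℤ} (h : x = 1 ∨ x = -1) : bval (decide (x = 1)) = x := by
  rcases h with rfl | rfl <;> simp [bval]

lemma sgnMul' {x y : ℤ} (hx : x = 1 ∨ x = -1) (hy : y = 1 ∨ y = -1) :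
    x * y = 1 ∨ x * y = -1 := by rcases hx with rfl|rfl <;> rcases hy with rfl|rfl <;> simp

lemma sgnSq' {x : ℤ} (hx : x = 1 ∨ x = -1) : x * x = 1 := by rcases hx with rfl|rfl <;> ring

lemma sgnNe' {x : ℤ} (hx : x = 1 ∨ x = -1) : x ≠ 0 := by rcases hx with rfl|rfl <;> omega

lemma key1_s7 {a c d e b : ℤ} (ha : a = 1 ∨ a = -1) (hc : c = 1 ∨ c = -1)
    (hd : d = 1 ∨ d = -1) (he : e = 1 ∨ e = -1) (hb : b = 1 ∨ b = -1)
    (h : a * c - d * e = 2 * b) : d * e = -b := by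
  rcases ha with rfl|rfl <;> rcases hc with rfl|rfl <;> rcases hd with rfl|rfl <;>
    rcases he with rfl|rfl <;> rcases hb with rfl|rfl <;> omega

lemma key2_s7 {d e d' e' b : ℤ} (hd : d = 1 ∨ d = -1) (he : e = 1 ∨ e = -1)
    (hd' : d' = 1 ∨ d' = -1) (he' : e' = 1 ∨ e' = -1)
    (h1 : d * e = -b) (h2 : d' * e' = -b) : d * d' = e * e' := by
  rcases hd with rfl|rfl <;> rcases he with rfl|rfl <;> rcases hd' with rfl|rfl <;>
    rcases he' with rfl|rfl <;> omega

lemma mem_fullGrid {s t : ℕ} {p : ℕ × ℕ} :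
    p ∈ fullGrid s t ↔ 1 ≤ p.1 ∧ p.1 ≤ s ∧ 1 ≤ p.2 ∧ p.2 ≤ t := by
  simp [fullGrid, Finset.mem_product, Finset.mem_Icc, and_assoc]

lemma mem_mgrid {s t : ℕ} {p : ℕ × ℕ} :
    p ∈ mgrid s t ↔ 1 ≤ p.1 ∧ p.1 ≤ s - 1 ∧ 1 ≤ p.2 ∧ p.2 ≤ t - 1 := by
  simp [mgrid, Finset.mem_product, Finset.mem_Icc, and_assoc]

def cset (I : Finset (ℕ × ℕ)) (B : ℕ × ℕ → ℤ) : Set ((sGraph I B).ConnectedComponent) :=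
  (sGraph I B).connectedComponentMk '' (vertSet I : Set (ℕ ⊕ ℕ))

open Classical in
noncomputable def yfun (I : Finset (ℕ × ℕ)) (B : ℕ × ℕ → ℤ) (g : cset I B → Bool)
    (v : ℕ ⊕ ℕ) : ℤ :=
  if h : (sGraph I B).connectedComponentMk v ∈ cset I B then bval (g ⟨_, h⟩) else 1

lemma yfun_sign (I : Finset (ℕ × ℕ)) (B : ℕ × ℕ → ℤ) (g : cset I B → Bool) (v : ℕ ⊕ ℕ) :
    yfun I B g v = 1 ∨ yfun I B g v = -1 := by
  unfold yfun; split
  · exact bval_sign _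
  · exact Or.inl rfl

lemma yfun_congr (I : Finset (ℕ × ℕ)) (B : ℕ × ℕ → ℤ) (g : cset I B → Bool) {u v : ℕ ⊕ ℕ}
    (h : (sGraph I B).connectedComponentMk u = (sGraph I B).connectedComponentMk v) :
    yfun I B g u = yfun I B g v := by
  unfold yfun; rw [h]

lemma yfun_pos (I : Finset (ℕ × ℕ)) (B : ℕ × ℕ → ℤ) (g : cset I B → Bool) {v : ℕ ⊕ ℕ}
    (h : (sGraph I B).connectedComponentMk v ∈ cset I B) :
    yfun I B g v = bval (g ⟨_, h⟩) := by
  unfold yfun; rw [dif_pos h]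

lemma inl_mem_vert {s t i : ℕ} (ht : 2 ≤ t) (h1 : 1 ≤ i) (h2 : i ≤ s - 1) :
    Sum.inl i ∈ vertSet (mgrid s t) := by
  apply Finset.mem_union_left
  apply Finset.mem_image_of_mem
  exact Finset.mem_image_of_mem _ (show ((i,1) : ℕ × ℕ) ∈ mgrid s t from mem_mgrid.mpr ⟨h1, h2, le_refl 1, by omega⟩)

lemma inr_mem_vert {s t j : ℕ} (hs : 2 ≤ s) (h1 : 1 ≤ j) (h2 : j ≤ t - 1) :
    Sum.inr j ∈ vertSet (mgrid s t) := by
  apply Finset.mem_union_right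
  apply Finset.mem_image_of_mem
  exact Finset.mem_image_of_mem _ (show ((1,j) : ℕ × ℕ) ∈ mgrid s t from mem_mgrid.mpr ⟨le_refl 1, by omega, h1, h2⟩)

lemma vert_cases {s t : ℕ} {v : ℕ ⊕ ℕ} (h : v ∈ vertSet (mgrid s t)) :
    (∃ i, v = Sum.inl i ∧ 1 ≤ i ∧ i ≤ s - 1) ∨ (∃ j, v = Sum.inr j ∧ 1 ≤ j ∧ j ≤ t - 1) := by
  rcases Finset.mem_union.mp h with h | h
  · obtain ⟨i, hi, rfl⟩ := Finset.mem_image.mp h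
    obtain ⟨p, hp, rfl⟩ := Finset.mem_image.mp hi
    exact Or.inl ⟨p.1, rfl, (mem_mgrid.mp hp).1, (mem_mgrid.mp hp).2.1⟩
  · obtain ⟨j, hj, rfl⟩ := Finset.mem_image.mp h
    obtain ⟨p, hp, rfl⟩ := Finset.mem_image.mp hj
    exact Or.inr ⟨p.2, rfl, (mem_mgrid.mp hp).2.2.1, (mem_mgrid.mp hp).2.2.2⟩

noncomputable def phi (s t : ℕ) (B A₀ : ℕ × ℕ → ℤ)
    (bg : Bool × (cset (mgrid s t) B → Bool)) : ℕ × ℕ → ℤ :=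
  fun p =>
    if p ∈ fullGrid s t then
      if p.2 = t then
        if p.1 = s then bval bg.1 * A₀ (s, t)
        else yfun (mgrid s t) B bg.2 (Sum.inl p.1) * A₀ p
      else if p.1 = s then yfun (mgrid s t) B bg.2 (Sum.inr p.2) * A₀ p
      else (bval bg.1 * A₀ (s, t)) *
        ((yfun (mgrid s t) B bg.2 (Sum.inl p.1) * A₀ (p.1, t)) *
          (yfun (mgrid s t) B bg.2 (Sum.inr p.2) * A₀ (s, p.2)) + 2 * B p)
    else 1

lemma phi_st {s t : ℕ} (hs : 2 ≤ s) (ht : 2 ≤ t) (B A₀ : ℕ × ℕ → ℤ)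
    (bg : Bool × (cset (mgrid s t) B → Bool)) :
    phi s t B A₀ bg (s, t) = bval bg.1 * A₀ (s, t) := by
  have hmem : ((s, t) : ℕ × ℕ) ∈ fullGrid s t :=
    mem_fullGrid.mpr ⟨by omega, le_rfl, by omega, le_rfl⟩
  simp [phi, hmem]

lemma phi_it {s t i : ℕ} (hs : 2 ≤ s) (ht : 2 ≤ t) (B A₀ : ℕ × ℕ → ℤ)
    (bg : Bool × (cset (mgrid s t) B → Bool)) (h1 : 1 ≤ i) (h2 : i ≤ s - 1) :
    phi s t B A₀ bg (i, t) = yfun (mgrid s t) B bg.2 (Sum.inl i) * A₀ (i, t) := by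
  have hmem : ((i, t) : ℕ × ℕ) ∈ fullGrid s t :=
    mem_fullGrid.mpr ⟨h1, by omega, by omega, le_rfl⟩
  have hi : i ≠ s := by omega
  simp [phi, hmem, hi]

lemma phi_sj {s t j : ℕ} (hs : 2 ≤ s) (ht : 2 ≤ t) (B A₀ : ℕ × ℕ → ℤ)
    (bg : Bool × (cset (mgrid s t) B → Bool)) (h1 : 1 ≤ j) (h2 : j ≤ t - 1) :
    phi s t B A₀ bg (s, j) = yfun (mgrid s t) B bg.2 (Sum.inr j) * A₀ (s, j) := by
  have hmem : ((s, j) : ℕ × ℕ) ∈ fullGrid s t :=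
    mem_fullGrid.mpr ⟨by omega, le_rfl, h1, by omega⟩
  have hj : j ≠ t := by omega
  simp [phi, hmem, hj]

lemma phi_in {s t : ℕ} {p : ℕ × ℕ} (hs : 2 ≤ s) (ht : 2 ≤ t) (B A₀ : ℕ × ℕ → ℤ)
    (bg : Bool × (cset (mgrid s t) B → Bool)) (hp : p ∈ mgrid s t) :
    phi s t B A₀ bg p = (bval bg.1 * A₀ (s, t)) *
      ((yfun (mgrid s t) B bg.2 (Sum.inl p.1) * A₀ (p.1, t)) *
        (yfun (mgrid s t) B bg.2 (Sum.inr p.2) * A₀ (s, p.2)) + 2 * B p) := by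
  obtain ⟨h1, h2, h3, h4⟩ := mem_mgrid.mp hp
  have hmem : p ∈ fullGrid s t := mem_fullGrid.mpr ⟨h1, by omega, h3, by omega⟩
  have hi : p.1 ≠ s := by omega
  have hj : p.2 ≠ t := by omega
  simp [phi, hmem, hi, hj]

lemma phi_out {s t : ℕ} {p : ℕ × ℕ} (B A₀ : ℕ × ℕ → ℤ)
    (bg : Bool × (cset (mgrid s t) B → Bool)) (hp : p ∉ fullGrid s t) :
    phi s t B A₀ bg p = 1 := by
  simp [phi, hp]

lemma border_constraint (s t : ℕ) (hs : 2 ≤ s) (ht : 2 ≤ t) (B : ℕ × ℕ → ℤ)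
    (hB : ∀ p ∈ mgrid s t, B p = -1 ∨ B p = 0 ∨ B p = 1)
    (A : ℕ × ℕ → ℤ) (hA : IsSignOn (fullGrid s t) A)
    (hAc : CondensesTo s t (mgrid s t) A B)
    {p : ℕ × ℕ} (hp : p ∈ mgrid s t) (hBp : B p ≠ 0) :
    A (p.1, t) * A (s, p.2) = -B p := by
  obtain ⟨h1, h2, h3, h4⟩ := mem_mgrid.mp hp
  have hit : (p.1, t) ∈ fullGrid s t := mem_fullGrid.mpr ⟨h1, by omega, by omega, le_rfl⟩
  have hsj : (s, p.2) ∈ fullGrid s t := mem_fullGrid.mpr ⟨by omega, le_rfl, h3, by omega⟩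
  have hst : ((s, t) : ℕ × ℕ) ∈ fullGrid s t :=
    mem_fullGrid.mpr ⟨by omega, le_rfl, by omega, le_rfl⟩
  have hpf : p ∈ fullGrid s t := mem_fullGrid.mpr ⟨h1, by omega, h3, by omega⟩
  have hb : B p = 1 ∨ B p = -1 := by rcases hB p hp with h | h | h <;> tauto
  exact key1_s7 (hA.1 p hpf) (hA.1 _ hst) (hA.1 _ hit) (hA.1 _ hsj) hb (hAc p hp)

def yAf (s t : ℕ) (A A₀ : ℕ × ℕ → ℤ) : ℕ ⊕ ℕ → ℤ
  | Sum.inl i => A (i, t) * A₀ (i, t)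
  | Sum.inr j => A (s, j) * A₀ (s, j)

lemma yAf_sign {s t : ℕ} {A A₀ : ℕ × ℕ → ℤ} (hA : IsSignOn (fullGrid s t) A)
    (h₀ : IsSignOn (fullGrid s t) A₀) (v : ℕ ⊕ ℕ) :
    yAf s t A A₀ v = 1 ∨ yAf s t A A₀ v = -1 := by
  cases v with
  | inl i =>
    by_cases h : ((i, t) : ℕ × ℕ) ∈ fullGrid s t
    · exact sgnMul' (hA.1 _ h) (h₀.1 _ h)
    · simp [yAf, hA.2 _ h, h₀.2 _ h]
  | inr j =>
    by_cases h : ((s, j) : ℕ × ℕ) ∈ fullGrid s t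
    · exact sgnMul' (hA.1 _ h) (h₀.1 _ h)
    · simp [yAf, hA.2 _ h, h₀.2 _ h]

lemma yAf_adj (s t : ℕ) (hs : 2 ≤ s) (ht : 2 ≤ t) (B : ℕ × ℕ → ℤ)
    (hB : ∀ p ∈ mgrid s t, B p = -1 ∨ B p = 0 ∨ B p = 1)
    (A A₀ : ℕ × ℕ → ℤ) (hA : IsSignOn (fullGrid s t) A)
    (hAc : CondensesTo s t (mgrid s t) A B)
    (h₀ : IsSignOn (fullGrid s t) A₀) (h₀c : CondensesTo s t (mgrid s t) A₀ B)
    {u v : ℕ ⊕ ℕ} (h : (sGraph (mgrid s t) B).Adj u v) :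
    yAf s t A A₀ u = yAf s t A A₀ v := by
  have key : ∀ p ∈ mgrid s t, B p ≠ 0 →
      yAf s t A A₀ (Sum.inl p.1) = yAf s t A A₀ (Sum.inr p.2) := by
    intro p hp hBp
    obtain ⟨h1, h2, h3, h4⟩ := mem_mgrid.mp hp
    have hit : (p.1, t) ∈ fullGrid s t := mem_fullGrid.mpr ⟨h1, by omega, by omega, le_rfl⟩
    have hsj : (s, p.2) ∈ fullGrid s t := mem_fullGrid.mpr ⟨by omega, le_rfl, h3, by omega⟩
    show A (p.1, t) * A₀ (p.1, t) = A (s, p.2) * A₀ (s, p.2)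
    exact key2_s7 (hA.1 _ hit) (hA.1 _ hsj) (h₀.1 _ hit) (h₀.1 _ hsj)
      (border_constraint s t hs ht B hB A hA hAc hp hBp)
      (border_constraint s t hs ht B hB A₀ h₀ h₀c hp hBp)
  obtain ⟨p, hp, hBp, rfl, rfl⟩ | ⟨p, hp, hBp, rfl, rfl⟩ := h
  · exact key p hp hBp
  · exact (key p hp hBp).symm

lemma yAf_walk (s t : ℕ) (hs : 2 ≤ s) (ht : 2 ≤ t) (B : ℕ × ℕ → ℤ)
    (hB : ∀ p ∈ mgrid s t, B p = -1 ∨ B p = 0 ∨ B p = 1)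
    (A A₀ : ℕ × ℕ → ℤ) (hA : IsSignOn (fullGrid s t) A)
    (hAc : CondensesTo s t (mgrid s t) A B)
    (h₀ : IsSignOn (fullGrid s t) A₀) (h₀c : CondensesTo s t (mgrid s t) A₀ B)
    {u v : ℕ ⊕ ℕ} (w : (sGraph (mgrid s t) B).Walk u v) :
    yAf s t A A₀ u = yAf s t A A₀ v := by
  induction w with
  | nil => rfl
  | cons h _ ih => exact (yAf_adj s t hs ht B hB A A₀ hA hAc h₀ h₀c h).trans ih

lemma phi_mem (s t : ℕ) (hs : 2 ≤ s) (ht : 2 ≤ t) (B : ℕ × ℕ → ℤ)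
    (hB : ∀ p ∈ mgrid s t, B p = -1 ∨ B p = 0 ∨ B p = 1)
    (A₀ : ℕ × ℕ → ℤ) (h₀ : IsSignOn (fullGrid s t) A₀)
    (h₀c : CondensesTo s t (mgrid s t) A₀ B)
    (bg : Bool × (cset (mgrid s t) B → Bool)) :
    IsSignOn (fullGrid s t) (phi s t B A₀ bg) ∧
      CondensesTo s t (mgrid s t) (phi s t B A₀ bg) B := by
  have hst : ((s, t) : ℕ × ℕ) ∈ fullGrid s t :=
    mem_fullGrid.mpr ⟨by omega, le_rfl, by omega, le_rfl⟩
  have hA₀st := h₀.1 _ hst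
  have hAstsgn : bval bg.1 * A₀ (s, t) = 1 ∨ bval bg.1 * A₀ (s, t) = -1 :=
    sgnMul' (bval_sign _) hA₀st
  have hin : ∀ p ∈ mgrid s t, phi s t B A₀ bg p = 1 ∨ phi s t B A₀ bg p = -1 := by
    intro p hp
    obtain ⟨h1, h2, h3, h4⟩ := mem_mgrid.mp hp
    have hpf : p ∈ fullGrid s t := mem_fullGrid.mpr ⟨h1, by omega, h3, by omega⟩
    have hit : (p.1, t) ∈ fullGrid s t := mem_fullGrid.mpr ⟨h1, by omega, by omega, le_rfl⟩
    have hsj : (s, p.2) ∈ fullGrid s t := mem_fullGrid.mpr ⟨by omega, le_rfl, h3, by omega⟩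
    rw [phi_in hs ht B A₀ bg hp]
    by_cases hB0 : B p = 0
    · simpa [hB0] using sgnMul' hAstsgn
        (sgnMul' (sgnMul' (yfun_sign (mgrid s t) B bg.2 (Sum.inl p.1)) (h₀.1 _ hit))
          (sgnMul' (yfun_sign (mgrid s t) B bg.2 (Sum.inr p.2)) (h₀.1 _ hsj)))
    · have hadj : (sGraph (mgrid s t) B).Adj (Sum.inl p.1) (Sum.inr p.2) :=
        Or.inl ⟨p, hp, hB0, rfl, rfl⟩
      have hyy : yfun (mgrid s t) B bg.2 (Sum.inl p.1) *
          yfun (mgrid s t) B bg.2 (Sum.inr p.2) = 1 := by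
        rw [yfun_congr (mgrid s t) B bg.2
          (SimpleGraph.ConnectedComponent.sound hadj.reachable)]
        exact sgnSq' (yfun_sign (mgrid s t) B bg.2 (Sum.inr p.2))
      have e1 : A₀ (p.1, t) * A₀ (s, p.2) + 2 * B p = A₀ p * A₀ (s, t) := by
        linarith [h₀c p hp]
      have e2 : (yfun (mgrid s t) B bg.2 (Sum.inl p.1) * A₀ (p.1, t)) *
          (yfun (mgrid s t) B bg.2 (Sum.inr p.2) * A₀ (s, p.2)) + 2 * B p =
          A₀ p * A₀ (s, t) := by
        linear_combination e1 + (A₀ (p.1, t) * A₀ (s, p.2)) * hyy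
      rw [e2]
      exact sgnMul' hAstsgn (sgnMul' (h₀.1 p hpf) hA₀st)
  constructor
  · constructor
    · rintro ⟨i, j⟩ hp
      obtain ⟨h1, h2, h3, h4⟩ := mem_fullGrid.mp hp
      by_cases hj : j = t <;> by_cases hi : i = s
      · subst hi hj; rw [phi_st hs ht]; exact hAstsgn
      · subst hj
        rw [phi_it hs ht B A₀ bg h1 (by omega)]
        exact sgnMul' (yfun_sign _ _ _ _) (h₀.1 _ hp)
      · subst hi
        rw [phi_sj hs ht B A₀ bg h3 (by omega)]
        exact sgnMul' (yfun_sign _ _ _ _) (h₀.1 _ hp)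
      · exact hin (i, j) (mem_mgrid.mpr ⟨h1, by omega, h3, by omega⟩)
    · intro p hp
      exact phi_out B A₀ bg hp
  · intro p hp
    obtain ⟨h1, h2, h3, h4⟩ := mem_mgrid.mp hp
    rw [phi_in hs ht B A₀ bg hp, phi_st hs ht, phi_it hs ht B A₀ bg h1 h2,
      phi_sj hs ht B A₀ bg h3 h4]
    linear_combination ((yfun (mgrid s t) B bg.2 (Sum.inl p.1) * A₀ (p.1, t)) *
      (yfun (mgrid s t) B bg.2 (Sum.inr p.2) * A₀ (s, p.2)) + 2 * B p) * sgnSq' hAstsgn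

lemma phi_surj (s t : ℕ) (hs : 2 ≤ s) (ht : 2 ≤ t) (B : ℕ × ℕ → ℤ)
    (hB : ∀ p ∈ mgrid s t, B p = -1 ∨ B p = 0 ∨ B p = 1)
    (A₀ : ℕ × ℕ → ℤ) (h₀ : IsSignOn (fullGrid s t) A₀)
    (h₀c : CondensesTo s t (mgrid s t) A₀ B)
    (A : ℕ × ℕ → ℤ) (hA : IsSignOn (fullGrid s t) A)
    (hAc : CondensesTo s t (mgrid s t) A B) :
    ∃ bg, phi s t B A₀ bg = A := by
  classical
  have hwalk : ∀ (u v : ℕ ⊕ ℕ) (w : (sGraph (mgrid s t) B).Walk u v), w.IsPath →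
      yAf s t A A₀ u = yAf s t A A₀ v :=
    fun u v w _ => yAf_walk s t hs ht B hB A A₀ hA hAc h₀ h₀c w
  set Y := SimpleGraph.ConnectedComponent.lift (yAf s t A A₀) hwalk with hYdef
  have hY : ∀ v, Y ((sGraph (mgrid s t) B).connectedComponentMk v) = yAf s t A A₀ v :=
    fun v => SimpleGraph.ConnectedComponent.lift_mk
  have hYsgn : ∀ c, Y c = 1 ∨ Y c = -1 := by
    refine SimpleGraph.ConnectedComponent.ind ?_
    intro v; rw [hY]; exact yAf_sign hA h₀ v
  refine ⟨(decide (A (s, t) * A₀ (s, t) = 1), fun c => decide (Y c.1 = 1)), ?_⟩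
  have hst : ((s, t) : ℕ × ℕ) ∈ fullGrid s t :=
    mem_fullGrid.mpr ⟨by omega, le_rfl, by omega, le_rfl⟩
  have hA₀st := h₀.1 _ hst
  have hAst := hA.1 _ hst
  have hb : bval (decide (A (s, t) * A₀ (s, t) = 1)) = A (s, t) * A₀ (s, t) :=
    bval_decide (sgnMul' hAst hA₀st)
  have estA : bval (decide (A (s, t) * A₀ (s, t) = 1)) * A₀ (s, t) = A (s, t) := by
    rw [hb]; linear_combination A (s, t) * sgnSq' hA₀st
  have hyv : ∀ v ∈ vertSet (mgrid s t),
      yfun (mgrid s t) B (fun c => decide (Y c.1 = 1)) v = yAf s t A A₀ v := by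
    intro v hv
    have hc : (sGraph (mgrid s t) B).connectedComponentMk v ∈ cset (mgrid s t) B :=
      ⟨v, Finset.mem_coe.mpr hv, rfl⟩
    rw [yfun_pos _ _ _ hc]
    show bval (decide (Y _ = 1)) = _
    rw [bval_decide (hYsgn _)]
    exact hY v
  funext p
  by_cases hpf : p ∈ fullGrid s t
  · obtain ⟨i, j⟩ := p
    obtain ⟨h1, h2, h3, h4⟩ := mem_fullGrid.mp hpf
    by_cases hj : j = t <;> by_cases hi : i = s
    · subst hi hj; rw [phi_st hs ht]; exact estA
    · subst j
      rw [phi_it hs ht B A₀ _ h1 (by omega), hyv _ (inl_mem_vert ht h1 (by omega))]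
      show A (i, t) * A₀ (i, t) * A₀ (i, t) = A (i, t)
      linear_combination A (i, t) * sgnSq' (h₀.1 _ hpf)
    · subst i
      rw [phi_sj hs ht B A₀ _ h3 (by omega), hyv _ (inr_mem_vert hs h3 (by omega))]
      show A (s, j) * A₀ (s, j) * A₀ (s, j) = A (s, j)
      linear_combination A (s, j) * sgnSq' (h₀.1 _ hpf)
    · have hpm : ((i, j) : ℕ × ℕ) ∈ mgrid s t :=
        mem_mgrid.mpr ⟨h1, by omega, h3, by omega⟩
      have hitf : ((i, t) : ℕ × ℕ) ∈ fullGrid s t :=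
        mem_fullGrid.mpr ⟨h1, by omega, by omega, le_rfl⟩
      have hsjf : ((s, j) : ℕ × ℕ) ∈ fullGrid s t :=
        mem_fullGrid.mpr ⟨by omega, le_rfl, h3, by omega⟩
      rw [phi_in hs ht B A₀ _ hpm]
      rw [hyv _ (inl_mem_vert ht h1 (by omega)), hyv _ (inr_mem_vert hs h3 (by omega))]
      rw [estA]
      have eit : yAf s t A A₀ (Sum.inl i) * A₀ (i, t) = A (i, t) := by
        show A (i, t) * A₀ (i, t) * A₀ (i, t) = A (i, t)
        linear_combination A (i, t) * sgnSq' (h₀.1 _ hitf)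
      have esj : yAf s t A A₀ (Sum.inr j) * A₀ (s, j) = A (s, j) := by
        show A (s, j) * A₀ (s, j) * A₀ (s, j) = A (s, j)
        linear_combination A (s, j) * sgnSq' (h₀.1 _ hsjf)
      rw [eit, esj]
      have h := hAc (i, j) hpm
      have hsq := sgnSq' hAst
      linear_combination A (i, j) * hsq - A (s, t) * h
  · rw [phi_out B A₀ _ hpf]
    exact (hA.2 p hpf).symm

lemma phi_inj (s t : ℕ) (hs : 2 ≤ s) (ht : 2 ≤ t) (B : ℕ × ℕ → ℤ)
    (A₀ : ℕ × ℕ → ℤ) (h₀ : IsSignOn (fullGrid s t) A₀) :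
    Function.Injective (phi s t B A₀) := by
  intro bg bg' h
  have hst : ((s, t) : ℕ × ℕ) ∈ fullGrid s t :=
    mem_fullGrid.mpr ⟨by omega, le_rfl, by omega, le_rfl⟩
  have hA₀st := h₀.1 _ hst
  have h1 : bg.1 = bg'.1 := by
    have heq := congrFun h (s, t)
    rw [phi_st hs ht, phi_st hs ht] at heq
    exact bval_inj (mul_right_cancel₀ (sgnNe' hA₀st) heq)
  have h2 : bg.2 = bg'.2 := by
    funext c
    obtain ⟨c, hc⟩ := c
    obtain ⟨v, hv, hcv⟩ := hc
    rcases vert_cases (Finset.mem_coe.mp hv) with ⟨i, rfl, hi1, hi2⟩ | ⟨j, rfl, hj1, hj2⟩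
    · have hmem : (sGraph (mgrid s t) B).connectedComponentMk (Sum.inl i) ∈
          cset (mgrid s t) B := ⟨_, hv, rfl⟩
      have hit : ((i, t) : ℕ × ℕ) ∈ fullGrid s t :=
        mem_fullGrid.mpr ⟨hi1, by omega, by omega, le_rfl⟩
      have heq := congrFun h (i, t)
      rw [phi_it hs ht B A₀ _ hi1 hi2, phi_it hs ht B A₀ _ hi1 hi2] at heq
      have hy := mul_right_cancel₀ (sgnNe' (h₀.1 _ hit)) heq
      rw [yfun_pos _ _ _ hmem, yfun_pos _ _ _ hmem] at hy
      have hg := bval_inj hy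
      subst hcv
      exact hg
    · have hmem : (sGraph (mgrid s t) B).connectedComponentMk (Sum.inr j) ∈
          cset (mgrid s t) B := ⟨_, hv, rfl⟩
      have hsj : ((s, j) : ℕ × ℕ) ∈ fullGrid s t :=
        mem_fullGrid.mpr ⟨by omega, le_rfl, hj1, by omega⟩
      have heq := congrFun h (s, j)
      rw [phi_sj hs ht B A₀ _ hj1 hj2, phi_sj hs ht B A₀ _ hj1 hj2] at heq
      have hy := mul_right_cancel₀ (sgnNe' (h₀.1 _ hsj)) heq
      rw [yfun_pos _ _ _ hmem, yfun_pos _ _ _ hmem] at hy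
      have hg := bval_inj hy
      subst hcv
      exact hg
  exact Prod.ext h1 h2

lemma chio_count (s t : ℕ) (hs : 2 ≤ s) (ht : 2 ≤ t) (B : ℕ × ℕ → ℤ)
    (hB : ∀ p ∈ mgrid s t, B p = -1 ∨ B p = 0 ∨ B p = 1)
    (A₀ : ℕ × ℕ → ℤ) (h₀ : IsSignOn (fullGrid s t) A₀)
    (h₀c : CondensesTo s t (mgrid s t) A₀ B) :
    Set.ncard {A : ℕ × ℕ → ℤ |
        IsSignOn (fullGrid s t) A ∧ CondensesTo s t (mgrid s t) A B}
      = 2 ^ (1 + betaZero (mgrid s t) B) := by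
  have hSeq : {A : ℕ × ℕ → ℤ |
      IsSignOn (fullGrid s t) A ∧ CondensesTo s t (mgrid s t) A B}
      = Set.range (phi s t B A₀) := by
    ext A
    constructor
    · rintro ⟨hA, hAc⟩
      exact phi_surj s t hs ht B hB A₀ h₀ h₀c A hA hAc
    · rintro ⟨bg, rfl⟩
      exact phi_mem s t hs ht B hB A₀ h₀ h₀c bg
  rw [hSeq, ← Nat.card_coe_set_eq,
    Nat.card_range_of_injective (phi_inj s t hs ht B A₀ h₀), Nat.card_prod]
  have hfin : (cset (mgrid s t) B).Finite :=
    ((vertSet (mgrid s t)).finite_toSet.image _)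
  haveI := hfin.to_subtype
  rw [Nat.card_fun]
  have hb : Nat.card Bool = 2 := by simp [Nat.card_eq_fintype_card]
  have hc : Nat.card (cset (mgrid s t) B) = betaZero (mgrid s t) B :=
    Nat.card_coe_set_eq _
  rw [hb, hc, pow_add, pow_one]

/-- **Characterization of the image of Chio condensation.** For `s,t ≥ 2` and a fully
specified `B : {1,…,s-1}×{1,…,t-1} → {−1,0,+1}`: some `A : {1,…,s}×{1,…,t} → {±1}`
condenses to `B` if and only if
`|{A : {1,…,s}×{1,…,t} → {±1} : A condenses to B}| = 2^{1 + β0(X_B)}`. -/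
theorem chio_image_characterization (s t : ℕ) (hs : 2 ≤ s) (ht : 2 ≤ t)
    (B : ℕ × ℕ → ℤ) (hB : ∀ p ∈ mgrid s t, B p = -1 ∨ B p = 0 ∨ B p = 1) :
    (∃ A : ℕ × ℕ → ℤ, IsSignOn (fullGrid s t) A ∧ CondensesTo s t (mgrid s t) A B) ↔
      Set.ncard {A : ℕ × ℕ → ℤ |
          IsSignOn (fullGrid s t) A ∧ CondensesTo s t (mgrid s t) A B} =
        2 ^ (1 + betaZero (mgrid s t) B) := by
  constructor
  · rintro ⟨A₀, h₀, h₀c⟩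
    exact chio_count s t hs ht B hB A₀ h₀ h₀c
  · intro h
    have hne : Set.ncard {A : ℕ × ℕ → ℤ |
        IsSignOn (fullGrid s t) A ∧ CondensesTo s t (mgrid s t) A B} ≠ 0 := by
      rw [h]; positivity
    obtain ⟨A, hA⟩ := Set.nonempty_of_ncard_ne_zero hne
    exact ⟨A, hA⟩
end

section
/- Forgetting signs yields the uniform distribution: Let s,t ≥ 2, let I ⊆ {1,…,s−1}×{1,…,t−1}, and let B : I → {0,1}. Then |{A : Ĭ → {−1,+1} : |A(i,j)·A(s,t) − A(i,t)·A(s,j)| = 2·B(i,j) for all (i,j) ∈ I}| = 2^{|Ĭ| − |I|}, where Ĭ is the Chio extension of I. Equivalently, the map sending A to the {0,1}-pattern of absolute values ½|A(i,j)·A(s,t) − A(i,t)·A(s,j)| on I pushes the uniform measure on {−1,+1}^{Ĭ} forward to the uniform measure on {0,1}^I. -/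
/-- The "border" part of the Chio extension. -/
def chioF (s t : ℕ) (J : Finset (ℕ × ℕ)) : Finset (ℕ × ℕ) :=
  insert (s, t) (((J.image Prod.fst).image fun i => (i, t)) ∪
    ((J.image Prod.snd).image fun j => (s, j)))

def sgn (b : Bool) : ℤ := if b then 1 else -1

lemma sgn_pm (b : Bool) : sgn b = 1 ∨ sgn b = -1 := by cases b <;> simp [sgn]

lemma chio_union (s t : ℕ) (J : Finset (ℕ × ℕ)) :
    chioExt s t J = chioF s t J ∪ J := by
  simp [chioExt, chioF, Finset.insert_union, Finset.union_assoc]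

lemma chio_disj (s t : ℕ) (hs : 2 ≤ s) (ht : 2 ≤ t) (I : Finset (ℕ × ℕ))
    (hI : I ⊆ mgrid s t) : Disjoint (chioF s t I) I := by
  rw [Finset.disjoint_right]
  intro p hp hpF
  have h1 := hI hp
  simp only [mgrid, Finset.mem_product, Finset.mem_Icc] at h1
  have hp1 : p.1 < s := by omega
  have hp2 : p.2 < t := by omega
  simp only [chioF, Finset.mem_insert, Finset.mem_union, Finset.mem_image] at hpF
  rcases hpF with h | ⟨i, hi, h⟩ | ⟨j, hj, h⟩
  · rw [Prod.ext_iff] at h; omega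
  · rw [Prod.ext_iff] at h; simp at h; omega
  · rw [Prod.ext_iff] at h; simp at h; omega

/-- **Forgetting signs yields the uniform distribution.** For `s,t ≥ 2`,
`I ⊆ {1,…,s-1}×{1,…,t-1}` and `B : I → {0,1}`, the number of `A : Ĭ → {±1}` with
`|A(i,j)·A(s,t) − A(i,t)·A(s,j)| = 2·B(i,j)` for all `(i,j) ∈ I` equals `2^{|Ĭ| − |I|}`
(stated multiplied through by `2^{|I|}`); equivalently, taking the `{0,1}`-pattern of
absolute values pushes the uniform measure on `{±1}^{Ĭ}` forward to the uniform measure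
on `{0,1}^I`. -/
theorem abs_chio_pattern_uniform (s t : ℕ) (hs : 2 ≤ s) (ht : 2 ≤ t)
    (I : Finset (ℕ × ℕ)) (hI : I ⊆ mgrid s t)
    (B : ℕ × ℕ → ℤ) (hB : ∀ p ∈ I, B p = 0 ∨ B p = 1) :
    Set.ncard {A : ℕ × ℕ → ℤ | IsSignOn (chioExt s t I) A ∧
        ∀ p ∈ I, |A p * A (s, t) - A (p.1, t) * A (s, p.2)| = 2 * B p} *
      2 ^ I.card = 2 ^ (chioExt s t I).card := by
  set F := chioF s t I with hF
  have hunion := chio_union s t I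
  have hdisj := chio_disj s t hs ht I hI
  have hst : (s, t) ∈ F := Finset.mem_insert_self _ _
  have hrow : ∀ p ∈ I, ((p.1 : ℕ), t) ∈ F := by
    intro p hp
    simp only [hF, chioF, Finset.mem_insert, Finset.mem_union, Finset.mem_image]
    exact Or.inr (Or.inl ⟨p.1, ⟨p, hp, rfl⟩, rfl⟩)
  have hcol : ∀ p ∈ I, (s, (p.2 : ℕ)) ∈ F := by
    intro p hp
    simp only [hF, chioF, Finset.mem_insert, Finset.mem_union, Finset.mem_image]
    exact Or.inr (Or.inr ⟨p.2, ⟨p, hp, rfl⟩, rfl⟩)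
  have hmemExt : ∀ p, p ∈ chioExt s t I ↔ p ∈ F ∨ p ∈ I := by
    intro p; rw [hunion]; exact Finset.mem_union
  set S := {A : ℕ × ℕ → ℤ | IsSignOn (chioExt s t I) A ∧
        ∀ p ∈ I, |A p * A (s, t) - A (p.1, t) * A (s, p.2)| = 2 * B p} with hS
  -- extension map
  set ext : ({x // x ∈ F} → Bool) → (ℕ × ℕ → ℤ) := fun f p =>
    if h : p ∈ F then sgn (f ⟨p, h⟩)
    else if hp : p ∈ I then
      (1 - 2 * B p) * (sgn (f ⟨(p.1, t), hrow p hp⟩) * sgn (f ⟨(s, p.2), hcol p hp⟩) *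
        sgn (f ⟨(s, t), hst⟩))
    else 1 with hext
  have hsignmul : ∀ a b : ℤ, (a = 1 ∨ a = -1) → (b = 1 ∨ b = -1) →
      (a * b = 1 ∨ a * b = -1) := by
    rintro a b (rfl | rfl) (rfl | rfl) <;> norm_num
  have hextmem : ∀ f, ext f ∈ S := by
    intro f
    have hval : ∀ p ∈ chioExt s t I, ext f p = 1 ∨ ext f p = -1 := by
      intro p hp
      rcases (hmemExt p).1 hp with h | h
      · simp only [hext, dif_pos h]; exact sgn_pm _
      · have hnF : p ∉ F := Finset.disjoint_right.1 hdisj h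
        simp only [hext, dif_neg hnF, dif_pos h]
        have hb : (1 - 2 * B p = 1 ∨ 1 - 2 * B p = -1) := by
          rcases hB p h with hb | hb <;> rw [hb] <;> norm_num
        exact hsignmul _ _ hb (hsignmul _ _ (hsignmul _ _ (sgn_pm _) (sgn_pm _)) (sgn_pm _))
    refine ⟨⟨hval, ?_⟩, ?_⟩
    · intro p hp
      rw [hmemExt] at hp
      push_neg at hp
      simp only [hext, dif_neg hp.1, dif_neg hp.2]
    · intro p hp
      have hnF : p ∉ F := Finset.disjoint_right.1 hdisj hp
      have e1 : ext f p = (1 - 2 * B p) * (sgn (f ⟨(p.1, t), hrow p hp⟩) *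
          sgn (f ⟨(s, p.2), hcol p hp⟩) * sgn (f ⟨(s, t), hst⟩)) := by
        simp only [hext, dif_neg hnF, dif_pos hp]
      have e2 : ext f (s, t) = sgn (f ⟨(s, t), hst⟩) := by
        simp only [hext, dif_pos hst]
      have e3 : ext f (p.1, t) = sgn (f ⟨(p.1, t), hrow p hp⟩) := by
        simp only [hext, dif_pos (hrow p hp)]
      have e4 : ext f (s, p.2) = sgn (f ⟨(s, p.2), hcol p hp⟩) := by
        simp only [hext, dif_pos (hcol p hp)]
      rw [e1, e2, e3, e4]
      rcases sgn_pm (f ⟨(p.1, t), hrow p hp⟩) with hx | hx <;>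
        rcases sgn_pm (f ⟨(s, p.2), hcol p hp⟩) with hy | hy <;>
          rcases sgn_pm (f ⟨(s, t), hst⟩) with hz | hz <;>
            rcases hB p hp with hb | hb <;>
              rw [hx, hy, hz, hb] <;> norm_num
  have e : S ≃ ({x // x ∈ F} → Bool) :=
    { toFun := fun A => fun q => decide ((A : ℕ × ℕ → ℤ) q.1 = 1)
      invFun := fun f => ⟨ext f, hextmem f⟩
      left_inv := by
        rintro ⟨A, hA1, hA2⟩
        ext p
        simp only
        have hsd : ∀ q ∈ chioExt s t I, sgn (decide (A q = 1)) = A q := by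
          intro q hq
          rcases hA1.1 q hq with h | h <;> simp [sgn, h]
        by_cases hpF : p ∈ F
        · simp only [hext, dif_pos hpF]
          exact hsd p ((hmemExt p).2 (Or.inl hpF))
        · by_cases hp : p ∈ I
          · simp only [hext, dif_neg hpF, dif_pos hp]
            rw [hsd _ ((hmemExt _).2 (Or.inl (hrow p hp))),
              hsd _ ((hmemExt _).2 (Or.inl (hcol p hp))),
              hsd _ ((hmemExt _).2 (Or.inl hst))]
            have hcond := hA2 p hp
            have h1 := hA1.1 p ((hmemExt p).2 (Or.inr hp))
            have h2 := hA1.1 _ ((hmemExt _).2 (Or.inl (hrow p hp)))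
            have h3 := hA1.1 _ ((hmemExt _).2 (Or.inl (hcol p hp)))
            have h4 := hA1.1 _ ((hmemExt _).2 (Or.inl hst))
            rcases h1 with h1 | h1 <;> rcases h2 with h2 | h2 <;>
              rcases h3 with h3 | h3 <;> rcases h4 with h4 | h4 <;>
                rcases hB p hp with hb | hb <;>
                  rw [h1, h2, h3, h4, hb] at hcond ⊢ <;>
                    (try norm_num at hcond) <;> (try norm_num)
          · simp only [hext, dif_neg hpF, dif_neg hp]
            exact (hA1.2 p (fun hc => ((hmemExt p).1 hc).elim hpF hp)).symm
      right_inv := by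
        intro f
        funext q
        simp only [hext, dif_pos q.2]
        cases hq : f q <;> simp [sgn, hq] }
  have hcardS : Set.ncard S = 2 ^ F.card := by
    rw [← Nat.card_coe_set_eq, Nat.card_congr e, Nat.card_eq_fintype_card]
    simp [Fintype.card_fun]
  rw [hcardS, ← pow_add, hunion, Finset.card_union_of_disjoint hdisj, hF]
end

section
/- The lazy coin flip measure is an averaged Chio measure: Let n ≥ 2, let ∅ ⊆ I ⊆ {1,…,n−1}², and let B : I → {−1,0,+1}. Then (1/2)^{|I| + |Supp(B)|} = (1/2)^{|Supp(B)|} · Σ_{B̃} P_chio[{B̃}], where the sum ranges over all B̃ : I → {−1,0,+1} with Supp(B̃) = Supp(B), and P_chio[{B̃}] := 2^{−|Ĭ|}·|{A : Ĭ → {−1,+1} : A condenses to B̃}|. Equivalently, Σ_{B̃ : Supp(B̃) = Supp(B)} P_chio[{B̃}] = (1/2)^{|I|}. -/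
/-- The Chio measure of the singleton event `{B̃}` (all entries of `I` specified):
`P_chio[{B̃}] = 2^{−|Ĭ|} · |{A : Ĭ → {±1} : A condenses to B̃}|`. -/
noncomputable def PchioSingle (n : ℕ) (I : Finset (ℕ × ℕ)) (Bt : ℕ × ℕ → ℤ) : ℚ :=
  (Set.ncard {A : ℕ × ℕ → ℤ | IsSignOn (chioExt n n I) A ∧ CondensesTo n n I A Bt} : ℚ) /
    2 ^ (chioExt n n I).card

lemma signOn_card (E : Finset (ℕ × ℕ)) :
    {A : ℕ × ℕ → ℤ | IsSignOn E A}.Finite ∧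
      Set.ncard {A : ℕ × ℕ → ℤ | IsSignOn E A} = 2 ^ E.card := by
  induction E using Finset.induction_on with
  | empty =>
      have h : {A : ℕ × ℕ → ℤ | IsSignOn ∅ A} = {fun _ => 1} := by
        ext A
        simp only [Set.mem_setOf_eq, Set.mem_singleton_iff, IsSignOn]
        constructor
        · rintro ⟨-, h2⟩; funext p; exact h2 p (by simp)
        · rintro rfl; exact ⟨by simp, fun _ _ => rfl⟩
      rw [h]; simp
  | @insert a E ha ih =>
      obtain ⟨ihfin, ihcard⟩ := ih
      set S := {A : ℕ × ℕ → ℤ | IsSignOn E A} with hS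
      have hval : ∀ A ∈ S, A a = 1 := fun A hA => hA.2 a ha
      have hsplit : {A : ℕ × ℕ → ℤ | IsSignOn (insert a E) A}
          = S ∪ (fun A => Function.update A a (-1)) '' S := by
        ext A
        simp only [Set.mem_setOf_eq, Set.mem_union, Set.mem_image]
        constructor
        · rintro ⟨h1, h2⟩
          have hA' : Function.update A a 1 ∈ S := by
            constructor
            · intro p hp
              have hpa : p ≠ a := fun h => ha (h ▸ hp)
              rw [Function.update_of_ne hpa]
              exact h1 p (Finset.mem_insert_of_mem hp)
            · intro p hp
              by_cases hpa : p = a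
              · subst hpa; simp
              · rw [Function.update_of_ne hpa]
                exact h2 p (by simp [hpa, hp])
          rcases h1 a (Finset.mem_insert_self a E) with h | h
          · left
            have : Function.update A a 1 = A := by
              funext p; by_cases hpa : p = a
              · subst hpa; simp [h]
              · rw [Function.update_of_ne hpa]
            rwa [this] at hA'
          · right
            refine ⟨Function.update A a 1, hA', ?_⟩
            funext p; by_cases hpa : p = a
            · subst hpa; simp [h]
            · simp [Function.update_of_ne hpa]
        · rintro (hA | ⟨g, hg, rfl⟩)
          · refine ⟨fun p hp => ?_, fun p hp => hA.2 p fun h => hp (Finset.mem_insert_of_mem h)⟩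
            rcases Finset.mem_insert.1 hp with rfl | hp
            · exact Or.inl (hval A hA)
            · exact hA.1 p hp
          · constructor
            · intro p hp
              rcases Finset.mem_insert.1 hp with rfl | hp
              · simp
              · have hpa : p ≠ a := fun h => ha (h ▸ hp)
                rw [Function.update_of_ne hpa]; exact hg.1 p hp
            · intro p hp
              have hpa : p ≠ a := fun h => hp (h ▸ Finset.mem_insert_self a E)
              rw [Function.update_of_ne hpa]
              exact hg.2 p fun h => hp (Finset.mem_insert_of_mem h)
      have hinj : Set.InjOn (fun A => Function.update A a (-1)) S := by
        intro A hA A' hA' h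
        funext p
        by_cases hpa : p = a
        · subst hpa; rw [hval A hA, hval A' hA']
        · have := congrFun h p
          simpa [Function.update_of_ne hpa] using this
      have hdisj : Disjoint S ((fun A => Function.update A a (-1)) '' S) := by
        rw [Set.disjoint_left]
        rintro A hA ⟨g, hg, rfl⟩
        have h1 : Function.update g a (-1) a = (1 : ℤ) := hval _ hA
        simp at h1
      constructor
      · rw [hsplit]; exact ihfin.union (ihfin.image _)
      · rw [hsplit, Set.ncard_union_eq hdisj ihfin (ihfin.image _),
          Set.ncard_image_of_injOn hinj, ihcard, Finset.card_insert_of_notMem ha]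
        ring

section ChioFacts

variable {n : ℕ} {I : Finset (ℕ × ℕ)}

lemma subset_chio : I ⊆ chioExt n n I := fun _ hp =>
  Finset.mem_insert_of_mem (Finset.mem_union_right _ hp)

lemma corner_mem_chio : (n, n) ∈ chioExt n n I := Finset.mem_insert_self _ _

lemma row_mem_chio_s9 {p : ℕ × ℕ} (hp : p ∈ I) : (p.1, n) ∈ chioExt n n I :=
  Finset.mem_insert_of_mem <| Finset.mem_union_left _ <| Finset.mem_union_left _ <|
    Finset.mem_image_of_mem _ (Finset.mem_image_of_mem _ hp)

lemma col_mem_chio_s9 {p : ℕ × ℕ} (hp : p ∈ I) : (n, p.2) ∈ chioExt n n I :=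
  Finset.mem_insert_of_mem <| Finset.mem_union_left _ <| Finset.mem_union_right _ <|
    Finset.mem_image_of_mem _ (Finset.mem_image_of_mem _ hp)

lemma coord_lt (hI : I ⊆ mgrid n n) {p : ℕ × ℕ} (hp : p ∈ I) :
    p.1 < n ∧ p.2 < n := by
  have := hI hp
  simp only [mgrid, Finset.mem_product, Finset.mem_Icc] at this
  omega

lemma row_not_mem (hI : I ⊆ mgrid n n) (x : ℕ) : (x, n) ∉ I := by
  intro h; exact absurd (coord_lt hI h).2 (by simp)

lemma col_not_mem (hI : I ⊆ mgrid n n) (y : ℕ) : (n, y) ∉ I := by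
  intro h; exact absurd (coord_lt hI h).1 (by simp)

end ChioFacts

/-- The sign forced on position `p ∈ I` by the boundary values of `A` and the
support condition from `B`. -/
def sigma' (B : ℕ × ℕ → ℤ) (n : ℕ) (A : ℕ × ℕ → ℤ) (p : ℕ × ℕ) : ℤ :=
  (if B p = 0 then 1 else -1) * (A (n, n) * A (p.1, n) * A (n, p.2))

lemma sign_iff (a x y z b : ℤ) (ha : a = 1 ∨ a = -1) (hx : x = 1 ∨ x = -1)
    (hy : y = 1 ∨ y = -1) (hz : z = 1 ∨ z = -1) :
    ((a * x - y * z = 0) ↔ b = 0) ↔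
      (a = (if b = 0 then 1 else -1) * (x * y * z)) := by
  by_cases hb : b = 0 <;>
    rcases ha with rfl | rfl <;> rcases hx with rfl | rfl <;>
    rcases hy with rfl | rfl <;> rcases hz with rfl | rfl <;>
    simp [hb]

/-- The key counting lemma: the set of sign matrices on the Chio extension whose
forced values on `I` agree with `sigma'` is in bijection with the sign matrices
on the boundary `chioExt n n I \ I`. -/
lemma U_card (n : ℕ) (I : Finset (ℕ × ℕ)) (hI : I ⊆ mgrid n n) (B : ℕ × ℕ → ℤ) :
    {A : ℕ × ℕ → ℤ | IsSignOn (chioExt n n I) A ∧ ∀ p ∈ I, A p = sigma' B n A p}.Finite ∧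
      Set.ncard {A : ℕ × ℕ → ℤ | IsSignOn (chioExt n n I) A ∧ ∀ p ∈ I, A p = sigma' B n A p}
        = 2 ^ (chioExt n n I \ I).card := by
  classical
  set c := chioExt n n I with hc
  set D := c \ I with hD
  set V := {g : ℕ × ℕ → ℤ | IsSignOn D g} with hV
  set Φ : (ℕ × ℕ → ℤ) → (ℕ × ℕ → ℤ) :=
    fun g => fun q => if q ∈ I then sigma' B n g q else g q with hΦ
  have hcorner : ∀ q : ℕ, (q, n) ∉ I := row_not_mem hI
  have hcol : ∀ q : ℕ, (n, q) ∉ I := col_not_mem hI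
  have hΦoff : ∀ g q, q ∉ I → Φ g q = g q := by
    intro g q hq; simp [hΦ, hq]
  have hsigmaΦ : ∀ g p, sigma' B n (Φ g) p = sigma' B n g p := by
    intro g p
    unfold sigma'
    rw [hΦoff g (n, n) (hcorner n), hΦoff g (p.1, n) (hcorner p.1),
      hΦoff g (n, p.2) (hcol p.2)]
  have hsign_sigma : ∀ g ∈ V, ∀ p ∈ I, sigma' B n g p = 1 ∨ sigma' B n g p = -1 := by
    intro g hg p hp
    have h1 : g (n, n) = 1 ∨ g (n, n) = -1 :=
      hg.1 _ (Finset.mem_sdiff.2 ⟨corner_mem_chio, hcorner n⟩)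
    have h2 : g (p.1, n) = 1 ∨ g (p.1, n) = -1 :=
      hg.1 _ (Finset.mem_sdiff.2 ⟨row_mem_chio_s9 hp, hcorner p.1⟩)
    have h3 : g (n, p.2) = 1 ∨ g (n, p.2) = -1 :=
      hg.1 _ (Finset.mem_sdiff.2 ⟨col_mem_chio_s9 hp, hcol p.2⟩)
    unfold sigma'
    by_cases hb : B p = 0 <;>
      rcases h1 with h1 | h1 <;> rcases h2 with h2 | h2 <;> rcases h3 with h3 | h3 <;>
      simp [hb, h1, h2, h3]
  have hUeq : {A : ℕ × ℕ → ℤ | IsSignOn c A ∧ ∀ p ∈ I, A p = sigma' B n A p} = Φ '' V := by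
    ext A
    simp only [Set.mem_setOf_eq, Set.mem_image]
    constructor
    · rintro ⟨hsign, hforce⟩
      refine ⟨fun q => if q ∈ I then 1 else A q, ?_, ?_⟩
      · constructor
        · intro q hq
          have hqI : q ∉ I := (Finset.mem_sdiff.1 hq).2
          have hqc : q ∈ c := (Finset.mem_sdiff.1 hq).1
          simpa [hqI] using hsign.1 q hqc
        · intro q hq
          by_cases hqI : q ∈ I
          · simp [hqI]
          · have hqc : q ∉ c := fun h => hq (Finset.mem_sdiff.2 ⟨h, hqI⟩)
            simpa [hqI] using hsign.2 q hqc
      · funext q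
        by_cases hqI : q ∈ I
        · have : sigma' B n (fun q => if q ∈ I then 1 else A q) q = sigma' B n A q := by
            unfold sigma'
            simp [hcorner n, hcorner q.1, hcol q.2]
          simp only [hΦ, hqI, if_pos]
          rw [this, ← hforce q hqI]
        · simp [hΦ, hqI]
    · rintro ⟨g, hg, rfl⟩
      refine ⟨⟨?_, ?_⟩, ?_⟩
      · intro q hq
        by_cases hqI : q ∈ I
        · rw [hΦ]; simpa [hqI] using hsign_sigma g hg q hqI
        · rw [hΦoff g q hqI]
          exact hg.1 q (Finset.mem_sdiff.2 ⟨hq, hqI⟩)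
      · intro q hq
        have hqI : q ∉ I := fun h => hq (subset_chio h)
        rw [hΦoff g q hqI]
        exact hg.2 q fun h => hq (Finset.mem_sdiff.1 h).1
      · intro p hp
        rw [hsigmaΦ g p]
        simp [hΦ, hp]
  have hinj : Set.InjOn Φ V := by
    intro g hg g' hg' h
    funext q
    by_cases hqI : q ∈ I
    · have h1 : g q = 1 := hg.2 q (by simp [hD, hqI])
      have h2 : g' q = 1 := hg'.2 q (by simp [hD, hqI])
      rw [h1, h2]
    · have := congrFun h q
      rwa [hΦoff g q hqI, hΦoff g' q hqI] at this
  obtain ⟨hVfin, hVcard⟩ := signOn_card D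
  constructor
  · rw [hUeq]; exact hVfin.image Φ
  · rw [hUeq, Set.ncard_image_of_injOn hinj, hVcard]

/-- Maps `{-2,0,2}` to `{-1,0,1}` by halving. -/
def half3 (d : ℤ) : ℤ := if d = 2 then 1 else if d = -2 then -1 else 0

lemma diff_mem (a x y z : ℤ) (ha : a = 1 ∨ a = -1) (hx : x = 1 ∨ x = -1)
    (hy : y = 1 ∨ y = -1) (hz : z = 1 ∨ z = -1) :
    a * x - y * z = -2 ∨ a * x - y * z = 0 ∨ a * x - y * z = 2 := by
  rcases ha with rfl | rfl <;> rcases hx with rfl | rfl <;>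
    rcases hy with rfl | rfl <;> rcases hz with rfl | rfl <;> norm_num

/-- **The lazy coin flip measure is an averaged Chio measure.** For `n ≥ 2`,
`I ⊆ {1,…,n-1}²` and `B : I → {−1,0,+1}`, summing `P_chio[{B̃}]` over all
`B̃ : I → {−1,0,+1}` with `Supp(B̃) = Supp(B)` (normalized to `0` off `I`)
gives `(1/2)^{|I|}`; equivalently
`P_lcf[{B}] = (1/2)^{|I|+|Supp(B)|} = (1/2)^{|Supp(B)|} · Σ_{B̃} P_chio[{B̃}]`. -/
theorem lcf_is_averaged_chio (n : ℕ) (hn : 2 ≤ n)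
    (I : Finset (ℕ × ℕ)) (hI : I ⊆ mgrid n n)
    (B : ℕ × ℕ → ℤ) (hB : ∀ p ∈ I, B p = -1 ∨ B p = 0 ∨ B p = 1) :
    (∑ᶠ Bt ∈ {Bt : ℕ × ℕ → ℤ | (∀ p ∈ I, Bt p = -1 ∨ Bt p = 0 ∨ Bt p = 1) ∧
        (∀ p ∉ I, Bt p = 0) ∧ ∀ p ∈ I, (Bt p = 0 ↔ B p = 0)},
      PchioSingle n I Bt) = (1 / 2 : ℚ) ^ I.card := by
  classical
  set c := chioExt n n I with hc
  set S := {Bt : ℕ × ℕ → ℤ | (∀ p ∈ I, Bt p = -1 ∨ Bt p = 0 ∨ Bt p = 1) ∧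
        (∀ p ∉ I, Bt p = 0) ∧ ∀ p ∈ I, (Bt p = 0 ↔ B p = 0)} with hS
  set T : (ℕ × ℕ → ℤ) → Set (ℕ × ℕ → ℤ) :=
    fun Bt => {A | IsSignOn c A ∧ CondensesTo n n I A Bt} with hT
  set U := {A : ℕ × ℕ → ℤ | IsSignOn c A ∧ ∀ p ∈ I, A p = sigma' B n A p} with hU
  -- finiteness of S
  have hSfin : S.Finite := by
    set e : (ℕ × ℕ → ℤ) → (↥I → ℤ) := fun Bt i => Bt i with he
    have hpi_fin : (Set.pi Set.univ (fun _ : ↥I => ({-1, 0, 1} : Set ℤ))).Finite :=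
      Set.Finite.pi fun _ => (Set.finite_singleton 1).insert 0 |>.insert (-1)
    have himg : e '' S ⊆ Set.pi Set.univ (fun _ : ↥I => ({-1, 0, 1} : Set ℤ)) := by
      rintro f ⟨Bt, hBt, rfl⟩ i -
      rcases hBt.1 i i.2 with h | h | h <;> simp [he, h]
    have hinj : Set.InjOn e S := by
      intro Bt hBt Bt' hBt' h
      funext q
      by_cases hq : q ∈ I
      · exact congrFun h ⟨q, hq⟩
      · rw [hBt.2.1 q hq, hBt'.2.1 q hq]
    exact Set.Finite.of_finite_image (hpi_fin.subset himg) hinj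
  set F := hSfin.toFinset with hF
  -- finiteness of each T Bt
  have hsignfin := (signOn_card c).1
  have hTfin : ∀ Bt, (T Bt).Finite := fun Bt => hsignfin.subset fun A hA => hA.1
  -- four sign values
  have hfour : ∀ A : ℕ × ℕ → ℤ, IsSignOn c A → ∀ p ∈ I,
      (A p = 1 ∨ A p = -1) ∧ (A (n, n) = 1 ∨ A (n, n) = -1) ∧
      (A (p.1, n) = 1 ∨ A (p.1, n) = -1) ∧ (A (n, p.2) = 1 ∨ A (n, p.2) = -1) :=
    fun A hA p hp => ⟨hA.1 p (subset_chio hp), hA.1 _ corner_mem_chio,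
      hA.1 _ (row_mem_chio_s9 hp), hA.1 _ (col_mem_chio_s9 hp)⟩
  -- U is the disjoint union of the T Bt over Bt ∈ F
  have hUmem : ∀ A, A ∈ U ↔ ∃ Bt ∈ S, A ∈ T Bt := by
    intro A
    constructor
    · rintro ⟨hsign, hforce⟩
      set Bt : ℕ × ℕ → ℤ :=
        fun q => if q ∈ I then half3 (A q * A (n, n) - A (q.1, n) * A (n, q.2)) else 0 with hBt
      have key : ∀ p ∈ I, (A p * A (n, n) - A (p.1, n) * A (n, p.2) = 0 ↔ B p = 0) := by
        intro p hp
        obtain ⟨h1, h2, h3, h4⟩ := hfour A hsign p hp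
        exact (sign_iff _ _ _ _ (B p) h1 h2 h3 h4).2 (hforce p hp)
      have hd3 : ∀ p ∈ I, A p * A (n, n) - A (p.1, n) * A (n, p.2) = -2 ∨
          A p * A (n, n) - A (p.1, n) * A (n, p.2) = 0 ∨
          A p * A (n, n) - A (p.1, n) * A (n, p.2) = 2 := by
        intro p hp
        obtain ⟨h1, h2, h3, h4⟩ := hfour A hsign p hp
        exact diff_mem _ _ _ _ h1 h2 h3 h4
      refine ⟨Bt, ⟨?_, ?_, ?_⟩, hsign, ?_⟩
      · intro p hp
        rcases hd3 p hp with h | h | h <;> simp [hBt, hp, half3, h]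
      · intro p hp; simp [hBt, hp]
      · intro p hp
        rw [← key p hp]
        rcases hd3 p hp with h | h | h <;> simp [hBt, hp, half3, h]
      · intro p hp
        rcases hd3 p hp with h | h | h <;> rw [h] <;> simp [hBt, hp, half3, h]
    · rintro ⟨Bt, hBtS, hsign, hcond⟩
      refine ⟨hsign, fun p hp => ?_⟩
      obtain ⟨h1, h2, h3, h4⟩ := hfour A hsign p hp
      refine (sign_iff _ _ _ _ (B p) h1 h2 h3 h4).1 ?_
      rw [hcond p hp, ← hBtS.2.2 p hp]
      constructor
      · intro h; omega
      · intro h; rw [h]; ring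
  have hUcoe : U = ↑(F.biUnion fun Bt => (hTfin Bt).toFinset) := by
    ext A
    simp only [Finset.coe_biUnion, Set.mem_iUnion, Finset.mem_coe, Finset.mem_biUnion,
      Set.Finite.mem_toFinset, hF, exists_prop]
    exact hUmem A
  -- disjointness
  have hdisj : ∀ Bt ∈ F, ∀ Bt' ∈ F, Bt ≠ Bt' →
      Disjoint ((hTfin Bt).toFinset) ((hTfin Bt').toFinset) := by
    intro Bt hBt Bt' hBt' hne
    rw [Finset.disjoint_left]
    intro A hA hA'
    rw [Set.Finite.mem_toFinset] at hA hA'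
    apply hne
    funext q
    by_cases hq : q ∈ I
    · have e1 := hA.2 q hq
      have e2 := hA'.2 q hq
      omega
    · rw [(hSfin.mem_toFinset.1 hBt).2.1 q hq, (hSfin.mem_toFinset.1 hBt').2.1 q hq]
  -- cardinality of U
  have hUcard : U.ncard = ∑ Bt ∈ F, (T Bt).ncard := by
    rw [hUcoe, Set.ncard_coe_finset, Finset.card_biUnion hdisj]
    exact Finset.sum_congr rfl fun Bt _ => (Set.ncard_eq_toFinset_card (T Bt) (hTfin Bt)).symm
  obtain ⟨-, hUval⟩ := U_card n I hI B
  -- assemble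
  rw [← hSfin.coe_toFinset, finsum_mem_coe_finset]
  have : ∀ Bt, PchioSingle n I Bt = ((T Bt).ncard : ℚ) / 2 ^ c.card := fun Bt => rfl
  simp_rw [this, ← Finset.sum_div, ← Nat.cast_sum]
  rw [← hUcard, hUval]
  have hle : I.card ≤ c.card := Finset.card_le_card subset_chio
  have hsd : (c \ I).card = c.card - I.card := Finset.card_sdiff_of_subset subset_chio
  rw [hsd]
  have h2 : (2 : ℚ) ^ c.card = 2 ^ (c.card - I.card) * 2 ^ I.card := by
    rw [← pow_add, Nat.sub_add_cancel hle]
  push_cast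
  rw [h2, div_mul_eq_div_div, div_self (by positivity), ]
  simp [one_div, inv_pow]
end

section
/- On rank-level sets the Chio measure agrees with the uniform measure on {0,1}-matrices: Let s,t ≥ 2 and let R be a set of positive integers (the paper takes R ⊆ {1,…,min(s,t)}). Then 2^{(s−1)(t−1)} · |{A : {1,…,s}×{1,…,t} → {−1,+1} : rank_ℚ(½C(A)) ∈ R}| = 2^{s·t} · |{B : {1,…,s−1}×{1,…,t−1} → {0,1} : rank_ℚ(B) ∈ R}|, where ½C(A) is the (s−1)×(t−1) integer matrix with entries (A(i,j)·A(s,t) − A(i,t)·A(s,j))/2 ∈ {−1,0,+1} and rank_ℚ denotes the rank of the matrix viewed over the rationals. Equivalently, P_chio[{B̃ ∈ {−1,0,+1}^{(s−1)×(t−1)} : rank(B̃) ∈ R}] equals the proportion of matrices in {0,1}^{(s−1)×(t−1)} of rank in R. -/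
namespace ChioAux

open Matrix

/-- sign of a boolean -/
def eps (p : Bool) : ℤ := if p then 1 else -1

lemma eps_decide {x : ℤ} (h : x = 1 ∨ x = -1) : eps (decide (x = 1)) = x := by
  rcases h with h | h <;> simp [h, eps]

lemma decide_eps (p : Bool) : decide (eps p = 1) = p := by
  cases p <;> simp [eps]

lemma eps_pm (p : Bool) : eps p = 1 ∨ eps p = -1 := by
  cases p <;> simp [eps]

/-- halved Chio condensate -/
def chio (a b : ℕ) (A : Matrix (Fin (a + 2)) (Fin (b + 2)) ℤ) :
    Matrix (Fin (a + 1)) (Fin (b + 1)) ℤ :=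
  Matrix.of fun (i : Fin (a + 1)) (j : Fin (b + 1)) =>
    (A i.castSucc j.castSucc * A (Fin.last (a + 1)) (Fin.last (b + 1)) -
      A i.castSucc (Fin.last (b + 1)) * A (Fin.last (a + 1)) j.castSucc) / 2

/-- associated 0/1 matrix -/
def bmat (a b : ℕ) (A : Matrix (Fin (a + 2)) (Fin (b + 2)) ℤ) :
    Matrix (Fin (a + 1)) (Fin (b + 1)) ℤ :=
  Matrix.of fun (i : Fin (a + 1)) (j : Fin (b + 1)) =>
    (1 - A i.castSucc j.castSucc * A (Fin.last (a + 1)) (Fin.last (b + 1)) *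
      (A i.castSucc (Fin.last (b + 1)) * A (Fin.last (a + 1)) j.castSucc)) / 2

lemma bmat_mem (a b : ℕ) (A : Matrix (Fin (a + 2)) (Fin (b + 2)) ℤ)
    (hA : ∀ i j, A i j = 1 ∨ A i j = -1) :
    ∀ i j, bmat a b A i j = 0 ∨ bmat a b A i j = 1 := by
  intro i j
  simp only [bmat, Matrix.of_apply]
  rcases hA i.castSucc j.castSucc with h1 | h1 <;>
    rcases hA (Fin.last (a + 1)) (Fin.last (b + 1)) with h2 | h2 <;>
    rcases hA i.castSucc (Fin.last (b + 1)) with h3 | h3 <;>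
    rcases hA (Fin.last (a + 1)) j.castSucc with h4 | h4 <;>
    rw [h1, h2, h3, h4] <;> decide

lemma factor (a b : ℕ) (A : Matrix (Fin (a + 2)) (Fin (b + 2)) ℤ)
    (hA : ∀ i j, A i j = 1 ∨ A i j = -1) :
    chio a b A =
      Matrix.diagonal (fun i : Fin (a + 1) => -(A i.castSucc (Fin.last (b + 1)))) *
        bmat a b A *
        Matrix.diagonal (fun j : Fin (b + 1) => A (Fin.last (a + 1)) j.castSucc) := by
  ext i j
  rw [Matrix.mul_diagonal, Matrix.diagonal_mul]
  simp only [chio, bmat, Matrix.of_apply]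
  rcases hA i.castSucc j.castSucc with h1 | h1 <;>
    rcases hA (Fin.last (a + 1)) (Fin.last (b + 1)) with h2 | h2 <;>
    rcases hA i.castSucc (Fin.last (b + 1)) with h3 | h3 <;>
    rcases hA (Fin.last (a + 1)) j.castSucc with h4 | h4 <;>
    rw [h1, h2, h3, h4] <;> decide

lemma rank_chio (a b : ℕ) (A : Matrix (Fin (a + 2)) (Fin (b + 2)) ℤ)
    (hA : ∀ i j, A i j = 1 ∨ A i j = -1) :
    ((chio a b A).map (Int.cast : ℤ → ℚ)).rank =
      ((bmat a b A).map (Int.cast : ℤ → ℚ)).rank := by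
  rw [factor a b A hA, show (Int.cast : ℤ → ℚ) = ⇑(Int.castRingHom ℚ) from rfl,
    Matrix.map_mul, Matrix.map_mul,
    Matrix.diagonal_map (by simp), Matrix.diagonal_map (by simp)]
  rw [Matrix.rank_mul_eq_left_of_isUnit_det, Matrix.rank_mul_eq_right_of_isUnit_det]
  · rw [Matrix.det_diagonal, isUnit_iff_ne_zero]
    refine Finset.prod_ne_zero_iff.mpr fun i _ => ?_
    rcases hA i.castSucc (Fin.last (b + 1)) with h | h <;> simp [h]
  · rw [Matrix.det_diagonal, isUnit_iff_ne_zero]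
    refine Finset.prod_ne_zero_iff.mpr fun j _ => ?_
    rcases hA (Fin.last (a + 1)) j.castSucc with h | h <;> simp [h]

/-- reconstruct a `±1` matrix from boundary data and a `0/1` matrix -/
def mk (a b : ℕ) (u : Fin (a + 2) → Bool) (v : Fin (b + 1) → Bool)
    (B : Matrix (Fin (a + 1)) (Fin (b + 1)) ℤ) :
    Matrix (Fin (a + 2)) (Fin (b + 2)) ℤ :=
  Matrix.of fun (i : Fin (a + 2)) (j : Fin (b + 2)) =>
    if hj : j = Fin.last (b + 1) then eps (u i)
    else if hi : i = Fin.last (a + 1) then eps (v (j.castPred hj))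
    else (1 - 2 * B (i.castPred hi) (j.castPred hj)) *
      (eps (u (Fin.last (a + 1))) * (eps (u i) * eps (v (j.castPred hj))))

lemma mk_last_col (a b : ℕ) (u v B) (i : Fin (a + 2)) :
    mk a b u v B i (Fin.last (b + 1)) = eps (u i) := by
  simp [mk]

lemma mk_last_row (a b : ℕ) (u v B) (j : Fin (b + 1)) :
    mk a b u v B (Fin.last (a + 1)) j.castSucc = eps (v j) := by
  simp [mk, (Fin.castSucc_lt_last j).ne]

lemma mk_interior (a b : ℕ) (u v B) (i : Fin (a + 1)) (j : Fin (b + 1)) :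
    mk a b u v B i.castSucc j.castSucc =
      (1 - 2 * B i j) * (eps (u (Fin.last (a + 1))) * (eps (u i.castSucc) * eps (v j))) := by
  simp [mk, (Fin.castSucc_lt_last j).ne, (Fin.castSucc_lt_last i).ne]

lemma mk_pm (a b : ℕ) (u v B) (hB : ∀ i j, B i j = 0 ∨ B i j = 1) :
    ∀ i j, mk a b u v B i j = 1 ∨ mk a b u v B i j = -1 := by
  intro i j
  rcases Fin.eq_castSucc_or_eq_last j with ⟨j', rfl⟩ | rfl
  · rcases Fin.eq_castSucc_or_eq_last i with ⟨i', rfl⟩ | rfl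
    · rw [mk_interior]
      rcases hB i' j' with h | h <;>
        rcases eps_pm (u (Fin.last (a + 1))) with h1 | h1 <;>
        rcases eps_pm (u i'.castSucc) with h2 | h2 <;>
        rcases eps_pm (v j') with h3 | h3 <;>
        rw [h, h1, h2, h3] <;> decide
    · rw [mk_last_row]; exact eps_pm _
  · rw [mk_last_col]; exact eps_pm _

lemma bmat_mk (a b : ℕ) (u v B) (hB : ∀ i j, B i j = 0 ∨ B i j = 1) :
    bmat a b (mk a b u v B) = B := by
  ext i j
  simp only [bmat, Matrix.of_apply, mk_interior, mk_last_col, mk_last_row]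
  rcases hB i j with h | h <;>
    rcases eps_pm (u (Fin.last (a + 1))) with h1 | h1 <;>
    rcases eps_pm (u i.castSucc) with h2 | h2 <;>
    rcases eps_pm (v j) with h3 | h3 <;>
    rw [h, h1, h2, h3] <;> decide

lemma mk_eq_self (a b : ℕ) (A : Matrix (Fin (a + 2)) (Fin (b + 2)) ℤ)
    (hA : ∀ i j, A i j = 1 ∨ A i j = -1) :
    mk a b (fun i => decide (A i (Fin.last (b + 1)) = 1))
      (fun j => decide (A (Fin.last (a + 1)) j.castSucc = 1)) (bmat a b A) = A := by
  ext i j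
  rcases Fin.eq_castSucc_or_eq_last j with ⟨j', rfl⟩ | rfl
  · rcases Fin.eq_castSucc_or_eq_last i with ⟨i', rfl⟩ | rfl
    · rw [mk_interior]
      rw [eps_decide (hA _ _), eps_decide (hA _ _), eps_decide (hA _ _)]
      simp only [bmat, Matrix.of_apply]
      rcases hA i'.castSucc j'.castSucc with h1 | h1 <;>
        rcases hA (Fin.last (a + 1)) (Fin.last (b + 1)) with h2 | h2 <;>
        rcases hA i'.castSucc (Fin.last (b + 1)) with h3 | h3 <;>
        rcases hA (Fin.last (a + 1)) j'.castSucc with h4 | h4 <;>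
        rw [h1, h2, h3, h4] <;> decide
    · rw [mk_last_row, eps_decide (hA _ _)]
  · rw [mk_last_col, eps_decide (hA _ _)]

end ChioAux

/-- **On rank-level sets the Chio measure agrees with the uniform measure on
`{0,1}`-matrices.** For `s,t ≥ 2` (encoded as `s = a + 2`, `t = b + 2`) and a set `R` of
positive integers:
`2^{(s−1)(t−1)} · |{A ∈ {±1}^{s×t} : rank_ℚ(½C(A)) ∈ R}|
  = 2^{s·t} · |{B ∈ {0,1}^{(s−1)×(t−1)} : rank_ℚ(B) ∈ R}|`,
where `½C(A)` is the halved Chio condensate with entries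
`(A(i,j)·A(s,t) − A(i,t)·A(s,j))/2 ∈ {−1,0,+1}` and ranks are computed over `ℚ`. -/
theorem chio_measure_rank_level_sets (a b : ℕ) (R : Set ℕ) (hR : ∀ r ∈ R, 0 < r) :
    2 ^ ((a + 1) * (b + 1)) *
        Set.ncard {A : Matrix (Fin (a + 2)) (Fin (b + 2)) ℤ |
          (∀ i j, A i j = 1 ∨ A i j = -1) ∧
          ((Matrix.of fun (i : Fin (a + 1)) (j : Fin (b + 1)) =>
              (A i.castSucc j.castSucc * A (Fin.last (a + 1)) (Fin.last (b + 1)) -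
                A i.castSucc (Fin.last (b + 1)) * A (Fin.last (a + 1)) j.castSucc) /
                2).map (Int.cast : ℤ → ℚ)).rank ∈ R} =
      2 ^ ((a + 2) * (b + 2)) *
        Set.ncard {B : Matrix (Fin (a + 1)) (Fin (b + 1)) ℤ |
          (∀ i j, B i j = 0 ∨ B i j = 1) ∧
          (B.map (Int.cast : ℤ → ℚ)).rank ∈ R} := by
  classical
  show 2 ^ ((a + 1) * (b + 1)) *
        Set.ncard {A : Matrix (Fin (a + 2)) (Fin (b + 2)) ℤ |
          (∀ i j, A i j = 1 ∨ A i j = -1) ∧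
          ((ChioAux.chio a b A).map (Int.cast : ℤ → ℚ)).rank ∈ R} =
      2 ^ ((a + 2) * (b + 2)) *
        Set.ncard {B : Matrix (Fin (a + 1)) (Fin (b + 1)) ℤ |
          (∀ i j, B i j = 0 ∨ B i j = 1) ∧
          (B.map (Int.cast : ℤ → ℚ)).rank ∈ R}
  set SA := {A : Matrix (Fin (a + 2)) (Fin (b + 2)) ℤ |
          (∀ i j, A i j = 1 ∨ A i j = -1) ∧
          ((ChioAux.chio a b A).map (Int.cast : ℤ → ℚ)).rank ∈ R} with hSA
  set SB := {B : Matrix (Fin (a + 1)) (Fin (b + 1)) ℤ |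
          (∀ i j, B i j = 0 ∨ B i j = 1) ∧
          (B.map (Int.cast : ℤ → ℚ)).rank ∈ R} with hSB
  have e : {A // A ∈ SA} ≃ ((Fin (a + 2) → Bool) × (Fin (b + 1) → Bool)) × {B // B ∈ SB} :=
    { toFun := fun A =>
        ⟨⟨fun i => decide (A.1 i (Fin.last (b + 1)) = 1),
          fun j => decide (A.1 (Fin.last (a + 1)) j.castSucc = 1)⟩,
         ⟨ChioAux.bmat a b A.1,
          ChioAux.bmat_mem a b A.1 A.2.1,
          by rw [← ChioAux.rank_chio a b A.1 A.2.1]; exact A.2.2⟩⟩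
      invFun := fun x =>
        ⟨ChioAux.mk a b x.1.1 x.1.2 x.2.1,
         ChioAux.mk_pm a b x.1.1 x.1.2 x.2.1 x.2.2.1,
         by rw [ChioAux.rank_chio a b _ (ChioAux.mk_pm a b x.1.1 x.1.2 x.2.1 x.2.2.1),
              ChioAux.bmat_mk a b x.1.1 x.1.2 x.2.1 x.2.2.1]
            exact x.2.2.2⟩
      left_inv := fun A => Subtype.ext (ChioAux.mk_eq_self a b A.1 A.2.1)
      right_inv := fun x => by
        refine Prod.ext (Prod.ext ?_ ?_) (Subtype.ext ?_)
        · funext i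
          show decide (ChioAux.mk a b x.1.1 x.1.2 x.2.1 i (Fin.last (b + 1)) = 1) = x.1.1 i
          rw [ChioAux.mk_last_col]; exact ChioAux.decide_eps (x.1.1 i)
        · funext j
          show decide
              (ChioAux.mk a b x.1.1 x.1.2 x.2.1 (Fin.last (a + 1)) j.castSucc = 1) = x.1.2 j
          rw [ChioAux.mk_last_row]; exact ChioAux.decide_eps (x.1.2 j)
        · exact ChioAux.bmat_mk a b x.1.1 x.1.2 x.2.1 x.2.2.1 }
  have hcard : SA.ncard = 2 ^ (a + 2) * 2 ^ (b + 1) * SB.ncard := by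
    rw [← Nat.card_coe_set_eq, ← Nat.card_coe_set_eq, Nat.card_congr e,
      Nat.card_prod, Nat.card_prod]
    simp [Nat.card_eq_fintype_card]
  rw [hcard, ← mul_assoc, ← mul_assoc, ← pow_add, ← pow_add,
    show (a + 1) * (b + 1) + (a + 2) + (b + 1) = (a + 2) * (b + 2) by ring]
end

section
/- The density of singular ±1 matrices equals the density of singular {0,1} matrices one size smaller: For every n ≥ 2, 2^{(n−1)²} · |{A : {1,…,n}² → {−1,+1} : det(A) = 0}| = 2^{n²} · |{B : {1,…,n−1}² → {0,1} : det(B) = 0}|, where the determinants are taken over ℤ (equivalently over ℚ). In other words, the proportion of singular matrices among all n×n matrices with entries in {−1,+1} equals the proportion of singular matrices among all (n−1)×(n−1) matrices with entries in {0,1}. -/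
open Matrix

namespace PM01

variable {m : ℕ}

/-- sign of a boolean -/
def sg (b : Bool) : ℤ := if b then -1 else 1

lemma sg_ne_zero (b : Bool) : sg b ≠ 0 := by cases b <;> simp [sg]

lemma sg_pm (b : Bool) : sg b = 1 ∨ sg b = -1 := by cases b <;> simp [sg]

/-- The normalized ±1 matrix attached to a 0/1 matrix. -/
def A0 (B : Matrix (Fin (m+1)) (Fin (m+1)) ℤ) : Matrix (Fin (m+2)) (Fin (m+2)) ℤ :=
  Matrix.of fun i =>
    Fin.cases (fun _ => 1)
      (fun i' j => Fin.cases 1 (fun j' => 1 - 2 * B i' j') j) i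

@[simp] lemma A0_zero (B : Matrix (Fin (m+1)) (Fin (m+1)) ℤ) (j : Fin (m+2)) :
    A0 B 0 j = 1 := by simp [A0]

@[simp] lemma A0_succ_zero (B : Matrix (Fin (m+1)) (Fin (m+1)) ℤ) (i : Fin (m+1)) :
    A0 B i.succ 0 = 1 := by simp [A0]

@[simp] lemma A0_succ_succ (B : Matrix (Fin (m+1)) (Fin (m+1)) ℤ) (i j : Fin (m+1)) :
    A0 B i.succ j.succ = 1 - 2 * B i j := by simp [A0]

@[simp] lemma A0_apply_zero (B : Matrix (Fin (m+1)) (Fin (m+1)) ℤ) (i : Fin (m+2)) :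
    A0 B i 0 = 1 := by induction i using Fin.cases <;> simp

/-- Row-reduced version of `A0`. -/
def M0 (B : Matrix (Fin (m+1)) (Fin (m+1)) ℤ) : Matrix (Fin (m+2)) (Fin (m+2)) ℤ :=
  Matrix.of fun i =>
    Fin.cases (fun _ => 1)
      (fun i' j => Fin.cases 0 (fun j' => -2 * B i' j') j) i

@[simp] lemma M0_zero (B : Matrix (Fin (m+1)) (Fin (m+1)) ℤ) (j : Fin (m+2)) :
    M0 B 0 j = 1 := by simp [M0]

@[simp] lemma M0_succ_zero (B : Matrix (Fin (m+1)) (Fin (m+1)) ℤ) (i : Fin (m+1)) :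
    M0 B i.succ 0 = 0 := by simp [M0]

@[simp] lemma M0_succ_succ (B : Matrix (Fin (m+1)) (Fin (m+1)) ℤ) (i j : Fin (m+1)) :
    M0 B i.succ j.succ = -2 * B i j := by simp [M0]

/-- elementary matrix adding row 0 to all other rows -/
def EE (m : ℕ) : Matrix (Fin (m+2)) (Fin (m+2)) ℤ :=
  Matrix.of fun i j => if j = 0 then 1 else if i = j then 1 else 0

lemma EE_det : (EE m).det = 1 := by
  rw [Matrix.det_of_lowerTriangular (EE m)
    (by intro i j h; simp only [OrderDual.toDual_lt_toDual] at h
        have h1 : j ≠ 0 := Fin.pos_iff_ne_zero.mp (lt_of_le_of_lt (Fin.zero_le i) h)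
        have h2 : i ≠ j := ne_of_lt h
        simp [EE, h1, h2])]
  simp [EE]

lemma A0_eq_mul (B : Matrix (Fin (m+1)) (Fin (m+1)) ℤ) : A0 B = EE m * M0 B := by
  ext i j
  rw [Matrix.mul_apply]
  induction i using Fin.cases with
  | zero =>
      rw [Finset.sum_eq_single (0 : Fin (m+2))]
      · simp [EE]
      · intro k _ hk; simp [EE, hk, hk.symm]
      · simp
  | succ i =>
      rw [Fin.sum_univ_succ]
      have h1 : ∀ k : Fin (m+1), EE m i.succ k.succ * M0 B k.succ j
          = if i = k then M0 B i.succ j else 0 := by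
        intro k
        by_cases h : i = k
        · simp [EE, h, Fin.succ_ne_zero]
        · simp [EE, h, Fin.succ_ne_zero, fun hh => h (Fin.succ_injective _ hh)]
      simp only [h1]
      rw [Finset.sum_ite_eq (Finset.univ : Finset (Fin (m+1))) i (fun k => M0 B i.succ j)]
      simp only [Finset.mem_univ, if_true]
      induction j using Fin.cases with
      | zero => simp [EE]
      | succ j => simp [EE]; ring

lemma M0_det (B : Matrix (Fin (m+1)) (Fin (m+1)) ℤ) :
    (M0 B).det = (-2) ^ (m+1) * B.det := by
  rw [Matrix.det_succ_column_zero]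
  rw [Fin.sum_univ_succ]
  have h0 : ∀ i : Fin (m+1), (-1:ℤ) ^ ((i.succ : Fin (m+2)) : ℕ) * M0 B i.succ 0 *
      ((M0 B).submatrix i.succ.succAbove Fin.succ).det = 0 := by
    intro i; simp
  simp only [h0, Finset.sum_const_zero, add_zero]
  have hsub : (M0 B).submatrix (Fin.succAbove 0) Fin.succ = (-2 : ℤ) • B := by
    ext i j
    simp [Matrix.submatrix_apply, Fin.succAbove_zero]
  rw [hsub, Matrix.det_smul]
  simp only [Fintype.card_fin, zsmul_eq_mul, M0_zero, Fin.val_zero, pow_zero]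
  ring

lemma A0_det (B : Matrix (Fin (m+1)) (Fin (m+1)) ℤ) :
    (A0 B).det = (-2) ^ (m+1) * B.det := by
  rw [A0_eq_mul, Matrix.det_mul, EE_det, one_mul, M0_det]

end PM01

namespace PM01

variable {m : ℕ}

def dd (δ : Fin (m+1) → Bool) : Fin (m+2) → ℤ := Fin.cases 1 (fun j' => sg (δ j'))

@[simp] lemma dd_zero (δ : Fin (m+1) → Bool) : dd δ 0 = 1 := rfl
@[simp] lemma dd_succ (δ : Fin (m+1) → Bool) (j : Fin (m+1)) : dd δ j.succ = sg (δ j) := by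
  simp [dd]

lemma dd_ne_zero (δ : Fin (m+1) → Bool) (j : Fin (m+2)) : dd δ j ≠ 0 := by
  induction j using Fin.cases with
  | zero => simp
  | succ j => simp [sg_ne_zero]

/-- the forward map : signs × 0/1 matrix → ±1 matrix -/
def fwdM (ε : Fin (m+2) → Bool) (δ : Fin (m+1) → Bool)
    (B : Matrix (Fin (m+1)) (Fin (m+1)) ℤ) : Matrix (Fin (m+2)) (Fin (m+2)) ℤ :=
  Matrix.of fun i j => sg (ε i) * (dd δ j * A0 B i j)

lemma fwdM_det (ε : Fin (m+2) → Bool) (δ : Fin (m+1) → Bool)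
    (B : Matrix (Fin (m+1)) (Fin (m+1)) ℤ) :
    (fwdM ε δ B).det = (∏ i, sg (ε i)) * ((∏ j, dd δ j) * ((-2)^(m+1) * B.det)) := by
  rw [← A0_det]
  rw [show fwdM ε δ B = Matrix.of fun i j => sg (ε i) *
      ((Matrix.of fun i j => dd δ j * A0 B i j) i j) from rfl]
  rw [Matrix.det_mul_column, Matrix.det_mul_row]

lemma fwdM_det_eq_zero_iff (ε : Fin (m+2) → Bool) (δ : Fin (m+1) → Bool)
    (B : Matrix (Fin (m+1)) (Fin (m+1)) ℤ) :
    (fwdM ε δ B).det = 0 ↔ B.det = 0 := by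
  rw [fwdM_det]
  have h1 : (∏ i, sg (ε i)) ≠ 0 := Finset.prod_ne_zero_iff.mpr fun i _ => sg_ne_zero _
  have h2 : (∏ j, dd δ j) ≠ 0 := Finset.prod_ne_zero_iff.mpr fun j _ => dd_ne_zero _ _
  have h3 : ((-2:ℤ))^(m+1) ≠ 0 := pow_ne_zero _ (by norm_num)
  simp [mul_eq_zero, h1, h2, h3]

lemma fwdM_pm (ε : Fin (m+2) → Bool) (δ : Fin (m+1) → Bool)
    (B : Matrix (Fin (m+1)) (Fin (m+1)) ℤ) (hB : ∀ i j, B i j = 0 ∨ B i j = 1)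
    (i j : Fin (m+2)) : fwdM ε δ B i j = 1 ∨ fwdM ε δ B i j = -1 := by
  have hA0 : A0 B i j = 1 ∨ A0 B i j = -1 := by
    induction i using Fin.cases with
    | zero => left; simp
    | succ i =>
      induction j using Fin.cases with
      | zero => left; simp
      | succ j => rcases hB i j with h | h <;> simp [h]
  have hd : dd δ j = 1 ∨ dd δ j = -1 := by
    induction j using Fin.cases with
    | zero => left; simp
    | succ j => simpa using sg_pm (δ j)
  rcases sg_pm (ε i) with h1 | h1 <;> rcases hd with h2 | h2 <;> rcases hA0 with h3 | h3 <;>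
    simp [fwdM, h1, h2, h3]

/-- backward maps -/
def bwdE (A : Matrix (Fin (m+2)) (Fin (m+2)) ℤ) : Fin (m+2) → Bool :=
  fun i => decide (A i 0 = -1)

def bwdD (A : Matrix (Fin (m+2)) (Fin (m+2)) ℤ) : Fin (m+1) → Bool :=
  fun j => decide (A 0 0 * A 0 j.succ = -1)

def bwdB (A : Matrix (Fin (m+2)) (Fin (m+2)) ℤ) : Matrix (Fin (m+1)) (Fin (m+1)) ℤ :=
  Matrix.of fun i j => if A i.succ 0 * A 0 0 * A 0 j.succ * A i.succ j.succ = -1 then 1 else 0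

lemma bwdB_01 (A : Matrix (Fin (m+2)) (Fin (m+2)) ℤ) (i j : Fin (m+1)) :
    bwdB A i j = 0 ∨ bwdB A i j = 1 := by
  unfold bwdB; dsimp only [Matrix.of_apply]; split <;> simp

lemma fwd_bwd (A : Matrix (Fin (m+2)) (Fin (m+2)) ℤ)
    (hA : ∀ i j, A i j = 1 ∨ A i j = -1) :
    fwdM (bwdE A) (bwdD A) (bwdB A) = A := by
  ext i j
  induction i using Fin.cases with
  | zero =>
    induction j using Fin.cases with
    | zero => rcases hA 0 0 with h | h <;> simp [fwdM, bwdE, sg, h]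
    | succ j =>
      rcases hA 0 0 with h1 | h1 <;> rcases hA 0 j.succ with h2 | h2 <;>
        simp [fwdM, bwdE, bwdD, sg, h1, h2]
  | succ i =>
    induction j using Fin.cases with
    | zero => rcases hA i.succ 0 with h | h <;> simp [fwdM, bwdE, sg, h]
    | succ j =>
      rcases hA i.succ 0 with h1 | h1 <;> rcases hA 0 0 with h2 | h2 <;>
        rcases hA 0 j.succ with h3 | h3 <;> rcases hA i.succ j.succ with h4 | h4 <;>
        simp [fwdM, bwdE, bwdD, bwdB, sg, h1, h2, h3, h4]

lemma bwd_fwd_E (ε : Fin (m+2) → Bool) (δ : Fin (m+1) → Bool)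
    (B : Matrix (Fin (m+1)) (Fin (m+1)) ℤ) : bwdE (fwdM ε δ B) = ε := by
  funext i
  have : fwdM ε δ B i 0 = sg (ε i) := by simp [fwdM]
  rw [bwdE, this]
  cases h : ε i <;> simp [sg, h]

lemma bwd_fwd_D (ε : Fin (m+2) → Bool) (δ : Fin (m+1) → Bool)
    (B : Matrix (Fin (m+1)) (Fin (m+1)) ℤ) : bwdD (fwdM ε δ B) = δ := by
  funext j
  have h1 : fwdM ε δ B 0 0 = sg (ε 0) := by simp [fwdM]
  have h2 : fwdM ε δ B 0 j.succ = sg (ε 0) * sg (δ j) := by simp [fwdM]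
  rw [bwdD, h1, h2]
  cases h : ε 0 <;> cases h' : δ j <;> simp [sg, h, h']

lemma bwd_fwd_B (ε : Fin (m+2) → Bool) (δ : Fin (m+1) → Bool)
    (B : Matrix (Fin (m+1)) (Fin (m+1)) ℤ) (hB : ∀ i j, B i j = 0 ∨ B i j = 1) :
    bwdB (fwdM ε δ B) = B := by
  ext i j
  have h1 : fwdM ε δ B i.succ 0 = sg (ε i.succ) := by simp [fwdM]
  have h2 : fwdM ε δ B 0 0 = sg (ε 0) := by simp [fwdM]
  have h3 : fwdM ε δ B 0 j.succ = sg (ε 0) * sg (δ j) := by simp [fwdM]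
  have h4 : fwdM ε δ B i.succ j.succ = sg (ε i.succ) * (sg (δ j) * (1 - 2 * B i j)) := by
    simp [fwdM]
  rw [show bwdB (fwdM ε δ B) i j = if fwdM ε δ B i.succ 0 * fwdM ε δ B 0 0 *
      fwdM ε δ B 0 j.succ * fwdM ε δ B i.succ j.succ = -1 then 1 else 0 from rfl]
  rw [h1, h2, h3, h4]
  rcases hB i j with h | h <;>
    cases he : ε i.succ <;> cases he' : ε 0 <;> cases hd : δ j <;>
      simp [sg, h]

end PM01
/-- **The density of singular `±1` matrices equals the density of singular `{0,1}` matrices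
one size smaller.** For every `n ≥ 2` (encoded as `n = m + 2`):
`2^{(n−1)²} · |{A ∈ {±1}^{n×n} : det A = 0}| = 2^{n²} · |{B ∈ {0,1}^{(n−1)×(n−1)} : det B = 0}|`,
determinants taken over `ℤ`. -/
theorem singular_pm_density_eq_singular_01_density (m : ℕ) :
    2 ^ ((m + 1) ^ 2) *
        Set.ncard {A : Matrix (Fin (m + 2)) (Fin (m + 2)) ℤ |
          (∀ i j, A i j = 1 ∨ A i j = -1) ∧ A.det = 0} =
      2 ^ ((m + 2) ^ 2) *
        Set.ncard {B : Matrix (Fin (m + 1)) (Fin (m + 1)) ℤ |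
          (∀ i j, B i j = 0 ∨ B i j = 1) ∧ B.det = 0} := by
  classical
  set SA := {A : Matrix (Fin (m + 2)) (Fin (m + 2)) ℤ |
      (∀ i j, A i j = 1 ∨ A i j = -1) ∧ A.det = 0} with hSA
  set SB := {B : Matrix (Fin (m + 1)) (Fin (m + 1)) ℤ |
      (∀ i j, B i j = 0 ∨ B i j = 1) ∧ B.det = 0} with hSB
  have e : ((Fin (m+2) → Bool) × (Fin (m+1) → Bool) × SB) ≃ SA :=
    { toFun := fun p =>
        ⟨PM01.fwdM p.1 p.2.1 p.2.2.1,
          fun i j => PM01.fwdM_pm p.1 p.2.1 p.2.2.1 p.2.2.2.1 i j,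
          (PM01.fwdM_det_eq_zero_iff p.1 p.2.1 p.2.2.1).mpr p.2.2.2.2⟩
      invFun := fun a =>
        (PM01.bwdE a.1, PM01.bwdD a.1,
          ⟨PM01.bwdB a.1, fun i j => PM01.bwdB_01 a.1 i j, by
            have h := PM01.fwd_bwd a.1 a.2.1
            have : (PM01.fwdM (PM01.bwdE a.1) (PM01.bwdD a.1) (PM01.bwdB a.1)).det = 0 := by
              rw [h]; exact a.2.2
            exact (PM01.fwdM_det_eq_zero_iff _ _ _).mp this⟩)
      left_inv := by
        rintro ⟨ε, δ, ⟨B, hB1, hB2⟩⟩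
        simp only [PM01.bwd_fwd_E, PM01.bwd_fwd_D, PM01.bwd_fwd_B ε δ B hB1]
      right_inv := fun a => Subtype.ext (PM01.fwd_bwd a.1 a.2.1) }
  have hcard : SA.ncard = 2 ^ (m + 2) * (2 ^ (m + 1) * SB.ncard) := by
    rw [← Nat.card_coe_set_eq, ← Nat.card_congr e, Nat.card_prod, Nat.card_prod,
      Nat.card_coe_set_eq]
    simp [Nat.card_eq_fintype_card]
  rw [hcard, ← mul_assoc, ← mul_assoc, ← pow_add, ← pow_add]
  congr 2
  ring
end
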